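/- arXiv:1009.1909 — 6 statements merged into one kernel-verified Lean document; each statement's English description precedes it below -/
import Mathlib

section
/- Let Ψ be a real-valued function on the set of k×k real symmetric positive definite matrices that is convex and decreasing (A ⪰ B ≻ 0 implies Ψ(A) ≤ Ψ(B)). Then the function Φ(X) := Ψ((K^T X^{-1} K)^{-1}) is convex on the set of m×m real symmetric positive definite matrices: for all m×m real symmetric positive definite matrices X, Y and all t ∈ [0,1], one has Φ(tX + (1−t)Y) ≤ t Φ(X) + (1−t) Φ(Y). -/
open Matrix

noncomputable section

namespace PhiConvexAux

variable {m k : ℕ}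

lemma herm_smul {n : ℕ} {M : Matrix (Fin n) (Fin n) ℝ} (h : M.IsHermitian) (c : ℝ) :
    (c • M).IsHermitian := by
  rw [Matrix.IsHermitian, conjTranspose_smul, h.eq, star_trivial]

lemma quad_conj (K : Matrix (Fin m) (Fin k) ℝ) (M : Matrix (Fin m) (Fin m) ℝ)
    (x : Fin k → ℝ) :
    x ⬝ᵥ ((Kᵀ * M * K) *ᵥ x) = (K *ᵥ x) ⬝ᵥ (M *ᵥ (K *ᵥ x)) := by
  rw [← mulVec_mulVec, ← mulVec_mulVec, dotProduct_mulVec, vecMul_transpose]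

lemma injK {K : Matrix (Fin m) (Fin k) ℝ} (hK : K.rank = k) :
    ∀ v, K *ᵥ v = 0 → v = 0 := by
  rw [← Matrix.ker_mulVecLin_eq_bot_iff]
  have h := LinearMap.finrank_range_add_finrank_ker K.mulVecLin
  rw [show Module.finrank ℝ (LinearMap.range K.mulVecLin) = K.rank from rfl, hK,
    Module.finrank_pi, Fintype.card_fin] at h
  exact Submodule.finrank_eq_zero.mp (by omega)

lemma posDef_conj {K : Matrix (Fin m) (Fin k) ℝ} (hK : K.rank = k)
    {M : Matrix (Fin m) (Fin m) ℝ} (hM : M.PosDef) : (Kᵀ * M * K).PosDef := by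
  refine Matrix.PosDef.of_dotProduct_mulVec_pos ?_ (fun x hx => ?_)
  · rw [Matrix.IsHermitian]
    calc (Kᵀ * M * K)ᴴ = Kᴴ * Mᴴ * Kᵀᴴ := by
          rw [conjTranspose_mul, conjTranspose_mul, Matrix.mul_assoc]
      _ = Kᵀ * M * K := by rw [hM.1.eq]; simp
  · rw [star_trivial, quad_conj]
    have hKx : K *ᵥ x ≠ 0 := fun h => hx (injK hK x h)
    simpa using hM.dotProduct_mulVec_pos hKx

lemma posDef_smul {n : ℕ} {M : Matrix (Fin n) (Fin n) ℝ} (hM : M.PosDef) {c : ℝ}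
    (hc : 0 < c) : (c • M).PosDef := by
  refine Matrix.PosDef.of_dotProduct_mulVec_pos (herm_smul hM.1 c) (fun x hx => ?_)
  rw [smul_mulVec, dotProduct_smul, smul_eq_mul]
  exact mul_pos hc (by simpa using hM.dotProduct_mulVec_pos hx)

lemma posSemidef_smul {n : ℕ} {M : Matrix (Fin n) (Fin n) ℝ} (hM : M.PosSemidef) {c : ℝ}
    (hc : 0 ≤ c) : (c • M).PosSemidef := by
  refine Matrix.PosSemidef.of_dotProduct_mulVec_nonneg (herm_smul hM.1 c) (fun x => ?_)
  rw [smul_mulVec, dotProduct_smul, smul_eq_mul]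
  exact mul_nonneg hc (by simpa using hM.dotProduct_mulVec_nonneg x)

lemma posDef_combo {n : ℕ} {A B : Matrix (Fin n) (Fin n) ℝ} (hA : A.PosDef) (hB : B.PosDef)
    {t : ℝ} (ht0 : 0 ≤ t) (ht1 : t ≤ 1) : (t • A + (1 - t) • B).PosDef := by
  rcases lt_or_eq_of_le ht1 with h | h
  · exact Matrix.PosDef.posSemidef_add (posSemidef_smul hA.posSemidef ht0)
      (posDef_smul hB (by linarith))
  · subst h
    simpa using hA

/-- The key "minimum of quadratic form" inequality. -/
lemma min_quad {K : Matrix (Fin m) (Fin k) ℝ} (hK : K.rank = k)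
    {X : Matrix (Fin m) (Fin m) ℝ} (hX : X.PosDef)
    (v : Fin k → ℝ) (w : Fin m → ℝ) (hw : Kᵀ *ᵥ w = v) :
    v ⬝ᵥ ((Kᵀ * X⁻¹ * K)⁻¹ *ᵥ v) ≤ w ⬝ᵥ (X *ᵥ w) := by
  set A := Kᵀ * X⁻¹ * K with hAdef
  have hA : A.PosDef := posDef_conj hK hX.inv
  have hXdet : IsUnit X.det := isUnit_iff_ne_zero.mpr hX.det_pos.ne'
  have hAdet : IsUnit A.det := isUnit_iff_ne_zero.mpr hA.det_pos.ne'
  set p : Fin m → ℝ := X⁻¹ *ᵥ (K *ᵥ (A⁻¹ *ᵥ v)) with hpdef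
  have hXp : X *ᵥ p = K *ᵥ (A⁻¹ *ᵥ v) := by
    rw [hpdef, mulVec_mulVec, Matrix.mul_nonsing_inv _ hXdet, one_mulVec]
  have hKp : Kᵀ *ᵥ p = v := by
    rw [hpdef, mulVec_mulVec, mulVec_mulVec, ← hAdef, mulVec_mulVec,
      Matrix.mul_nonsing_inv _ hAdet, one_mulVec]
  set u : Fin m → ℝ := w - p with hudef
  have hKu : Kᵀ *ᵥ u = 0 := by
    rw [hudef, mulVec_sub, hw, hKp, sub_self]
  have hXsym : Xᵀ = X := by simpa using hX.1.eq
  have cross : u ⬝ᵥ (X *ᵥ p) = 0 := by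
    rw [hXp, dotProduct_mulVec, ← mulVec_transpose, hKu, zero_dotProduct]
  have cross2 : p ⬝ᵥ (X *ᵥ u) = 0 := by
    rw [dotProduct_mulVec, ← mulVec_transpose, hXsym, dotProduct_comm]
    exact cross
  have hpXp : p ⬝ᵥ (X *ᵥ p) = v ⬝ᵥ (A⁻¹ *ᵥ v) := by
    rw [hXp, dotProduct_mulVec, ← mulVec_transpose, hKp]
  have huXu : 0 ≤ u ⬝ᵥ (X *ᵥ u) := by simpa using hX.posSemidef.dotProduct_mulVec_nonneg u
  have hwup : w = u + p := by rw [hudef, sub_add_cancel]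
  have expand : w ⬝ᵥ (X *ᵥ w)
      = u ⬝ᵥ (X *ᵥ u) + u ⬝ᵥ (X *ᵥ p) + p ⬝ᵥ (X *ᵥ u) + p ⬝ᵥ (X *ᵥ p) := by
    rw [hwup, mulVec_add, dotProduct_add, add_dotProduct, add_dotProduct]
    ring
  linarith [expand, hpXp, cross, cross2, huXu]

end PhiConvexAux

open PhiConvexAux in
/-- If `Ψ` is convex and decreasing on the set of `k × k` real symmetric positive definite
matrices, then `Φ(X) := Ψ ((Kᵀ X⁻¹ K)⁻¹)` is convex on the set of `m × m` real symmetric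
positive definite matrices. -/
theorem phi_convex (m k : ℕ) (hm : 1 ≤ m) (hk : 1 ≤ k) (hkm : k ≤ m)
    (K : Matrix (Fin m) (Fin k) ℝ) (hK : K.rank = k)
    (Ψ : Matrix (Fin k) (Fin k) ℝ → ℝ)
    (hconv : ∀ A B : Matrix (Fin k) (Fin k) ℝ, A.PosDef → B.PosDef →
      ∀ t : ℝ, 0 ≤ t → t ≤ 1 → Ψ (t • A + (1 - t) • B) ≤ t * Ψ A + (1 - t) * Ψ B)
    (hdec : ∀ A B : Matrix (Fin k) (Fin k) ℝ, A.IsHermitian → B.PosDef →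
      (A - B).PosSemidef → Ψ A ≤ Ψ B) :
    ∀ X Y : Matrix (Fin m) (Fin m) ℝ, X.PosDef → Y.PosDef → ∀ t : ℝ, 0 ≤ t → t ≤ 1 →
      Ψ ((Kᵀ * (t • X + (1 - t) • Y)⁻¹ * K)⁻¹) ≤
        t * Ψ ((Kᵀ * X⁻¹ * K)⁻¹) + (1 - t) * Ψ ((Kᵀ * Y⁻¹ * K)⁻¹) := by
  intro X Y hX hY t ht0 ht1
  set Z := t • X + (1 - t) • Y with hZdef
  have hZ : Z.PosDef := posDef_combo hX hY ht0 ht1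
  have hAX : (Kᵀ * X⁻¹ * K).PosDef := posDef_conj hK hX.inv
  have hAY : (Kᵀ * Y⁻¹ * K).PosDef := posDef_conj hK hY.inv
  have hAZ : (Kᵀ * Z⁻¹ * K).PosDef := posDef_conj hK hZ.inv
  set CX := (Kᵀ * X⁻¹ * K)⁻¹ with hCX
  set CY := (Kᵀ * Y⁻¹ * K)⁻¹ with hCY
  set CZ := (Kᵀ * Z⁻¹ * K)⁻¹ with hCZ
  have hCXpd : CX.PosDef := hAX.inv
  have hCYpd : CY.PosDef := hAY.inv
  have hCZpd : CZ.PosDef := hAZ.inv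
  have hcombopd : (t • CX + (1 - t) • CY).PosDef := posDef_combo hCXpd hCYpd ht0 ht1
  have key : ∀ v : Fin k → ℝ,
      t * (v ⬝ᵥ (CX *ᵥ v)) + (1 - t) * (v ⬝ᵥ (CY *ᵥ v)) ≤ v ⬝ᵥ (CZ *ᵥ v) := by
    intro v
    have hZdet : IsUnit Z.det := isUnit_iff_ne_zero.mpr hZ.det_pos.ne'
    have hAZdet : IsUnit (Kᵀ * Z⁻¹ * K).det := isUnit_iff_ne_zero.mpr hAZ.det_pos.ne'
    set p : Fin m → ℝ := Z⁻¹ *ᵥ (K *ᵥ (CZ *ᵥ v)) with hpdef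
    have hZp : Z *ᵥ p = K *ᵥ (CZ *ᵥ v) := by
      rw [hpdef, mulVec_mulVec, Matrix.mul_nonsing_inv _ hZdet, one_mulVec]
    have hKp : Kᵀ *ᵥ p = v := by
      rw [hpdef, hCZ, mulVec_mulVec, mulVec_mulVec, mulVec_mulVec,
        Matrix.mul_nonsing_inv _ hAZdet, one_mulVec]
    have hvCZv : v ⬝ᵥ (CZ *ᵥ v) = p ⬝ᵥ (Z *ᵥ p) := by
      rw [hZp]
      conv_rhs => rw [dotProduct_mulVec, ← mulVec_transpose, hKp]
    have hsplit : p ⬝ᵥ (Z *ᵥ p) = t * (p ⬝ᵥ (X *ᵥ p)) + (1 - t) * (p ⬝ᵥ (Y *ᵥ p)) := by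
      rw [hZdef, add_mulVec, smul_mulVec, smul_mulVec, dotProduct_add,
        dotProduct_smul, dotProduct_smul, smul_eq_mul, smul_eq_mul]
    have h1 : v ⬝ᵥ (CX *ᵥ v) ≤ p ⬝ᵥ (X *ᵥ p) := min_quad hK hX v p hKp
    have h2 : v ⬝ᵥ (CY *ᵥ v) ≤ p ⬝ᵥ (Y *ᵥ p) := min_quad hK hY v p hKp
    rw [hvCZv, hsplit]
    have g1 := mul_le_mul_of_nonneg_left h1 ht0
    have g2 := mul_le_mul_of_nonneg_left h2 (by linarith : (0:ℝ) ≤ 1 - t)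
    linarith
  have hsub : (CZ - (t • CX + (1 - t) • CY)).PosSemidef := by
    refine Matrix.PosSemidef.of_dotProduct_mulVec_nonneg (hCZpd.1.sub ((herm_smul hCXpd.1 t).add (herm_smul hCYpd.1 (1 - t)))) (fun x => ?_)
    rw [star_trivial, sub_mulVec, dotProduct_sub, add_mulVec, smul_mulVec,
      smul_mulVec, dotProduct_add, dotProduct_smul, dotProduct_smul,
      smul_eq_mul, smul_eq_mul]
    have := key x
    linarith
  calc Ψ CZ ≤ Ψ (t • CX + (1 - t) • CY) := hdec _ _ hCZpd.1 hcombopd hsub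
    _ ≤ t * Ψ CX + (1 - t) * Ψ CY := hconv _ _ hCXpd hCYpd t ht0 ht1

end
end

section
/- Let Ψ be a real-valued function on the set of k×k real symmetric positive definite matrices that is decreasing (A ⪰ B ≻ 0 implies Ψ(A) ≤ Ψ(B)). Then for every m×m real symmetric positive definite matrix X, Ψ((K^T X^{-1} K)^{-1}) = inf{Ψ(U) : U a k×k real symmetric positive definite matrix such that X − K U K^T is positive semidefinite}. -/
open Matrix

noncomputable section

/-- Inversion is antitone (in the Loewner order) on positive definite matrices. -/
lemma posSemidef_inv_sub_inv {k : ℕ} {A B : Matrix (Fin k) (Fin k) ℝ}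
    (hA : A.PosDef) (hB : B.PosDef) (h : (A - B).PosSemidef) :
    (B⁻¹ - A⁻¹).PosSemidef := by
  haveI := hA.isUnit.invertible
  haveI := hB.isUnit.invertible
  haveI := hB.inv.isUnit.invertible
  have hblock : (fromBlocks A (1 : Matrix (Fin k) (Fin k) ℝ)
      (1 : Matrix (Fin k) (Fin k) ℝ)ᴴ B⁻¹).PosSemidef := by
    rw [PosDef.fromBlocks₂₂ A (1 : Matrix (Fin k) (Fin k) ℝ) hB.inv]
    simpa using h
  have := (PosDef.fromBlocks₁₁ (1 : Matrix (Fin k) (Fin k) ℝ) B⁻¹ hA).mp hblock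
  simpa using this

/-- For a decreasing `Ψ` on the symmetric positive definite matrices and any symmetric
positive definite `X`, `Ψ ((Kᵀ X⁻¹ K)⁻¹)` equals the infimum of `Ψ U` over symmetric
positive definite `U` with `X - K U Kᵀ` positive semidefinite. -/
theorem phi_inf_representation (m k : ℕ) (hm : 1 ≤ m) (hk : 1 ≤ k) (hkm : k ≤ m)
    (K : Matrix (Fin m) (Fin k) ℝ) (hK : K.rank = k)
    (Ψ : Matrix (Fin k) (Fin k) ℝ → ℝ)
    (hdec : ∀ A B : Matrix (Fin k) (Fin k) ℝ, A.IsHermitian → B.PosDef →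
      (A - B).PosSemidef → Ψ A ≤ Ψ B)
    (X : Matrix (Fin m) (Fin m) ℝ) (hX : X.PosDef) :
    Ψ ((Kᵀ * X⁻¹ * K)⁻¹) =
      sInf {y | ∃ U : Matrix (Fin k) (Fin k) ℝ,
        U.PosDef ∧ (X - K * U * Kᵀ).PosSemidef ∧ y = Ψ U} := by
  -- `K` has full column rank, hence injective as a linear map
  have hinj : Function.Injective K.mulVecLin := by
    rw [← LinearMap.ker_eq_bot]
    have hr := LinearMap.finrank_range_add_finrank_ker K.mulVecLin
    rw [Matrix.rank] at hK
    rw [hK, Module.finrank_fin_fun] at hr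
    have : Module.finrank ℝ (LinearMap.ker K.mulVecLin) = 0 := by omega
    exact Submodule.finrank_eq_zero.mp this
  -- `S := Kᵀ X⁻¹ K` is positive definite
  set S := Kᵀ * X⁻¹ * K with hSdef
  have hS : S.PosDef := by
    rw [posDef_iff_dotProduct_mulVec]
    constructor
    · have := isHermitian_conjTranspose_mul_mul K hX.inv.isHermitian
      simpa [conjTranspose_eq_transpose_of_trivial] using this
    · intro x hx
      have hKx : K *ᵥ x ≠ 0 := fun h0 => hx (hinj (by simpa using h0))
      have h := hX.inv.dotProduct_mulVec_pos hKx
      have : star x ⬝ᵥ S *ᵥ x = star (K *ᵥ x) ⬝ᵥ X⁻¹ *ᵥ (K *ᵥ x) := by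
        simp only [hSdef, star_trivial, ← mulVec_mulVec, dotProduct_mulVec, vecMul_transpose]
      rw [this]
      exact h
  haveI := hX.isUnit.invertible
  haveI := hS.isUnit.invertible
  -- Schur-complement characterization of the constraint
  have hiff : ∀ U : Matrix (Fin k) (Fin k) ℝ, U.PosDef →
      ((X - K * U * Kᵀ).PosSemidef ↔ (U⁻¹ - S).PosSemidef) := by
    intro U hU
    haveI := hU.isUnit.invertible
    haveI := hU.inv.isUnit.invertible
    have h1 := PosDef.fromBlocks₁₁ K U⁻¹ hX
    have h2 := PosDef.fromBlocks₂₂ X K hU.inv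
    rw [conjTranspose_eq_transpose_of_trivial] at h1 h2
    rw [inv_inv_of_invertible] at h2
    exact h2.symm.trans h1
  -- `S⁻¹` itself is in the feasible set
  have hmem : Ψ S⁻¹ ∈ {y | ∃ U : Matrix (Fin k) (Fin k) ℝ,
      U.PosDef ∧ (X - K * U * Kᵀ).PosSemidef ∧ y = Ψ U} := by
    refine ⟨S⁻¹, hS.inv, ?_, rfl⟩
    rw [hiff S⁻¹ hS.inv, inv_inv_of_invertible, sub_self]
    exact PosSemidef.zero
  -- `Ψ S⁻¹` is a lower bound for the feasible set
  have hlb : ∀ y ∈ {y | ∃ U : Matrix (Fin k) (Fin k) ℝ,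
      U.PosDef ∧ (X - K * U * Kᵀ).PosSemidef ∧ y = Ψ U}, Ψ S⁻¹ ≤ y := by
    rintro y ⟨U, hU, hpsd, rfl⟩
    haveI := hU.isUnit.invertible
    have h1 : (U⁻¹ - S).PosSemidef := (hiff U hU).mp hpsd
    have h2 : (S⁻¹ - U).PosSemidef := by
      have := posSemidef_inv_sub_inv hU.inv hS h1
      rwa [inv_inv_of_invertible] at this
    exact hdec S⁻¹ U hS.inv.isHermitian hU h2
  exact le_antisymm (le_csInf ⟨_, hmem⟩ hlb) (csInf_le ⟨_, hlb⟩ hmem)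
end
end

section
/- Suppose Ψ is convex, decreasing, and bounded below on the set of k×k real symmetric positive definite matrices. Then inf{Φ̂(M(w)) : w ∈ Ω, Range(K) ⊆ Range(M(w))} = inf{Ψ((K^T M(w)^{-1} K)^{-1}) : w ∈ Ω, w_i > 0 for all i}; that is, the optimal value f* of the design problem equals the infimum of the objective over the designs with all weights strictly positive. -/
open Matrix Filter Topology

noncomputable section

attribute [local instance] Matrix.normedAddCommGroup Matrix.normedSpace

/-- Assumption 1: `Ψ` is convex, decreasing, twice continuously differentiable and bounded
below on the set of `k × k` real symmetric positive definite matrices, and `Ψ (X j) → ∞`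
whenever `(X j)` is a bounded sequence of positive definite matrices whose smallest
eigenvalues tend to `0`.  (Over `ℝ`, `Matrix.PosDef` includes symmetry.) -/
structure Assumption1 (k : ℕ) (Ψ : Matrix (Fin k) (Fin k) ℝ → ℝ) : Prop where
  convex : ∀ A B : Matrix (Fin k) (Fin k) ℝ, A.PosDef → B.PosDef →
    ∀ t : ℝ, 0 ≤ t → t ≤ 1 → Ψ (t • A + (1 - t) • B) ≤ t * Ψ A + (1 - t) * Ψ B
  decreasing : ∀ A B : Matrix (Fin k) (Fin k) ℝ, A.IsHermitian → B.PosDef →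
    (A - B).PosSemidef → Ψ A ≤ Ψ B
  smooth : ContDiffOn ℝ 2 Ψ {U : Matrix (Fin k) (Fin k) ℝ | U.PosDef}
  bddBelow : ∃ c : ℝ, ∀ U : Matrix (Fin k) (Fin k) ℝ, U.PosDef → c ≤ Ψ U
  blowup : ∀ (X : ℕ → Matrix (Fin k) (Fin k) ℝ) (hp : ∀ j, (X j).PosDef),
    (∃ C : ℝ, ∀ j i l, |X j i l| ≤ C) →
    Tendsto (fun j => ⨅ i, (hp j).isHermitian.eigenvalues i) atTop (𝓝 0) →
    Tendsto (fun j => Ψ (X j)) atTop atTop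

/-- The simplex of designs. -/
def Omega (n : ℕ) : Set (Fin n → ℝ) := {w | (∀ i, 0 ≤ w i) ∧ ∑ i, w i = 1}

/-- The moment matrix `M(w) = ∑ i, w i • A i`. -/
def Mmat {n m : ℕ} (A : Fin n → Matrix (Fin m) (Fin m) ℝ) (w : Fin n → ℝ) :
    Matrix (Fin m) (Fin m) ℝ := ∑ i, w i • A i

/-- `Range K ⊆ Range X`. -/
def RangeIncl {m k : ℕ} (K : Matrix (Fin m) (Fin k) ℝ) (X : Matrix (Fin m) (Fin m) ℝ) : Prop :=
  LinearMap.range (Matrix.toLin' K) ≤ LinearMap.range (Matrix.toLin' X)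

/-- `Φ̂(X) = inf {Ψ U | U symmetric positive definite, X - K U Kᵀ positive semidefinite}`. -/
def PhiHat {m k : ℕ} (K : Matrix (Fin m) (Fin k) ℝ) (Ψ : Matrix (Fin k) (Fin k) ℝ → ℝ)
    (X : Matrix (Fin m) (Fin m) ℝ) : ℝ :=
  sInf {y | ∃ U : Matrix (Fin k) (Fin k) ℝ, U.PosDef ∧ (X - K * U * Kᵀ).PosSemidef ∧ y = Ψ U}

/-- The optimal value `f*` of the design problem. -/
def fstar {n m k : ℕ} (A : Fin n → Matrix (Fin m) (Fin m) ℝ) (K : Matrix (Fin m) (Fin k) ℝ)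
    (Ψ : Matrix (Fin k) (Fin k) ℝ → ℝ) : ℝ :=
  sInf {y | ∃ w ∈ Omega n, RangeIncl K (Mmat A w) ∧ y = PhiHat K Ψ (Mmat A w)}

/-- `w` is an optimal solution of the design problem. -/
def IsOptimal {n m k : ℕ} (A : Fin n → Matrix (Fin m) (Fin m) ℝ) (K : Matrix (Fin m) (Fin k) ℝ)
    (Ψ : Matrix (Fin k) (Fin k) ℝ → ℝ) (w : Fin n → ℝ) : Prop :=
  w ∈ Omega n ∧ RangeIncl K (Mmat A w) ∧ PhiHat K Ψ (Mmat A w) = fstar A K Ψ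

/-- The open domain `D` of the barrier subproblem. -/
def Dset (n : ℕ) : Set (Fin (n - 1) → ℝ) := {wt | (∀ i, 0 < wt i) ∧ ∑ i, wt i < 1}

/-- `w(w̃) = (w̃₁, …, w̃_{n-1}, 1 - ∑ w̃ᵢ)`. -/
def extendW (n : ℕ) (wt : Fin (n - 1) → ℝ) : Fin n → ℝ :=
  fun i => if h : (i : ℕ) < n - 1 then wt ⟨i, h⟩ else 1 - ∑ j, wt j

/-- The log-barrier function `f_μ`. -/
def fmu {n m k : ℕ} (A : Fin n → Matrix (Fin m) (Fin m) ℝ) (K : Matrix (Fin m) (Fin k) ℝ)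
    (Ψ : Matrix (Fin k) (Fin k) ℝ → ℝ) (μ : ℝ) (wt : Fin (n - 1) → ℝ) : ℝ :=
  Ψ ((Kᵀ * (Mmat A (extendW n wt))⁻¹ * K)⁻¹)
    - μ * ∑ i, Real.log (wt i) - μ * Real.log (1 - ∑ i, wt i)


set_option linter.unusedSectionVars false

section DesignAux
namespace DesignAux

open Matrix

variable {p q : Type*} [Fintype p] [Fintype q] [DecidableEq p] [DecidableEq q]

lemma herm_t {A : Matrix p p ℝ} (h : A.IsHermitian) : Aᵀ = A := by
  rw [← Matrix.conjTranspose_eq_transpose_of_trivial]; exact h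

lemma herm_of_t {A : Matrix p p ℝ} (h : Aᵀ = A) : A.IsHermitian := by
  rwa [← Matrix.conjTranspose_eq_transpose_of_trivial] at h

lemma psd_conjT {P : Matrix p p ℝ} (hP : P.PosSemidef) (S : Matrix p q ℝ) :
    (Sᵀ * P * S).PosSemidef := by
  rw [← Matrix.conjTranspose_eq_transpose_of_trivial]
  exact hP.conjTranspose_mul_mul_same S

lemma posDef_conjT {B : Matrix p p ℝ} (hB : B.PosDef) (S : Matrix p q ℝ)
    (hS : Function.Injective S.mulVec) : (Sᵀ * B * S).PosDef := by
  rw [← Matrix.conjTranspose_eq_transpose_of_trivial]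
  refine Matrix.PosDef.of_dotProduct_mulVec_pos ?_ ?_
  · exact Matrix.isHermitian_conjTranspose_mul_mul S hB.1
  · intro x hx
    have hxS : S *ᵥ x ≠ 0 := fun h0 => hx (hS (by simpa using h0))
    simpa only [star_mulVec, dotProduct_mulVec, vecMul_vecMul, Matrix.mul_assoc]
      using hB.dotProduct_mulVec_pos hxS

lemma mulVec_inj_of_isUnit {S : Matrix p p ℝ} (hS : IsUnit S) : Function.Injective S.mulVec :=
  Matrix.mulVec_injective_iff_isUnit.2 hS

lemma psd_sqrt {X : Matrix p p ℝ} (hX : X.PosSemidef) :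
    ∃ S : Matrix p p ℝ, Sᵀ = S ∧ S * S = X ∧ S.PosSemidef := by
  open scoped MatrixOrder in
  exact ⟨CFC.sqrt X, herm_t (CFC.sqrt_nonneg X).posSemidef.1,
    CFC.sqrt_mul_sqrt_self X hX.nonneg, (CFC.sqrt_nonneg X).posSemidef⟩

lemma posDef_sqrt {X : Matrix p p ℝ} (hX : X.PosDef) :
    ∃ S : Matrix p p ℝ, Sᵀ = S ∧ IsUnit S ∧ S * S = X := by
  obtain ⟨S, h1, h2, _⟩ := psd_sqrt hX.posSemidef
  refine ⟨S, h1, ?_, h2⟩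
  have hdet : S.det * S.det = X.det := by rw [← Matrix.det_mul, h2]
  have hne : S.det ≠ 0 := by
    intro h0
    rw [h0, zero_mul] at hdet
    exact hX.det_pos.ne' hdet.symm
  exact (Matrix.isUnit_iff_isUnit_det S).2 hne.isUnit

lemma detU {X : Matrix p p ℝ} (hX : IsUnit X) : IsUnit X.det :=
  (Matrix.isUnit_iff_isUnit_det X).1 hX

lemma sandwich_one {S X : Matrix p p ℝ} (hSu : IsUnit S) (hXu : IsUnit X)
    (hSS : S * S = X⁻¹) : S * X * S = 1 := by
  have h1 : S * (S * X) = 1 := by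
    rw [← Matrix.mul_assoc, hSS, Matrix.nonsing_inv_mul X (detU hXu)]
  have h2 : S⁻¹ = S * X := Matrix.inv_eq_right_inv h1
  rw [Matrix.mul_assoc, ← Matrix.mul_assoc, ← h2, Matrix.nonsing_inv_mul S (detU hSu)]

/-- Cauchy–Schwarz for dot products. -/
lemma dot_sq_le (x w : p → ℝ) : (x ⬝ᵥ w)^2 ≤ (x ⬝ᵥ x) * (w ⬝ᵥ w) := by
  have := Finset.sum_mul_sq_le_sq_mul_sq Finset.univ x w
  simpa [dotProduct, sq] using this

lemma dot_self_nonneg (x : p → ℝ) : 0 ≤ x ⬝ᵥ x :=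
  Finset.sum_nonneg fun i _ => mul_self_nonneg (x i)

lemma quad_eq {B : Matrix p q ℝ} (x : p → ℝ) :
    x ⬝ᵥ ((B * Bᵀ) *ᵥ x) = (Bᵀ *ᵥ x) ⬝ᵥ (Bᵀ *ᵥ x) := by
  rw [← mulVec_mulVec, dotProduct_mulVec, ← mulVec_transpose]

lemma gram_flip {G : Matrix p q ℝ} (h : ((1 : Matrix q q ℝ) - Gᵀ * G).PosSemidef) :
    ((1 : Matrix p p ℝ) - G * Gᵀ).PosSemidef := by
  refine Matrix.PosSemidef.of_dotProduct_mulVec_nonneg ?_ ?_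
  · apply herm_of_t
    have hG : (G * Gᵀ)ᵀ = G * Gᵀ := by
      rw [Matrix.transpose_mul, Matrix.transpose_transpose]
    rw [Matrix.transpose_sub, Matrix.transpose_one, hG]
  · intro x
    have hq : ∀ y : q → ℝ, y ⬝ᵥ ((Gᵀ * G) *ᵥ y) ≤ y ⬝ᵥ y := by
      intro y
      have := h.dotProduct_mulVec_nonneg y
      rw [show star y = y from rfl, Matrix.sub_mulVec, Matrix.one_mulVec,
        dotProduct_sub] at this
      linarith
    rw [show star x = x from rfl, Matrix.sub_mulVec, Matrix.one_mulVec, dotProduct_sub]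
    set z := Gᵀ *ᵥ x with hz
    have e1 : x ⬝ᵥ ((G * Gᵀ) *ᵥ x) = z ⬝ᵥ z := quad_eq x
    have e2 : z ⬝ᵥ ((Gᵀ * G) *ᵥ z) = (G *ᵥ z) ⬝ᵥ (G *ᵥ z) := by
      have := quad_eq (B := Gᵀ) z
      rwa [Matrix.transpose_transpose] at this
    have h1 : (G *ᵥ z) ⬝ᵥ (G *ᵥ z) ≤ z ⬝ᵥ z := by
      have := hq z; rwa [e2] at this
    have h2 : (z ⬝ᵥ z)^2 ≤ (x ⬝ᵥ x) * ((G *ᵥ z) ⬝ᵥ (G *ᵥ z)) := by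
      have e3 : x ⬝ᵥ (G *ᵥ z) = z ⬝ᵥ z := by
        rw [dotProduct_mulVec, ← mulVec_transpose]
      calc (z ⬝ᵥ z)^2 = (x ⬝ᵥ (G *ᵥ z))^2 := by rw [e3]
        _ ≤ (x ⬝ᵥ x) * ((G *ᵥ z) ⬝ᵥ (G *ᵥ z)) := dot_sq_le _ _
    have h3 : 0 ≤ z ⬝ᵥ z := dot_self_nonneg z
    have h4 : 0 ≤ x ⬝ᵥ x := dot_self_nonneg x
    rw [e1]
    nlinarith [h1, h2, h3, h4]

lemma one_sub_inv {C : Matrix p p ℝ} (hC : C.PosDef) (h : (C - 1).PosSemidef) :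
    ((1 : Matrix p p ℝ) - C⁻¹).PosSemidef := by
  obtain ⟨T, hTt, hTu, hTT⟩ := posDef_sqrt hC.inv
  have hTCT : T * C * T = 1 := sandwich_one hTu hC.isUnit hTT
  have e : T * (C - 1) * T = 1 - C⁻¹ := by
    rw [Matrix.mul_sub, Matrix.mul_one, Matrix.sub_mul, hTCT, hTT]
  have h1 := psd_conjT h T
  rwa [hTt, e] at h1

lemma inv_antitone {A B : Matrix p p ℝ} (hA : A.PosDef) (hB : B.PosDef)
    (h : (B - A).PosSemidef) : (A⁻¹ - B⁻¹).PosSemidef := by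
  obtain ⟨S, hSt, hSu, hSS⟩ := posDef_sqrt hA.inv
  have hSdet := detU hSu
  have hSAS : S * A * S = 1 := sandwich_one hSu hA.isUnit hSS
  have hC : (S * B * S).PosDef := by
    have := posDef_conjT hB S (mulVec_inj_of_isUnit hSu)
    rwa [hSt] at this
  have hC1 : (S * B * S - 1).PosSemidef := by
    have h1 := psd_conjT h S
    rw [hSt] at h1
    have e : S * (B - A) * S = S * B * S - 1 := by
      rw [Matrix.mul_sub, Matrix.sub_mul, hSAS]
    rwa [e] at h1
  have h2 := one_sub_inv hC hC1
  have hinv : (S * B * S)⁻¹ = S⁻¹ * (B⁻¹ * S⁻¹) := by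
    rw [Matrix.mul_inv_rev, Matrix.mul_inv_rev]
  have e2 : S * ((1 : Matrix p p ℝ) - (S * B * S)⁻¹) * S = A⁻¹ - B⁻¹ := by
    rw [Matrix.mul_sub, Matrix.mul_one, Matrix.sub_mul, hSS, hinv]
    congr 1
    rw [← Matrix.mul_assoc, Matrix.mul_nonsing_inv S hSdet, Matrix.one_mul,
      Matrix.mul_assoc, Matrix.nonsing_inv_mul S hSdet, Matrix.mul_one]
  have h3 := psd_conjT h2 S
  rwa [hSt, e2] at h3

lemma le_Ustar {X : Matrix p p ℝ} {K : Matrix p q ℝ} {U : Matrix q q ℝ}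
    (hX : X.PosDef) (hW : (Kᵀ * X⁻¹ * K).PosDef) (hU : U.PosDef)
    (hfeas : (X - K * U * Kᵀ).PosSemidef) :
    ((Kᵀ * X⁻¹ * K)⁻¹ - U).PosSemidef := by
  obtain ⟨R, hRt, hRu, hRR⟩ := posDef_sqrt hX
  obtain ⟨V, hVt, hVu, hVV⟩ := posDef_sqrt hU
  have hRdet := detU hRu
  have hVdet := detU hVu
  have hRinvT : (R⁻¹)ᵀ = R⁻¹ := by rw [Matrix.transpose_nonsing_inv, hRt]
  have hVinvT : (V⁻¹)ᵀ = V⁻¹ := by rw [Matrix.transpose_nonsing_inv, hVt]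
  have hXinv : X⁻¹ = R⁻¹ * R⁻¹ := by rw [← hRR, Matrix.mul_inv_rev]
  have hRinvU : IsUnit R⁻¹ := Matrix.isUnit_nonsing_inv_iff.2 hRu
  set G := V * Kᵀ * R⁻¹ with hG
  clear_value G
  have hGt : Gᵀ = R⁻¹ * (K * V) := by
    rw [hG, Matrix.transpose_mul, Matrix.transpose_mul, Matrix.transpose_transpose,
      hRinvT, hVt]
  have hRXR : R⁻¹ * X * R⁻¹ = 1 := sandwich_one hRinvU hX.isUnit hXinv.symm
  have hstep1 : ((1 : Matrix p p ℝ) - Gᵀ * G).PosSemidef := by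
    have h1 := psd_conjT hfeas R⁻¹
    rw [hRinvT] at h1
    have e : R⁻¹ * (X - K * U * Kᵀ) * R⁻¹ = 1 - Gᵀ * G := by
      rw [Matrix.mul_sub, Matrix.sub_mul, hRXR]
      congr 1
      rw [hGt, hG, ← hVV]
      simp only [Matrix.mul_assoc]
    rwa [e] at h1
  have hstep2 := gram_flip hstep1
  have hGGt : G * Gᵀ = V * (Kᵀ * X⁻¹ * K) * V := by
    rw [hGt, hG, hXinv]
    simp only [Matrix.mul_assoc]
  have hstep3 : (U⁻¹ - Kᵀ * X⁻¹ * K).PosSemidef := by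
    have h1 := psd_conjT hstep2 V⁻¹
    rw [hVinvT] at h1
    have e : V⁻¹ * ((1 : Matrix q q ℝ) - G * Gᵀ) * V⁻¹ = U⁻¹ - Kᵀ * X⁻¹ * K := by
      rw [Matrix.mul_sub, Matrix.mul_one, Matrix.sub_mul, hGGt]
      congr 1
      · rw [← hVV, Matrix.mul_inv_rev]
      · simp only [← Matrix.mul_assoc]
        rw [Matrix.nonsing_inv_mul V hVdet, Matrix.one_mul, Matrix.mul_assoc,
          Matrix.mul_nonsing_inv V hVdet, Matrix.mul_one]
    rwa [e] at h1
  have h4 := inv_antitone hW hU.inv hstep3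
  rwa [Matrix.nonsing_inv_nonsing_inv U (detU hU.isUnit)] at h4

lemma Ustar_feasible {X : Matrix p p ℝ} {K : Matrix p q ℝ}
    (hX : X.PosDef) (hW : (Kᵀ * X⁻¹ * K).PosDef) :
    (X - K * (Kᵀ * X⁻¹ * K)⁻¹ * Kᵀ).PosSemidef := by
  obtain ⟨R, hRt, hRu, hRR⟩ := posDef_sqrt hX
  have hRdet := detU hRu
  have hRinvT : (R⁻¹)ᵀ = R⁻¹ := by rw [Matrix.transpose_nonsing_inv, hRt]
  have hXinv : X⁻¹ = R⁻¹ * R⁻¹ := by rw [← hRR, Matrix.mul_inv_rev]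
  have hWdet := detU hW.isUnit
  have hWinvT : ((Kᵀ * X⁻¹ * K)⁻¹)ᵀ = (Kᵀ * X⁻¹ * K)⁻¹ := by
    rw [Matrix.transpose_nonsing_inv, herm_t hW.1]
  set W := Kᵀ * X⁻¹ * K with hWdef
  clear_value W
  set C := R⁻¹ * K with hC
  clear_value C
  have hCt : Cᵀ = Kᵀ * R⁻¹ := by rw [hC, Matrix.transpose_mul, hRinvT]
  have hCC : Cᵀ * C = W := by
    rw [hCt, hC, hWdef, hXinv]
    simp only [Matrix.mul_assoc]
  set P := C * W⁻¹ * Cᵀ with hP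
  clear_value P
  have hPP : P * P = P := by
    rw [hP]
    have e : C * W⁻¹ * Cᵀ * (C * W⁻¹ * Cᵀ) = C * (W⁻¹ * (Cᵀ * C) * W⁻¹) * Cᵀ := by
      simp only [Matrix.mul_assoc]
    rw [e, hCC, Matrix.nonsing_inv_mul W hWdet, Matrix.one_mul]
  have hPt : Pᵀ = P := by
    rw [hP, Matrix.transpose_mul, Matrix.transpose_mul, Matrix.transpose_transpose,
      hWinvT, ← Matrix.mul_assoc]
  set Q := (1 : Matrix p p ℝ) - P with hQ
  clear_value Q
  have hQt : Qᵀ = Q := by rw [hQ, Matrix.transpose_sub, Matrix.transpose_one, hPt]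
  have hQQ : Q * Q = Q := by
    rw [hQ, Matrix.mul_sub, Matrix.mul_one, Matrix.sub_mul, Matrix.one_mul, hPP]
    abel
  have hQpsd : Q.PosSemidef := by
    have h1 := Matrix.posSemidef_conjTranspose_mul_self Q
    rwa [Matrix.conjTranspose_eq_transpose_of_trivial, hQt, hQQ] at h1
  have h2 := psd_conjT hQpsd R
  rw [hRt] at h2
  have e : R * Q * R = X - K * W⁻¹ * Kᵀ := by
    rw [hQ, Matrix.mul_sub, Matrix.mul_one, Matrix.sub_mul, hRR]
    congr 1
    rw [hP, hCt, hC]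
    simp only [← Matrix.mul_assoc]
    rw [Matrix.mul_nonsing_inv R hRdet, Matrix.one_mul, Matrix.mul_assoc,
      Matrix.nonsing_inv_mul R hRdet, Matrix.mul_one]
  rwa [e] at h2

lemma posSemidef_smul {t : ℝ} {P : Matrix p p ℝ} (hP : P.PosSemidef) (ht : 0 ≤ t) :
    (t • P).PosSemidef := by
  refine Matrix.PosSemidef.of_dotProduct_mulVec_nonneg ?_ ?_
  · apply herm_of_t; rw [Matrix.transpose_smul, herm_t hP.1]
  · intro x
    rw [Matrix.smul_mulVec, dotProduct_smul, smul_eq_mul]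
    exact mul_nonneg ht (hP.dotProduct_mulVec_nonneg x)

lemma posDef_smul {t : ℝ} {P : Matrix p p ℝ} (hP : P.PosDef) (ht : 0 < t) :
    (t • P).PosDef := by
  refine Matrix.PosDef.of_dotProduct_mulVec_pos ?_ ?_
  · apply herm_of_t; rw [Matrix.transpose_smul, herm_t hP.1]
  · intro x hx
    rw [Matrix.smul_mulVec, dotProduct_smul, smul_eq_mul]
    exact mul_pos ht (hP.dotProduct_mulVec_pos hx)

lemma sum_mulVec {n : ℕ} (M : Fin n → Matrix p p ℝ) (x : p → ℝ) :
    (∑ i, M i) *ᵥ x = ∑ i, M i *ᵥ x := by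
  ext j
  simp only [Matrix.mulVec, dotProduct, Finset.sum_apply, Matrix.sum_apply, Finset.sum_mul]
  exact Finset.sum_comm

lemma le_of_eps (s a b : ℝ) (h : ∀ ε : ℝ, 0 < ε → ε < 1 → s ≤ (1 - ε) * a + ε * b) :
    s ≤ a := by
  by_contra hcon
  push_neg at hcon
  have hδ0 : 0 < s - a := by linarith
  set ε := min (1/2 : ℝ) ((s - a) / (2 * (|b - a| + 1))) with hε
  have habs : (0:ℝ) ≤ |b - a| := abs_nonneg _
  have hε0 : 0 < ε := lt_min (by norm_num) (div_pos hδ0 (by linarith))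
  have hε1 : ε < 1 := lt_of_le_of_lt (min_le_left _ _) (by norm_num)
  have h2 := h ε hε0 hε1
  have h3 : s ≤ a + ε * (b - a) := by nlinarith [h2]
  have h4 : ε * (b - a) ≤ ε * |b - a| :=
    mul_le_mul_of_nonneg_left (le_abs_self _) hε0.le
  have h5 : ε ≤ (s - a) / (2 * (|b - a| + 1)) := min_le_right _ _
  have h6 : ε * |b - a| ≤ (s - a) / 2 := by
    calc ε * |b - a| ≤ ((s - a) / (2 * (|b - a| + 1))) * |b - a| :=
          mul_le_mul_of_nonneg_right h5 habs
      _ ≤ (s - a) / 2 := by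
          rw [div_mul_eq_mul_div, div_le_div_iff₀ (by linarith) (by norm_num)]
          nlinarith
  linarith

end DesignAux
end DesignAux


section DesignAux2
namespace DesignAux

open Matrix

lemma kinj {m k : ℕ} {K : Matrix (Fin m) (Fin k) ℝ} (hK : K.rank = k) :
    Function.Injective K.mulVec := by
  have h1 := LinearMap.finrank_range_add_finrank_ker K.mulVecLin
  rw [show Module.finrank ℝ (LinearMap.range K.mulVecLin) = K.rank from rfl, hK,
    Module.finrank_pi ℝ] at h1
  simp only [Fintype.card_fin] at h1
  have hker : LinearMap.ker K.mulVecLin = ⊥ :=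
    Submodule.finrank_eq_zero.1 (by omega)
  have hinj := LinearMap.ker_eq_bot.1 hker
  intro x y hxy
  exact hinj (by simpa [Matrix.mulVecLin_apply] using hxy)

lemma rangeIncl_of_isUnit {m k : ℕ} {M : Matrix (Fin m) (Fin m) ℝ} (hM : IsUnit M)
    (K : Matrix (Fin m) (Fin k) ℝ) : RangeIncl K M := by
  intro y _
  refine ⟨M⁻¹ *ᵥ y, ?_⟩
  rw [Matrix.toLin'_apply, Matrix.mulVec_mulVec, Matrix.mul_nonsing_inv M (detU hM),
    Matrix.one_mulVec]

lemma Mmat_herm {n m : ℕ} {A : Fin n → Matrix (Fin m) (Fin m) ℝ}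
    (hA : ∀ i, (A i).PosSemidef) (w : Fin n → ℝ) : (Mmat A w).IsHermitian := by
  apply herm_of_t
  rw [Mmat, Matrix.transpose_sum]
  exact Finset.sum_congr rfl fun i _ => by rw [Matrix.transpose_smul, herm_t (hA i).1]

lemma dot_sum {n : ℕ} {p : Type*} [Fintype p] (x : p → ℝ) (f : Fin n → p → ℝ) :
    x ⬝ᵥ (∑ i, f i) = ∑ i, x ⬝ᵥ f i := by
  simp only [dotProduct, Finset.sum_apply, Finset.mul_sum]
  exact Finset.sum_comm

lemma Mmat_dot {n m : ℕ} (A : Fin n → Matrix (Fin m) (Fin m) ℝ) (w : Fin n → ℝ)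
    (x : Fin m → ℝ) :
    x ⬝ᵥ (Mmat A w *ᵥ x) = ∑ i, w i * (x ⬝ᵥ (A i *ᵥ x)) := by
  rw [Mmat, sum_mulVec]
  simp only [Matrix.smul_mulVec]
  rw [dot_sum]
  simp only [dotProduct_smul, smul_eq_mul]

lemma Mmat_psd {n m : ℕ} {A : Fin n → Matrix (Fin m) (Fin m) ℝ}
    (hA : ∀ i, (A i).PosSemidef) {w : Fin n → ℝ} (hw : ∀ i, 0 ≤ w i) :
    (Mmat A w).PosSemidef := by
  refine Matrix.PosSemidef.of_dotProduct_mulVec_nonneg (Mmat_herm hA w) fun x => ?_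
  rw [show star x = x from rfl, Mmat_dot]
  refine Finset.sum_nonneg fun i _ => mul_nonneg (hw i) ?_
  have := (hA i).dotProduct_mulVec_nonneg x
  rwa [show star x = x from rfl] at this

lemma Mmat_posDef {n m : ℕ} {A : Fin n → Matrix (Fin m) (Fin m) ℝ}
    (hA : ∀ i, (A i).PosSemidef) {w₀ w : Fin n → ℝ}
    (h0 : (Mmat A w₀).PosDef) (hw : ∀ i, 0 < w i) : (Mmat A w).PosDef := by
  refine Matrix.PosDef.of_dotProduct_mulVec_pos (Mmat_herm hA w) fun x hx => ?_
  rw [show star x = x from rfl, Mmat_dot]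
  have h1 := h0.dotProduct_mulVec_pos hx
  rw [show star x = x from rfl, Mmat_dot] at h1
  have hqn : ∀ i, 0 ≤ x ⬝ᵥ (A i *ᵥ x) := by
    intro i
    have := (hA i).dotProduct_mulVec_nonneg x
    rwa [show star x = x from rfl] at this
  have hek : ∃ i, 0 < w₀ i * (x ⬝ᵥ (A i *ᵥ x)) := by
    by_contra hcon
    push_neg at hcon
    have : ∑ i, w₀ i * (x ⬝ᵥ (A i *ᵥ x)) ≤ 0 :=
      Finset.sum_nonpos fun i _ => hcon i
    linarith
  obtain ⟨i, hi⟩ := hek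
  have hq : 0 < x ⬝ᵥ (A i *ᵥ x) := by
    rcases lt_or_ge 0 (x ⬝ᵥ (A i *ᵥ x)) with h | h
    · exact h
    · have h0' : x ⬝ᵥ (A i *ᵥ x) = 0 := le_antisymm h (hqn i)
      rw [h0', mul_zero] at hi
      exact absurd hi (lt_irrefl 0)
  refine Finset.sum_pos' (fun j _ => mul_nonneg (hw j).le (hqn j)) ?_
  exact ⟨i, Finset.mem_univ i, mul_pos (hw i) hq⟩

lemma Mmat_comb {n m : ℕ} (A : Fin n → Matrix (Fin m) (Fin m) ℝ) (a b : ℝ)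
    (w v : Fin n → ℝ) :
    Mmat A (fun i => a * w i + b * v i) = a • Mmat A w + b • Mmat A v := by
  rw [Mmat, Mmat, Mmat, Finset.smul_sum, Finset.smul_sum, ← Finset.sum_add_distrib]
  exact Finset.sum_congr rfl fun i _ => by rw [add_smul, ← smul_smul, ← smul_smul]

lemma exists_feasible {m k : ℕ} {M : Matrix (Fin m) (Fin m) ℝ} {K : Matrix (Fin m) (Fin k) ℝ}
    (hM : M.PosSemidef) (hr : RangeIncl K M) :
    ∃ U : Matrix (Fin k) (Fin k) ℝ, U.PosDef ∧ (M - K * U * Kᵀ).PosSemidef := by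
  obtain ⟨S, hSt, hSS, hSpsd⟩ := psd_sqrt hM
  have hrange : ∀ j : Fin k, ∃ b : Fin m → ℝ, S *ᵥ b = K *ᵥ Pi.single j 1 := by
    intro j
    have h1 : (K *ᵥ Pi.single j 1) ∈ LinearMap.range (Matrix.toLin' M) :=
      hr ⟨Pi.single j 1, Matrix.toLin'_apply _ _⟩
    obtain ⟨x, hx⟩ := h1
    rw [Matrix.toLin'_apply] at hx
    exact ⟨S *ᵥ x, by rw [Matrix.mulVec_mulVec, hSS, hx]⟩
  choose b hb using hrange
  set B : Matrix (Fin m) (Fin k) ℝ := Matrix.of (fun i j => b j i) with hB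
  have hSB : S * B = K := by
    ext i j
    have h1 : (S *ᵥ b j) i = (K *ᵥ Pi.single j 1) i := by rw [hb j]
    simpa [Matrix.mul_apply, Matrix.mulVec, dotProduct, Pi.single_apply, mul_ite,
      mul_one, mul_zero, Finset.sum_ite_eq', hB] using h1
  have hBS : Bᵀ * S = Kᵀ := by
    rw [← hSB, Matrix.transpose_mul, hSt]
  set c : ℝ := ∑ j : Fin k, ∑ i : Fin m, (B i j)^2 with hc
  have hc0 : 0 ≤ c := Finset.sum_nonneg fun j _ => Finset.sum_nonneg fun i _ => sq_nonneg _
  set t : ℝ := (c + 1)⁻¹ with ht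
  have ht0 : 0 < t := by rw [ht]; positivity
  refine ⟨t • (1 : Matrix (Fin k) (Fin k) ℝ), posDef_smul Matrix.PosDef.one ht0, ?_⟩
  have hmid : ((1 : Matrix (Fin m) (Fin m) ℝ) - t • (B * Bᵀ)).PosSemidef := by
    refine Matrix.PosSemidef.of_dotProduct_mulVec_nonneg ?_ ?_
    · apply herm_of_t
      rw [Matrix.transpose_sub, Matrix.transpose_one, Matrix.transpose_smul,
        Matrix.transpose_mul, Matrix.transpose_transpose]
    · intro x
      rw [show star x = x from rfl, Matrix.sub_mulVec, Matrix.one_mulVec,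
        Matrix.smul_mulVec, dotProduct_sub, dotProduct_smul, smul_eq_mul, quad_eq]
      have key : (Bᵀ *ᵥ x) ⬝ᵥ (Bᵀ *ᵥ x) ≤ c * (x ⬝ᵥ x) := by
        rw [hc, Finset.sum_mul]
        apply Finset.sum_le_sum
        intro j _
        have hcs := Finset.sum_mul_sq_le_sq_mul_sq Finset.univ (fun i => B i j) x
        simpa [Matrix.mulVec, Matrix.transpose_apply, dotProduct, sq] using hcs
      have h1 : t * ((Bᵀ *ᵥ x) ⬝ᵥ (Bᵀ *ᵥ x)) ≤ t * (c * (x ⬝ᵥ x)) :=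
        mul_le_mul_of_nonneg_left key ht0.le
      have h2 : t * (c * (x ⬝ᵥ x)) ≤ x ⬝ᵥ x := by
        rw [ht]
        have hx0 := dot_self_nonneg x
        rw [inv_mul_le_iff₀ (by linarith)]
        nlinarith
      linarith
  have h3 := psd_conjT hmid S
  rw [hSt] at h3
  have e : S * ((1 : Matrix (Fin m) (Fin m) ℝ) - t • (B * Bᵀ)) * S
      = M - K * (t • (1 : Matrix (Fin k) (Fin k) ℝ)) * Kᵀ := by
    rw [Matrix.mul_sub, Matrix.mul_one, Matrix.sub_mul, hSS]
    congr 1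
    rw [Matrix.mul_smul, Matrix.smul_mul, Matrix.mul_smul, Matrix.mul_one, Matrix.smul_mul]
    congr 1
    rw [← hBS, ← hSB]
    simp only [Matrix.mul_assoc]
  rwa [e] at h3

lemma phiHat_eq {m k : ℕ} {X : Matrix (Fin m) (Fin m) ℝ} {K : Matrix (Fin m) (Fin k) ℝ}
    {Ψ : Matrix (Fin k) (Fin k) ℝ → ℝ}
    (hdec : ∀ A B : Matrix (Fin k) (Fin k) ℝ, A.IsHermitian → B.PosDef →
      (A - B).PosSemidef → Ψ A ≤ Ψ B)
    (hX : X.PosDef) (hKinj : Function.Injective K.mulVec) :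
    PhiHat K Ψ X = Ψ ((Kᵀ * X⁻¹ * K)⁻¹) := by
  have hW : (Kᵀ * X⁻¹ * K).PosDef := posDef_conjT hX.inv K hKinj
  have hWinv : ((Kᵀ * X⁻¹ * K)⁻¹).PosDef := hW.inv
  have hmem : Ψ ((Kᵀ * X⁻¹ * K)⁻¹) ∈
      {y | ∃ U : Matrix (Fin k) (Fin k) ℝ, U.PosDef ∧ (X - K * U * Kᵀ).PosSemidef ∧ y = Ψ U} :=
    ⟨_, hWinv, Ustar_feasible hX hW, rfl⟩
  have hlb : ∀ y ∈ {y | ∃ U : Matrix (Fin k) (Fin k) ℝ,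
      U.PosDef ∧ (X - K * U * Kᵀ).PosSemidef ∧ y = Ψ U}, Ψ ((Kᵀ * X⁻¹ * K)⁻¹) ≤ y := by
    rintro y ⟨U, hU, hfeas, rfl⟩
    exact hdec _ _ hWinv.1 hU (le_Ustar hX hW hU hfeas)
  rw [PhiHat]
  exact le_antisymm (csInf_le ⟨_, hlb⟩ hmem) (le_csInf ⟨_, hmem⟩ hlb)

end DesignAux
end DesignAux2

/-- The optimal value of the design problem equals the infimum of the objective over
designs with all weights strictly positive. -/
theorem fstar_eq_inf_positive (n m k : ℕ) (hn : 2 ≤ n) (hm : 1 ≤ m) (hk : 1 ≤ k) (hkm : k ≤ m)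
    (A : Fin n → Matrix (Fin m) (Fin m) ℝ) (hA : ∀ i, (A i).PosSemidef)
    (hex : ∃ w ∈ Omega n, (Mmat A w).PosDef)
    (K : Matrix (Fin m) (Fin k) ℝ) (hK : K.rank = k)
    (Ψ : Matrix (Fin k) (Fin k) ℝ → ℝ)
    (hconv : ∀ A B : Matrix (Fin k) (Fin k) ℝ, A.PosDef → B.PosDef →
      ∀ t : ℝ, 0 ≤ t → t ≤ 1 → Ψ (t • A + (1 - t) • B) ≤ t * Ψ A + (1 - t) * Ψ B)
    (hdec : ∀ A B : Matrix (Fin k) (Fin k) ℝ, A.IsHermitian → B.PosDef →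
      (A - B).PosSemidef → Ψ A ≤ Ψ B)
    (hbdd : ∃ c : ℝ, ∀ U : Matrix (Fin k) (Fin k) ℝ, U.PosDef → c ≤ Ψ U) :
    fstar A K Ψ =
      sInf {y | ∃ w ∈ Omega n, (∀ i, 0 < w i) ∧ y = Ψ ((Kᵀ * (Mmat A w)⁻¹ * K)⁻¹)} := by
  classical
  obtain ⟨c, hc⟩ := hbdd
  have hKinj : Function.Injective K.mulVec := DesignAux.kinj hK
  obtain ⟨w₀, hw₀Ω, hw₀pd⟩ := hex
  have hn0 : (0:ℝ) < (n:ℝ) := by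
    have h : 0 < n := by omega
    exact_mod_cast h
  set v : Fin n → ℝ := fun i => w₀ i / 2 + 1 / (2 * (n:ℝ)) with hv
  have hvpos : ∀ i, 0 < v i := by
    intro i
    have h1 := hw₀Ω.1 i
    have h2 : 0 < 1 / (2 * (n:ℝ)) := by positivity
    show 0 < w₀ i / 2 + 1 / (2 * (n:ℝ))
    linarith
  have hvΩ : v ∈ Omega n := by
    refine ⟨fun i => (hvpos i).le, ?_⟩
    show ∑ i, (w₀ i / 2 + 1 / (2 * (n:ℝ))) = 1
    rw [Finset.sum_add_distrib, ← Finset.sum_div, hw₀Ω.2, Finset.sum_const,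
      Finset.card_univ, Fintype.card_fin, nsmul_eq_mul]
    have hne : (n:ℝ) ≠ 0 := hn0.ne'
    field_simp
    ring
  have hMv : (Mmat A v).PosDef := DesignAux.Mmat_posDef hA hw₀pd hvpos
  have hposdef : ∀ w : Fin n → ℝ, (∀ i, 0 < w i) → (Mmat A w).PosDef :=
    fun w hw => DesignAux.Mmat_posDef hA hw₀pd hw
  have hWpd : ∀ w : Fin n → ℝ, (Mmat A w).PosDef → (Kᵀ * (Mmat A w)⁻¹ * K).PosDef :=
    fun w h => DesignAux.posDef_conjT h.inv K hKinj
  show sInf {y | ∃ w ∈ Omega n, RangeIncl K (Mmat A w) ∧ y = PhiHat K Ψ (Mmat A w)}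
      = sInf {y | ∃ w ∈ Omega n, (∀ i, 0 < w i) ∧ y = Ψ ((Kᵀ * (Mmat A w)⁻¹ * K)⁻¹)}
  set Sf := {y | ∃ w ∈ Omega n, RangeIncl K (Mmat A w) ∧ y = PhiHat K Ψ (Mmat A w)} with hSf
  set Sp := {y | ∃ w ∈ Omega n, (∀ i, 0 < w i) ∧ y = Ψ ((Kᵀ * (Mmat A w)⁻¹ * K)⁻¹)} with hSp
  have memSp : ∀ w : Fin n → ℝ, w ∈ Omega n → (∀ i, 0 < w i) →
      Ψ ((Kᵀ * (Mmat A w)⁻¹ * K)⁻¹) ∈ Sp := by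
    intro w h1 h2
    rw [hSp]
    exact ⟨w, h1, h2, rfl⟩
  have hsub : Sp ⊆ Sf := by
    rw [hSp, hSf]
    rintro y ⟨w, hwΩ, hwpos, rfl⟩
    refine ⟨w, hwΩ, DesignAux.rangeIncl_of_isUnit (hposdef w hwpos).isUnit K, ?_⟩
    rw [DesignAux.phiHat_eq hdec (hposdef w hwpos) hKinj]
  have hSpne : Sp.Nonempty := ⟨_, memSp v hvΩ hvpos⟩
  have hSplb : ∀ y ∈ Sp, c ≤ y := by
    rw [hSp]
    rintro y ⟨w, hwΩ, hwpos, rfl⟩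
    exact hc _ (hWpd w (hposdef w hwpos)).inv
  have hSflb : ∀ y ∈ Sf, c ≤ y := by
    rw [hSf]
    rintro y ⟨w, hwΩ, hr, rfl⟩
    have hMw : (Mmat A w).PosSemidef := DesignAux.Mmat_psd hA hwΩ.1
    obtain ⟨U, hU, hfeas⟩ := DesignAux.exists_feasible hMw hr
    rw [PhiHat]
    refine le_csInf ⟨_, U, hU, hfeas, rfl⟩ ?_
    rintro z ⟨U', hU', _, rfl⟩
    exact hc _ hU'
  have hSfne : Sf.Nonempty := ⟨_, hsub hSpne.choose_spec⟩
  refine le_antisymm (csInf_le_csInf ⟨c, hSflb⟩ hSpne hsub) ?_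
  refine le_csInf hSfne ?_
  rw [hSf]
  rintro y ⟨w, hwΩ, hr, rfl⟩
  have hMw : (Mmat A w).PosSemidef := DesignAux.Mmat_psd hA hwΩ.1
  obtain ⟨U₀, hU₀, hfeas₀⟩ := DesignAux.exists_feasible hMw hr
  rw [PhiHat]
  refine le_csInf ⟨_, U₀, hU₀, hfeas₀, rfl⟩ ?_
  rintro z ⟨U, hU, hfeas, rfl⟩
  have hWv : (Kᵀ * (Mmat A v)⁻¹ * K).PosDef := hWpd v hMv
  have hUvpd : ((Kᵀ * (Mmat A v)⁻¹ * K)⁻¹).PosDef := hWv.inv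
  have hUvfeas : (Mmat A v - K * (Kᵀ * (Mmat A v)⁻¹ * K)⁻¹ * Kᵀ).PosSemidef :=
    DesignAux.Ustar_feasible hMv hWv
  refine DesignAux.le_of_eps _ _ (Ψ ((Kᵀ * (Mmat A v)⁻¹ * K)⁻¹)) ?_
  intro ε hε0 hε1
  set wε : Fin n → ℝ := fun i => (1 - ε) * w i + ε * v i with hwε
  have hwεpos : ∀ i, 0 < wε i := by
    intro i
    have h1 := hwΩ.1 i
    have h2 := hvpos i
    show 0 < (1 - ε) * w i + ε * v i
    nlinarith
  have hwεΩ : wε ∈ Omega n := by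
    refine ⟨fun i => (hwεpos i).le, ?_⟩
    show ∑ i, ((1 - ε) * w i + ε * v i) = 1
    rw [Finset.sum_add_distrib, ← Finset.mul_sum, ← Finset.mul_sum, hwΩ.2, hvΩ.2]
    ring
  have hMε : Mmat A wε = (1 - ε) • Mmat A w + ε • Mmat A v :=
    DesignAux.Mmat_comb A (1 - ε) ε w v
  have hMεpd : (Mmat A wε).PosDef := hposdef wε hwεpos
  set Uε := (1 - ε) • U + ε • (Kᵀ * (Mmat A v)⁻¹ * K)⁻¹ with hUε
  have hUεpd : Uε.PosDef := by
    rw [hUε]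
    exact Matrix.PosDef.add (DesignAux.posDef_smul hU (by linarith))
      (DesignAux.posDef_smul hUvpd hε0)
  have hfeasε : (Mmat A wε - K * Uε * Kᵀ).PosSemidef := by
    have e : Mmat A wε - K * Uε * Kᵀ =
        (1 - ε) • (Mmat A w - K * U * Kᵀ)
          + ε • (Mmat A v - K * (Kᵀ * (Mmat A v)⁻¹ * K)⁻¹ * Kᵀ) := by
      rw [hMε, hUε, Matrix.mul_add, Matrix.add_mul, Matrix.mul_smul, Matrix.smul_mul,
        Matrix.mul_smul, Matrix.smul_mul, smul_sub, smul_sub]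
      abel
    rw [e]
    exact Matrix.PosSemidef.add (DesignAux.posSemidef_smul hfeas (by linarith))
      (DesignAux.posSemidef_smul hUvfeas hε0.le)
  have hWε : (Kᵀ * (Mmat A wε)⁻¹ * K).PosDef := hWpd wε hMεpd
  have step1 : sInf Sp ≤ Ψ ((Kᵀ * (Mmat A wε)⁻¹ * K)⁻¹) :=
    csInf_le ⟨c, hSplb⟩ (memSp wε hwεΩ hwεpos)
  have step2 : Ψ ((Kᵀ * (Mmat A wε)⁻¹ * K)⁻¹) ≤ Ψ Uε :=
    hdec _ _ hWε.inv.1 hUεpd (DesignAux.le_Ustar hMεpd hWε hUεpd hfeasε)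
  have step3 : Ψ Uε ≤ (1 - ε) * Ψ U + ε * Ψ ((Kᵀ * (Mmat A v)⁻¹ * K)⁻¹) := by
    have h3 := hconv U ((Kᵀ * (Mmat A v)⁻¹ * K)⁻¹) hU hUvpd (1 - ε)
      (by linarith) (by linarith)
    rw [show (1:ℝ) - (1 - ε) = ε by ring] at h3
    rw [hUε]
    exact h3
  linarith
end
end

section
/- Suppose Ψ satisfies Assumption 1. Then for every μ > 0 and every v ∈ ℝ^{n−1}, the function w̃ ↦ f_μ(w̃) − v^T w̃ attains its infimum over D at exactly one point; i.e., the perturbed barrier subproblem min_{w̃ ∈ D} f_μ(w̃) − v^T w̃ has a unique optimal solution. -/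
open Matrix Filter Topology

noncomputable section

attribute [local instance] Matrix.normedAddCommGroup Matrix.normedSpace

namespace BarrierAux
open Matrix

variable {d : ℕ}

lemma posSemidef_smul {M : Matrix (Fin d) (Fin d) ℝ} (hM : M.PosSemidef) {c : ℝ}
    (hc : 0 ≤ c) : (c • M).PosSemidef := by
  refine .of_dotProduct_mulVec_nonneg ?_ ?_
  · show (c • M)ᴴ = c • M
    rw [conjTranspose_smul, star_trivial, hM.1.eq]
  · intro x
    rw [smul_mulVec, dotProduct_smul, smul_eq_mul]
    exact mul_nonneg hc (hM.dotProduct_mulVec_nonneg x)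

lemma posDef_smul {M : Matrix (Fin d) (Fin d) ℝ} (hM : M.PosDef) {c : ℝ}
    (hc : 0 < c) : (c • M).PosDef := by
  refine .of_dotProduct_mulVec_pos ?_ ?_
  · show (c • M)ᴴ = c • M
    rw [conjTranspose_smul, star_trivial, hM.1.eq]
  · intro x hx
    rw [smul_mulVec, dotProduct_smul, smul_eq_mul]
    exact mul_pos hc (hM.dotProduct_mulVec_pos hx)

lemma posSemidef_sum {ι : Type*} (s : Finset ι) (f : ι → Matrix (Fin d) (Fin d) ℝ)
    (h : ∀ i ∈ s, (f i).PosSemidef) : (∑ i ∈ s, f i).PosSemidef := by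
  classical
  induction s using Finset.induction_on with
  | empty => simpa using Matrix.PosSemidef.zero
  | insert _ _ hx ih =>
    rw [Finset.sum_insert hx]
    exact (h _ (Finset.mem_insert_self _ _)).add
      (ih fun i hi => h i (Finset.mem_insert_of_mem hi))

variable {m k : ℕ} {K : Matrix (Fin m) (Fin k) ℝ}

lemma K_inj (hK : K.rank = k) : ∀ x : Fin k → ℝ, K *ᵥ x = 0 → x = 0 := by
  have h1 : LinearMap.ker K.mulVecLin = ⊥ := by
    have h3 := LinearMap.finrank_range_add_finrank_ker K.mulVecLin
    rw [Module.finrank_fin_fun] at h3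
    rw [Matrix.rank] at hK
    have h4 : Module.finrank ℝ (LinearMap.ker K.mulVecLin) = 0 := by omega
    exact Submodule.finrank_eq_zero.mp h4
  intro x hx
  have : x ∈ LinearMap.ker K.mulVecLin := hx
  rw [h1] at this
  simpa using this


lemma posDef_conj {S : Matrix (Fin m) (Fin m) ℝ} (hS : S.PosDef)
    (hKi : ∀ x : Fin k → ℝ, K *ᵥ x = 0 → x = 0) : (Kᵀ * S * K).PosDef := by
  refine .of_dotProduct_mulVec_pos ?_ ?_
  · have := isHermitian_conjTranspose_mul_mul K hS.isHermitian
    rwa [conjTranspose_eq_transpose_of_trivial] at this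
  · intro x hx
    have hKx : K *ᵥ x ≠ 0 := fun h => hx (hKi x h)
    have : star x ⬝ᵥ (Kᵀ * S * K) *ᵥ x = star (K *ᵥ x) ⬝ᵥ S *ᵥ (K *ᵥ x) := by
      rw [star_trivial, star_trivial, ← mulVec_mulVec, ← mulVec_mulVec,
        dotProduct_mulVec _ Kᵀ, vecMul_transpose, dotProduct_mulVec]
    rw [this]
    exact hS.dotProduct_mulVec_pos hKx

/-- `C(M) = (Kᵀ M⁻¹ K)⁻¹`. -/
def CK (K : Matrix (Fin m) (Fin k) ℝ) (M : Matrix (Fin m) (Fin m) ℝ) :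
    Matrix (Fin k) (Fin k) ℝ := (Kᵀ * M⁻¹ * K)⁻¹

lemma W_posDef {M : Matrix (Fin m) (Fin m) ℝ} (hM : M.PosDef)
    (hKi : ∀ x : Fin k → ℝ, K *ᵥ x = 0 → x = 0) : (Kᵀ * M⁻¹ * K).PosDef :=
  posDef_conj hM.inv hKi

lemma CK_posDef {M : Matrix (Fin m) (Fin m) ℝ} (hM : M.PosDef)
    (hKi : ∀ x : Fin k → ℝ, K *ᵥ x = 0 → x = 0) : (CK K M).PosDef :=
  (W_posDef hM hKi).inv

lemma CK_transpose {M : Matrix (Fin m) (Fin m) ℝ} (hM : M.PosDef)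
    (hKi : ∀ x : Fin k → ℝ, K *ᵥ x = 0 → x = 0) : (CK K M)ᵀ = CK K M := by
  have := (CK_posDef hM hKi).isHermitian
  rwa [Matrix.IsHermitian, conjTranspose_eq_transpose_of_trivial] at this

lemma Minv_transpose {M : Matrix (Fin m) (Fin m) ℝ} (hM : M.PosDef) : (M⁻¹)ᵀ = M⁻¹ := by
  rw [Matrix.transpose_nonsing_inv]
  congr 1
  have := hM.isHermitian
  rwa [Matrix.IsHermitian, conjTranspose_eq_transpose_of_trivial] at this

lemma M_transpose {M : Matrix (Fin m) (Fin m) ℝ} (hM : M.PosDef) : Mᵀ = M := by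
  have := hM.isHermitian
  rwa [Matrix.IsHermitian, conjTranspose_eq_transpose_of_trivial] at this

/-- The optimal `L₀ = C(M) Kᵀ M⁻¹` satisfies `L₀ M L₀ᵀ = C(M)`. -/
lemma optL {M : Matrix (Fin m) (Fin m) ℝ} (hM : M.PosDef)
    (hKi : ∀ x : Fin k → ℝ, K *ᵥ x = 0 → x = 0) :
    (CK K M * Kᵀ * M⁻¹) * M * (CK K M * Kᵀ * M⁻¹)ᵀ = CK K M := by
  have hMdet : IsUnit M.det := isUnit_iff_ne_zero.mpr hM.det_pos.ne'
  have hW : (Kᵀ * M⁻¹ * K).PosDef := W_posDef hM hKi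
  have hWdet : IsUnit (Kᵀ * M⁻¹ * K).det := isUnit_iff_ne_zero.mpr hW.det_pos.ne'
  rw [transpose_mul, transpose_mul, transpose_transpose, Minv_transpose hM, CK_transpose hM hKi]
  calc CK K M * Kᵀ * M⁻¹ * M * (M⁻¹ * (K * CK K M))
      = CK K M * Kᵀ * ((M⁻¹ * M) * M⁻¹) * (K * CK K M) := by
        simp only [Matrix.mul_assoc]
    _ = CK K M * (Kᵀ * M⁻¹ * K) * CK K M := by
        rw [Matrix.nonsing_inv_mul M hMdet, Matrix.one_mul]
        simp only [Matrix.mul_assoc]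
    _ = CK K M := by
        rw [CK, Matrix.nonsing_inv_mul _ hWdet, Matrix.one_mul]

/-- Key Loewner bound: if `L K = 1` then `L M Lᵀ ⪰ C(M)`. -/
lemma keyLoewner {M : Matrix (Fin m) (Fin m) ℝ} (hM : M.PosDef)
    (hKi : ∀ x : Fin k → ℝ, K *ᵥ x = 0 → x = 0)
    (L : Matrix (Fin k) (Fin m) ℝ) (hL : L * K = 1) :
    (L * M * Lᵀ - CK K M).PosSemidef := by
  have hMdet : IsUnit M.det := isUnit_iff_ne_zero.mpr hM.det_pos.ne'
  set L0 : Matrix (Fin k) (Fin m) ℝ := CK K M * Kᵀ * M⁻¹ with hL0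
  have hL0T : L0ᵀ = M⁻¹ * (K * CK K M) := by
    rw [hL0, transpose_mul, transpose_mul, transpose_transpose, Minv_transpose hM,
      CK_transpose hM hKi]
  have c1 : L * M * L0ᵀ = CK K M := by
    rw [hL0T]
    calc L * M * (M⁻¹ * (K * CK K M)) = L * (M * M⁻¹) * (K * CK K M) := by
          simp only [Matrix.mul_assoc]
      _ = (L * K) * CK K M := by
          rw [Matrix.mul_nonsing_inv M hMdet, Matrix.mul_one, Matrix.mul_assoc]
      _ = CK K M := by rw [hL, Matrix.one_mul]
  have c2 : L0 * M * Lᵀ = CK K M := by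
    rw [hL0]
    calc CK K M * Kᵀ * M⁻¹ * M * Lᵀ = CK K M * (Kᵀ * ((M⁻¹ * M) * Lᵀ)) := by
          simp only [Matrix.mul_assoc]
      _ = CK K M * (L * K)ᵀ := by
          rw [Matrix.nonsing_inv_mul M hMdet, Matrix.one_mul, transpose_mul]
      _ = CK K M := by rw [hL, transpose_one, Matrix.mul_one]
  have c3 : L0 * M * L0ᵀ = CK K M := optL hM hKi
  have expand : (L - L0) * M * (L - L0)ᵀ = L * M * Lᵀ - CK K M := by
    simp only [transpose_sub, Matrix.sub_mul, Matrix.mul_sub]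
    rw [c1, c2, c3]
    abel
  rw [← expand]
  have := hM.posSemidef.mul_mul_conjTranspose_same (L - L0)
  rwa [conjTranspose_eq_transpose_of_trivial] at this


/-- Midpoint matrix concavity of `C_K`. -/
lemma CK_midpoint {M₁ M₂ : Matrix (Fin m) (Fin m) ℝ} (hM₁ : M₁.PosDef) (hM₂ : M₂.PosDef)
    (hKi : ∀ x : Fin k → ℝ, K *ᵥ x = 0 → x = 0) :
    (CK K ((1/2 : ℝ) • M₁ + (1/2 : ℝ) • M₂)
      - ((1/2 : ℝ) • CK K M₁ + (1/2 : ℝ) • CK K M₂)).PosSemidef := by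
  set Mm : Matrix (Fin m) (Fin m) ℝ := (1/2 : ℝ) • M₁ + (1/2 : ℝ) • M₂ with hMmdef
  have hMm : Mm.PosDef := (posDef_smul hM₁ (by norm_num)).add (posDef_smul hM₂ (by norm_num))
  have hWdet : IsUnit (Kᵀ * Mm⁻¹ * K).det :=
    isUnit_iff_ne_zero.mpr (W_posDef hMm hKi).det_pos.ne'
  set L : Matrix (Fin k) (Fin m) ℝ := CK K Mm * Kᵀ * Mm⁻¹ with hLdef
  have hLK : L * K = 1 := by
    rw [hLdef]
    calc CK K Mm * Kᵀ * Mm⁻¹ * K = CK K Mm * (Kᵀ * Mm⁻¹ * K) := by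
          simp only [Matrix.mul_assoc]
      _ = 1 := by rw [CK, Matrix.nonsing_inv_mul _ hWdet]
  have hmid : L * Mm * Lᵀ = CK K Mm := optL hMm hKi
  have hsplit : L * Mm * Lᵀ = (1/2 : ℝ) • (L * M₁ * Lᵀ) + (1/2 : ℝ) • (L * M₂ * Lᵀ) := by
    rw [hMmdef]
    simp only [Matrix.mul_add, Matrix.add_mul, Matrix.mul_smul, Matrix.smul_mul]
  have heq : CK K Mm - ((1/2 : ℝ) • CK K M₁ + (1/2 : ℝ) • CK K M₂)
      = (1/2 : ℝ) • (L * M₁ * Lᵀ - CK K M₁) + (1/2 : ℝ) • (L * M₂ * Lᵀ - CK K M₂) := by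
    rw [← hmid, hsplit, smul_sub, smul_sub]
    abel
  rw [heq]
  exact (posSemidef_smul (keyLoewner hM₁ hKi L hLK) (by norm_num)).add
    (posSemidef_smul (keyLoewner hM₂ hKi L hLK) (by norm_num))


section Domain

variable {n m : ℕ} {A : Fin n → Matrix (Fin m) (Fin m) ℝ}

lemma extendW_pos {wt : Fin (n-1) → ℝ} (hwt : wt ∈ Dset n) : ∀ i, 0 < extendW n wt i := by
  intro i
  unfold extendW
  split
  · exact hwt.1 _
  · have := hwt.2
    linarith

lemma Mmat_decomp (A : Fin n → Matrix (Fin m) (Fin m) ℝ) (w w' : Fin n → ℝ) (ε : ℝ) :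
    Mmat A w' = ε • Mmat A w + ∑ i, (w' i - ε * w i) • A i := by
  rw [Mmat, Mmat, Finset.smul_sum, ← Finset.sum_add_distrib]
  refine Finset.sum_congr rfl fun i _ => ?_
  rw [smul_smul, ← add_smul]
  congr 1
  ring

lemma Mmat_posDef (hA : ∀ i, (A i).PosSemidef)
    (hex : ∃ w ∈ Omega n, (Mmat A w).PosDef) (hn : 2 ≤ n)
    {wt : Fin (n-1) → ℝ} (hwt : wt ∈ Dset n) : (Mmat A (extendW n wt)).PosDef := by
  obtain ⟨w, hw, hwpd⟩ := hex
  haveI : Nonempty (Fin n) := ⟨⟨0, by omega⟩⟩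
  set w' : Fin n → ℝ := extendW n wt with hw'
  set ε : ℝ := Finset.univ.inf' Finset.univ_nonempty w' with hε
  have hεle : ∀ i, ε ≤ w' i := fun i => Finset.inf'_le _ (Finset.mem_univ i)
  have hεpos : 0 < ε := by
    rw [hε, Finset.lt_inf'_iff]
    exact fun i _ => extendW_pos hwt i
  have hwle1 : ∀ i, w i ≤ 1 := by
    intro i
    rw [← hw.2]
    exact Finset.single_le_sum (fun j _ => hw.1 j) (Finset.mem_univ i)
  rw [Mmat_decomp A w w' ε]
  refine (posDef_smul hwpd hεpos).add_posSemidef (posSemidef_sum _ _ fun i _ => ?_)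
  refine posSemidef_smul (hA i) ?_
  have : ε * w i ≤ ε := mul_le_of_le_one_right hεpos.le (hwle1 i)
  linarith [hεle i]

lemma extendW_midpoint (wt₁ wt₂ : Fin (n-1) → ℝ) :
    extendW n (fun i => (wt₁ i + wt₂ i)/2)
      = fun i => (extendW n wt₁ i + extendW n wt₂ i)/2 := by
  funext i
  unfold extendW
  split
  · rfl
  · have : (∑ j : Fin (n-1), (fun i => (wt₁ i + wt₂ i) / 2) j)
        = ((∑ j, wt₁ j) + ∑ j, wt₂ j)/2 := by
      rw [← Finset.sum_div, Finset.sum_add_distrib]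
    rw [this]
    ring

lemma Mmat_midpoint (A : Fin n → Matrix (Fin m) (Fin m) ℝ) (u v : Fin n → ℝ) :
    Mmat A (fun i => (u i + v i)/2) = (1/2 : ℝ) • Mmat A u + (1/2 : ℝ) • Mmat A v := by
  rw [Mmat, Mmat, Mmat, Finset.smul_sum, Finset.smul_sum, ← Finset.sum_add_distrib]
  refine Finset.sum_congr rfl fun i _ => ?_
  rw [smul_smul, smul_smul, ← add_smul]
  congr 1
  ring

lemma Dset_midpoint {wt₁ wt₂ : Fin (n-1) → ℝ} (h₁ : wt₁ ∈ Dset n) (h₂ : wt₂ ∈ Dset n) :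
    (fun i => (wt₁ i + wt₂ i)/2) ∈ Dset n := by
  constructor
  · intro i
    have := h₁.1 i; have := h₂.1 i
    positivity
  · rw [show (∑ i, (wt₁ i + wt₂ i)/2) = ((∑ i, wt₁ i) + ∑ i, wt₂ i)/2 by
      rw [← Finset.sum_div, Finset.sum_add_distrib]]
    have := h₁.2; have := h₂.2
    linarith


lemma continuous_MmatW (A : Fin n → Matrix (Fin m) (Fin m) ℝ) :
    Continuous (fun wt : Fin (n-1) → ℝ => Mmat A (extendW n wt)) := by
  have h1 : Continuous (fun w : Fin n → ℝ => Mmat A w) := by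
    unfold Mmat
    exact continuous_finset_sum _ fun i _ => ((continuous_apply i).smul continuous_const)
  have h2 : Continuous (extendW n) := by
    refine continuous_pi fun i => ?_
    by_cases h : (i : ℕ) < n - 1
    · simpa [extendW, h] using continuous_apply (⟨(i : ℕ), h⟩ : Fin (n-1))
    · simp only [extendW, dif_neg h]
      exact (continuous_const.sub (continuous_finset_sum _ fun j _ => continuous_apply j))
  exact h1.comp h2

lemma continuousAt_inner {k : ℕ} (K : Matrix (Fin m) (Fin k) ℝ)
    (hA : ∀ i, (A i).PosSemidef) (hex : ∃ w ∈ Omega n, (Mmat A w).PosDef) (hn : 2 ≤ n)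
    (hKi : ∀ x : Fin k → ℝ, K *ᵥ x = 0 → x = 0)
    {wt : Fin (n-1) → ℝ} (hwt : wt ∈ Dset n) :
    ContinuousAt (fun wt => (Kᵀ * (Mmat A (extendW n wt))⁻¹ * K)⁻¹) wt := by
  have hpd := Mmat_posDef hA hex hn hwt
  have h1 : ContinuousAt Inv.inv (Mmat A (extendW n wt)) := by
    refine continuousAt_matrix_inv _ ?_
    rw [Ring.inverse_eq_inv']
    exact continuousAt_inv₀ hpd.det_pos.ne'
  have h2 : ContinuousAt (fun wt => (Mmat A (extendW n wt))⁻¹) wt :=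
    ContinuousAt.comp (f := fun wt => Mmat A (extendW n wt)) h1
      (continuous_MmatW A).continuousAt
  have h3 : Continuous (fun X : Matrix (Fin m) (Fin m) ℝ => Kᵀ * X * K) :=
    (continuous_const.matrix_mul continuous_id).matrix_mul continuous_const
  have h4 : ContinuousAt (fun wt => Kᵀ * (Mmat A (extendW n wt))⁻¹ * K) wt :=
    ContinuousAt.comp (f := fun wt => (Mmat A (extendW n wt))⁻¹) h3.continuousAt h2
  have h5 : ContinuousAt Inv.inv (Kᵀ * (Mmat A (extendW n wt))⁻¹ * K) := by
    refine continuousAt_matrix_inv _ ?_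
    rw [Ring.inverse_eq_inv']
    exact continuousAt_inv₀ (W_posDef hpd hKi).det_pos.ne'
  exact ContinuousAt.comp (f := fun wt => Kᵀ * (Mmat A (extendW n wt))⁻¹ * K) h5 h4

end Domain

lemma log_midpoint_le {a b : ℝ} (ha : 0 < a) (hb : 0 < b) :
    (Real.log a + Real.log b)/2 ≤ Real.log ((a + b)/2) := by
  have h := strictConcaveOn_log_Ioi.concaveOn.2 (Set.mem_Ioi.mpr ha) (Set.mem_Ioi.mpr hb)
    (by norm_num : (0:ℝ) ≤ 1/2) (by norm_num : (0:ℝ) ≤ 1/2) (by norm_num)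
  rw [smul_eq_mul, smul_eq_mul, smul_eq_mul, smul_eq_mul] at h
  have e : (1/2 : ℝ) * a + (1/2 : ℝ) * b = (a + b)/2 := by ring
  rw [e] at h
  linarith

lemma log_midpoint_lt {a b : ℝ} (ha : 0 < a) (hb : 0 < b) (hne : a ≠ b) :
    (Real.log a + Real.log b)/2 < Real.log ((a + b)/2) := by
  have h := strictConcaveOn_log_Ioi.2 (Set.mem_Ioi.mpr ha) (Set.mem_Ioi.mpr hb) hne
    (by norm_num : (0:ℝ) < 1/2) (by norm_num : (0:ℝ) < 1/2) (by norm_num)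
  rw [smul_eq_mul, smul_eq_mul, smul_eq_mul, smul_eq_mul] at h
  have e : (1/2 : ℝ) * a + (1/2 : ℝ) * b = (a + b)/2 := by ring
  rw [e] at h
  linarith

end BarrierAux

/-- For every `μ > 0` and `v`, the perturbed barrier subproblem
`min_{w̃ ∈ D} f_μ(w̃) - vᵀ w̃` has exactly one optimal solution. -/
theorem barrier_subproblem_unique_min (n m k : ℕ) (hn : 2 ≤ n) (hm : 1 ≤ m) (hk : 1 ≤ k) (hkm : k ≤ m)
    (A : Fin n → Matrix (Fin m) (Fin m) ℝ) (hA : ∀ i, (A i).PosSemidef)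
    (hex : ∃ w ∈ Omega n, (Mmat A w).PosDef)
    (K : Matrix (Fin m) (Fin k) ℝ) (hK : K.rank = k)
    (Ψ : Matrix (Fin k) (Fin k) ℝ → ℝ)
    (hΨ : Assumption1 k Ψ) :
    ∀ μ : ℝ, 0 < μ → ∀ v : Fin (n - 1) → ℝ,
      ∃! wt : Fin (n - 1) → ℝ, wt ∈ Dset n ∧ ∀ wt' ∈ Dset n,
        fmu A K Ψ μ wt - ∑ i, v i * wt i ≤ fmu A K Ψ μ wt' - ∑ i, v i * wt' i := by
  intro μ hμ v
  classical
  have hKi : ∀ x : Fin k → ℝ, K *ᵥ x = 0 → x = 0 := BarrierAux.K_inj hK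
  obtain ⟨c, hc⟩ := hΨ.bddBelow
  set φ : (Fin (n - 1) → ℝ) → ℝ := fun wt => fmu A K Ψ μ wt - ∑ i, v i * wt i with hφ
  suffices hgoal : ∃! wt : Fin (n - 1) → ℝ, wt ∈ Dset n ∧ ∀ wt' ∈ Dset n, φ wt ≤ φ wt' by
    exact hgoal
  have hφdef : ∀ wt, φ wt = Ψ ((Kᵀ * (Mmat A (extendW n wt))⁻¹ * K)⁻¹)
      - μ * ∑ i, Real.log (wt i) - μ * Real.log (1 - ∑ i, wt i) - ∑ i, v i * wt i := by
    intro wt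
    rw [hφ]
    simp only [fmu]
  have hwtlt1 : ∀ wt ∈ Dset n, ∀ i, wt i < 1 := by
    intro wt hwt i
    have h1 : wt i ≤ ∑ j, wt j :=
      Finset.single_le_sum (fun j _ => (hwt.1 j).le) (Finset.mem_univ i)
    linarith [hwt.2]
  have hCpd : ∀ wt ∈ Dset n, ((Kᵀ * (Mmat A (extendW n wt))⁻¹ * K)⁻¹).PosDef :=
    fun wt hwt => BarrierAux.CK_posDef (BarrierAux.Mmat_posDef hA hex hn hwt) hKi
  set V : ℝ := ∑ i, |v i| with hV
  have hlin_le : ∀ wt ∈ Dset n, ∑ i, v i * wt i ≤ V := by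
    intro wt hwt
    rw [hV]
    refine Finset.sum_le_sum fun i _ => ?_
    have h1 : v i * wt i ≤ |v i| * wt i :=
      mul_le_mul_of_nonneg_right (le_abs_self _) (hwt.1 i).le
    have h2 : |v i| * wt i ≤ |v i| * 1 :=
      mul_le_mul_of_nonneg_left (hwtlt1 wt hwt i).le (abs_nonneg _)
    linarith
  have hsum_nonneg : ∀ wt ∈ Dset n, (0:ℝ) ≤ ∑ i, wt i :=
    fun wt hwt => Finset.sum_nonneg fun i _ => (hwt.1 i).le
  have hlow1 : ∀ wt ∈ Dset n, ∀ i₀, c - V - μ * Real.log (wt i₀) ≤ φ wt := by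
    intro wt hwt i₀
    rw [hφdef wt]
    have hΨlb : c ≤ Ψ ((Kᵀ * (Mmat A (extendW n wt))⁻¹ * K)⁻¹) := hc _ (hCpd wt hwt)
    have hsumlog : ∑ i, Real.log (wt i) ≤ Real.log (wt i₀) := by
      have h2 := Finset.add_sum_erase Finset.univ (fun j => Real.log (wt j)) (Finset.mem_univ i₀)
      have h3 : ∑ j ∈ Finset.univ.erase i₀, Real.log (wt j) ≤ 0 :=
        Finset.sum_nonpos fun j _ => Real.log_nonpos (hwt.1 j).le (hwtlt1 wt hwt j).le
      linarith [h2, h3]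
    have hslack : Real.log (1 - ∑ i, wt i) ≤ 0 :=
      Real.log_nonpos (by linarith [hwt.2]) (by linarith [hsum_nonneg wt hwt])
    have hlin := hlin_le wt hwt
    have hmul : μ * ∑ i, Real.log (wt i) ≤ μ * Real.log (wt i₀) :=
      mul_le_mul_of_nonneg_left hsumlog hμ.le
    have hms : μ * Real.log (1 - ∑ i, wt i) ≤ 0 :=
      mul_nonpos_of_nonneg_of_nonpos hμ.le hslack
    linarith
  have hlow2 : ∀ wt ∈ Dset n, c - V - μ * Real.log (1 - ∑ i, wt i) ≤ φ wt := by
    intro wt hwt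
    rw [hφdef wt]
    have hΨlb : c ≤ Ψ ((Kᵀ * (Mmat A (extendW n wt))⁻¹ * K)⁻¹) := hc _ (hCpd wt hwt)
    have hsumlog : ∑ i, Real.log (wt i) ≤ 0 :=
      Finset.sum_nonpos fun j _ => Real.log_nonpos (hwt.1 j).le (hwtlt1 wt hwt j).le
    have hlin := hlin_le wt hwt
    have hms : μ * ∑ i, Real.log (wt i) ≤ 0 :=
      mul_nonpos_of_nonneg_of_nonpos hμ.le hsumlog
    linarith
  clear_value φ
  have hφcont : ContinuousOn φ (Dset n) := by
    have hinner : ContinuousOn (fun wt => (Kᵀ * (Mmat A (extendW n wt))⁻¹ * K)⁻¹) (Dset n) :=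
      fun wt hwt => (BarrierAux.continuousAt_inner K hA hex hn hKi hwt).continuousWithinAt
    have hF : ContinuousOn (fun wt => Ψ ((Kᵀ * (Mmat A (extendW n wt))⁻¹ * K)⁻¹)) (Dset n) :=
      ContinuousOn.comp (hΨ.smooth.continuousOn) hinner (fun wt hwt => hCpd wt hwt)
    have hb1 : ContinuousOn (fun wt : Fin (n-1) → ℝ => ∑ i, Real.log (wt i)) (Dset n) := by
      intro wt hwt
      refine ContinuousAt.continuousWithinAt ?_
      exact tendsto_finset_sum _ fun i _ =>
        ContinuousAt.comp (f := fun p : Fin (n-1) → ℝ => p i)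
          (Real.continuousAt_log (hwt.1 i).ne') (continuous_apply i).continuousAt
    have hb2 : ContinuousOn (fun wt : Fin (n-1) → ℝ => Real.log (1 - ∑ i, wt i)) (Dset n) := by
      intro wt hwt
      refine ContinuousAt.continuousWithinAt ?_
      have hs : ContinuousAt (fun wt : Fin (n-1) → ℝ => 1 - ∑ i, wt i) wt :=
        (continuous_const.sub
          (continuous_finset_sum _ fun i _ => continuous_apply i)).continuousAt
      have hne : (1 - ∑ i, wt i) ≠ 0 := ne_of_gt (by linarith [hwt.2])
      exact ContinuousAt.comp (f := fun wt : Fin (n-1) → ℝ => 1 - ∑ i, wt i)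
        (Real.continuousAt_log hne) hs
    have hlinc : Continuous (fun wt : Fin (n-1) → ℝ => ∑ i, v i * wt i) :=
      continuous_finset_sum _ fun i _ => continuous_const.mul (continuous_apply i)
    have hraw : ContinuousOn (fun wt => Ψ ((Kᵀ * (Mmat A (extendW n wt))⁻¹ * K)⁻¹)
        - μ * ∑ i, Real.log (wt i) - μ * Real.log (1 - ∑ i, wt i) - ∑ i, v i * wt i)
        (Dset n) :=
      ((hF.sub (continuousOn_const.mul hb1)).sub
        (continuousOn_const.mul hb2)).sub hlinc.continuousOn
    exact hraw.congr fun wt _ => hφdef wt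
  have hn1 : (0:ℝ) < (n:ℝ) - 1 := by
    have h2 : (2:ℝ) ≤ (n:ℝ) := by exact_mod_cast hn
    linarith
  set wt₀ : Fin (n-1) → ℝ := fun _ => 1/(2*((n:ℝ)-1)) with hwt₀
  have hcard : ((n - 1 : ℕ) : ℝ) = (n:ℝ) - 1 := by
    rw [Nat.cast_sub (by omega : 1 ≤ n), Nat.cast_one]
  have hsum₀ : ∑ i, wt₀ i = 1/2 := by
    rw [hwt₀, Finset.sum_const, Finset.card_univ, Fintype.card_fin, nsmul_eq_mul, hcard]
    field_simp
  have hwt₀D : wt₀ ∈ Dset n := by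
    constructor
    · intro i
      rw [hwt₀]
      positivity
    · rw [hsum₀]; norm_num
  set B : ℝ := φ wt₀ with hB
  set ε : ℝ := min (1/(2*((n:ℝ)-1))) (min (1/2) (Real.exp ((c - V - B)/μ))) with hε
  have hε0 : 0 < ε := by
    rw [hε]
    refine lt_min (by positivity) (lt_min (by norm_num) (Real.exp_pos _))
  have hεexp : ε ≤ Real.exp ((c - V - B)/μ) :=
    le_trans (min_le_right _ _) (min_le_right _ _)
  have hεhalf : ε ≤ 1/2 := le_trans (min_le_right _ _) (min_le_left _ _)
  set Kc : Set (Fin (n-1) → ℝ) := {wt | (∀ i, ε ≤ wt i) ∧ ∑ i, wt i ≤ 1 - ε} with hKc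
  have hKsub : Kc ⊆ Dset n := by
    intro wt hwt
    exact ⟨fun i => lt_of_lt_of_le hε0 (hwt.1 i), by linarith [hwt.2, hε0]⟩
  have hwt₀K : wt₀ ∈ Kc := by
    constructor
    · intro i
      exact le_trans (min_le_left _ _) (le_refl _)
    · rw [hsum₀]; linarith [hεhalf]
  have hKcomp : IsCompact Kc := by
    have hclosed : IsClosed Kc := by
      have heq : Kc = (⋂ i, {wt : Fin (n-1) → ℝ | ε ≤ wt i})
          ∩ {wt : Fin (n-1) → ℝ | ∑ i, wt i ≤ 1 - ε} := by
        ext wt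
        simp [hKc, Set.mem_iInter]
      rw [heq]
      exact IsClosed.inter
        (isClosed_iInter fun i => isClosed_le continuous_const (continuous_apply i))
        (isClosed_le (continuous_finset_sum _ fun i _ => continuous_apply i) continuous_const)
    refine IsCompact.of_isClosed_subset
      (isCompact_Icc (a := fun _ : Fin (n-1) => ε) (b := fun _ : Fin (n-1) => (1:ℝ)))
      hclosed ?_
    intro wt hwt
    constructor
    · intro i; exact hwt.1 i
    · intro i
      have h1 : wt i ≤ ∑ j, wt j :=
        Finset.single_le_sum (fun j _ => le_trans hε0.le (hwt.1 j)) (Finset.mem_univ i)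
      have h2 := hwt.2
      show wt i ≤ 1
      linarith [hε0]
  obtain ⟨wts, hwtsK, hwtsmin⟩ :=
    hKcomp.exists_isMinOn ⟨wt₀, hwt₀K⟩ (hφcont.mono hKsub)
  have hwtsD : wts ∈ Dset n := hKsub hwtsK
  have hminB : φ wts ≤ B := isMinOn_iff.mp hwtsmin wt₀ hwt₀K
  have hglobal : ∀ wt' ∈ Dset n, φ wts ≤ φ wt' := by
    intro wt' hwt'
    by_cases hmem : wt' ∈ Kc
    · exact isMinOn_iff.mp hwtsmin wt' hmem
    · rw [hKc] at hmem
      simp only [Set.mem_setOf_eq, not_and_or, not_forall, not_le] at hmem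
      rcases hmem with ⟨i₀, hi₀⟩ | hsumbig
      · have h1 : wt' i₀ < Real.exp ((c - V - B)/μ) := lt_of_lt_of_le hi₀ hεexp
        have h2 : Real.log (wt' i₀) < (c - V - B)/μ := (Real.log_lt_iff_lt_exp (hwt'.1 i₀)).mpr h1
        have h3 : Real.log (wt' i₀) * μ < c - V - B := (lt_div_iff₀ hμ).mp h2
        have h4 := hlow1 wt' hwt' i₀
        nlinarith [hminB]
      · have hslack0 : (0:ℝ) < 1 - ∑ i, wt' i := by linarith [hwt'.2]
        have h1 : 1 - ∑ i, wt' i < Real.exp ((c - V - B)/μ) := by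
          have : 1 - ∑ i, wt' i < ε := by linarith
          linarith [hεexp]
        have h2 : Real.log (1 - ∑ i, wt' i) < (c - V - B)/μ := (Real.log_lt_iff_lt_exp hslack0).mpr h1
        have h3 := (lt_div_iff₀ hμ).mp h2
        have h4 := hlow2 wt' hwt'
        nlinarith [hminB]
  have huniq : ∀ y, (y ∈ Dset n ∧ ∀ wt' ∈ Dset n, φ y ≤ φ wt') → y = wts := by
    intro y hy
    obtain ⟨hyD, hymin⟩ := hy
    by_contra hne
    obtain ⟨i₀, hi₀⟩ := Function.ne_iff.mp hne
    set z : Fin (n-1) → ℝ := fun i => (y i + wts i)/2 with hzdef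
    have hz_apply : ∀ i, z i = (y i + wts i)/2 := fun i => rfl
    have hzD : z ∈ Dset n := BarrierAux.Dset_midpoint hyD hwtsD
    clear_value z
    have hyz : φ y ≤ φ z := hymin z hzD
    have hgeq : φ y = φ wts := le_antisymm (hymin wts hwtsD) (hglobal y hyD)
    have hM₁ : (Mmat A (extendW n y)).PosDef := BarrierAux.Mmat_posDef hA hex hn hyD
    have hM₂ : (Mmat A (extendW n wts)).PosDef := BarrierAux.Mmat_posDef hA hex hn hwtsD
    have hMz : (Mmat A (extendW n z)).PosDef := BarrierAux.Mmat_posDef hA hex hn hzD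
    have hMmid : Mmat A (extendW n z) =
        (1/2 : ℝ) • Mmat A (extendW n y) + (1/2 : ℝ) • Mmat A (extendW n wts) := by
      rw [hzdef, BarrierAux.extendW_midpoint y wts, BarrierAux.Mmat_midpoint]
    have hCy : (BarrierAux.CK K (Mmat A (extendW n y))).PosDef := BarrierAux.CK_posDef hM₁ hKi
    have hCw : (BarrierAux.CK K (Mmat A (extendW n wts))).PosDef := BarrierAux.CK_posDef hM₂ hKi
    have hCz : (BarrierAux.CK K (Mmat A (extendW n z))).PosDef := BarrierAux.CK_posDef hMz hKi
    have hkey := BarrierAux.CK_midpoint hM₁ hM₂ hKi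
    rw [← hMmid] at hkey
    have hhalfPD : ((1/2 : ℝ) • BarrierAux.CK K (Mmat A (extendW n y))
        + (1/2 : ℝ) • BarrierAux.CK K (Mmat A (extendW n wts))).PosDef :=
      (BarrierAux.posDef_smul hCy (by norm_num)).add (BarrierAux.posDef_smul hCw (by norm_num))
    have step1 : Ψ (BarrierAux.CK K (Mmat A (extendW n z)))
        ≤ Ψ ((1/2 : ℝ) • BarrierAux.CK K (Mmat A (extendW n y))
            + (1/2 : ℝ) • BarrierAux.CK K (Mmat A (extendW n wts))) :=
      hΨ.decreasing _ _ hCz.isHermitian hhalfPD hkey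
    have step2 := hΨ.convex _ _ hCy hCw (1/2) (by norm_num) (by norm_num)
    rw [show (1:ℝ) - 1/2 = 1/2 by norm_num] at step2
    have hFz : Ψ ((Kᵀ * (Mmat A (extendW n z))⁻¹ * K)⁻¹)
        ≤ 1/2 * Ψ ((Kᵀ * (Mmat A (extendW n y))⁻¹ * K)⁻¹)
          + 1/2 * Ψ ((Kᵀ * (Mmat A (extendW n wts))⁻¹ * K)⁻¹) := le_trans step1 step2
    have hsumlog : (∑ i, Real.log (y i) + ∑ i, Real.log (wts i))/2 < ∑ i, Real.log (z i) := by
      have h1 : ∀ i ∈ Finset.univ, (Real.log (y i) + Real.log (wts i))/2 ≤ Real.log (z i) := by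
        intro i _
        rw [hz_apply i]
        exact BarrierAux.log_midpoint_le (hyD.1 i) (hwtsD.1 i)
      have h2 : (Real.log (y i₀) + Real.log (wts i₀))/2 < Real.log (z i₀) := by
        rw [hz_apply i₀]
        exact BarrierAux.log_midpoint_lt (hyD.1 i₀) (hwtsD.1 i₀) hi₀
      have h3 := Finset.sum_lt_sum h1 ⟨i₀, Finset.mem_univ i₀, h2⟩
      have h4 : ∑ i, (Real.log (y i) + Real.log (wts i))/2
          = (∑ i, Real.log (y i) + ∑ i, Real.log (wts i))/2 := by
        rw [← Finset.sum_div, Finset.sum_add_distrib]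
      linarith [h3, h4.symm.le]
    have hzsum : 1 - ∑ i, z i = ((1 - ∑ i, y i) + (1 - ∑ i, wts i))/2 := by
      have h5 : ∑ i, z i = (∑ i, y i + ∑ i, wts i)/2 := by
        simp only [hz_apply]
        rw [← Finset.sum_div, Finset.sum_add_distrib]
      rw [h5]; ring
    have hslacklog : (Real.log (1 - ∑ i, y i) + Real.log (1 - ∑ i, wts i))/2
        ≤ Real.log (1 - ∑ i, z i) := by
      rw [hzsum]
      exact BarrierAux.log_midpoint_le (by linarith [hyD.2]) (by linarith [hwtsD.2])
    have hlinz : ∑ i, v i * z i = (∑ i, v i * y i + ∑ i, v i * wts i)/2 := by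
      have h6 : ∀ i ∈ Finset.univ, v i * z i = (v i * y i + v i * wts i)/2 := by
        intro i _
        rw [hz_apply i]
        ring
      rw [Finset.sum_congr rfl h6, ← Finset.sum_div, Finset.sum_add_distrib]
    have hφz := hφdef z
    have hφy := hφdef y
    have hφw := hφdef wts
    have hmul1 : μ * ((∑ i, Real.log (y i) + ∑ i, Real.log (wts i))/2)
        < μ * ∑ i, Real.log (z i) := mul_lt_mul_of_pos_left hsumlog hμ
    have hmul2 : μ * ((Real.log (1 - ∑ i, y i) + Real.log (1 - ∑ i, wts i))/2)
        ≤ μ * Real.log (1 - ∑ i, z i) := mul_le_mul_of_nonneg_left hslacklog hμ.le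
    have hcontr : φ z < (φ y + φ wts)/2 := by
      rw [hφz, hφy, hφw]
      linarith [hFz, hmul1, hmul2, hlinz]
    linarith [hyz, hgeq, hcontr]
  exact ⟨wts, ⟨hwtsD, hglobal⟩, huniq⟩
end
end

section
/- Suppose Ψ satisfies Assumption 1. Then the objective values along the central path converge to the optimal value: for every ε > 0 there exists δ > 0 such that for all μ and v with 0 < μ < δ and ‖v‖ < δ, the point w = w(μ,v) satisfies |Ψ((K^T M(w)^{-1} K)^{-1}) − f*| < ε, where f* is the optimal value of the design problem. -/
open Matrix Filter Topology

noncomputable section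

attribute [local instance] Matrix.normedAddCommGroup Matrix.normedSpace

section AuxMat

variable {m k : ℕ}

lemma aux_injective_of_rank {K : Matrix (Fin m) (Fin k) ℝ} (hK : K.rank = k) :
    Function.Injective K.mulVecLin := by
  rw [← LinearMap.ker_eq_bot]
  have h1 := LinearMap.finrank_range_add_finrank_ker K.mulVecLin
  have h2 : Module.finrank ℝ (Fin k → ℝ) = k := by simp
  rw [Matrix.rank] at hK
  have h3 : Module.finrank ℝ (LinearMap.ker K.mulVecLin) = 0 := by omega
  exact Submodule.finrank_eq_zero.mp h3

lemma aux_posDef_conj {X : Matrix (Fin m) (Fin m) ℝ} (hX : X.PosDef)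
    {K : Matrix (Fin m) (Fin k) ℝ} (hK : Function.Injective K.mulVecLin) :
    (Kᵀ * X * K).PosDef := by
  have hKH : Kᴴ = Kᵀ := K.conjTranspose_eq_transpose_of_trivial
  rw [Matrix.posDef_iff_dotProduct_mulVec]
  constructor
  · have := (hX.posSemidef.conjTranspose_mul_mul_same K).1
    rwa [hKH] at this
  · intro x hx
    have hKx : K *ᵥ x ≠ 0 := by
      intro h
      have : K.mulVecLin x = K.mulVecLin 0 := by simp [Matrix.mulVecLin_apply, h]
      exact hx (hK this)
    have h2 := hX.dotProduct_mulVec_pos hKx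
    rw [← hKH]
    simpa only [star_mulVec, dotProduct_mulVec, vecMul_vecMul] using h2

lemma aux_isUnit_det {X : Matrix (Fin k) (Fin k) ℝ} (hX : X.PosDef) : IsUnit X.det :=
  isUnit_iff_ne_zero.mpr hX.det_pos.ne'

lemma aux_schur_iff {X : Matrix (Fin m) (Fin m) ℝ} (hX : X.PosDef)
    {U : Matrix (Fin k) (Fin k) ℝ} (hU : U.PosDef) (K : Matrix (Fin m) (Fin k) ℝ) :
    (X - K * U * Kᵀ).PosSemidef ↔ (U⁻¹ - Kᵀ * X⁻¹ * K).PosSemidef := by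
  have hKH : Kᴴ = Kᵀ := K.conjTranspose_eq_transpose_of_trivial
  have hUinv : (U⁻¹).PosDef := hU.inv
  haveI := hX.isUnit.invertible
  haveI := hUinv.isUnit.invertible
  have h2 := Matrix.PosDef.fromBlocks₂₂ X K hUinv
  have h1 := Matrix.PosDef.fromBlocks₁₁ K (U⁻¹) hX
  rw [hKH] at h1 h2
  rw [Matrix.nonsing_inv_nonsing_inv U (aux_isUnit_det hU)] at h2
  exact h2.symm.trans h1

lemma aux_inv_antitone {A B : Matrix (Fin k) (Fin k) ℝ} (hA : A.PosDef) (hB : B.PosDef)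
    (hAB : (B - A).PosSemidef) : (A⁻¹ - B⁻¹).PosSemidef := by
  haveI := hB.isUnit.invertible
  haveI := hA.inv.isUnit.invertible
  have h2 := Matrix.PosDef.fromBlocks₂₂ B (1 : Matrix (Fin k) (Fin k) ℝ) hA.inv
  have h1 := Matrix.PosDef.fromBlocks₁₁ (1 : Matrix (Fin k) (Fin k) ℝ) A⁻¹ hB
  simp only [Matrix.conjTranspose_one, Matrix.mul_one, Matrix.one_mul,
    Matrix.nonsing_inv_nonsing_inv A (aux_isUnit_det hA)] at h1 h2
  exact h1.mp (h2.mpr hAB)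

end AuxMat

section AuxM

variable {n m k : ℕ}

lemma aux_sum_mulVec {M : Fin n → Matrix (Fin m) (Fin m) ℝ} {x : Fin m → ℝ} :
    (∑ i, M i) *ᵥ x = ∑ i, (M i) *ᵥ x := by
  ext j
  simp only [Matrix.mulVec, dotProduct, Matrix.sum_apply, Finset.sum_apply, Finset.sum_mul]
  rw [Finset.sum_comm]

lemma aux_dot_sum {y : Fin m → ℝ} {f : Fin n → Fin m → ℝ} :
    y ⬝ᵥ (∑ i, f i) = ∑ i, y ⬝ᵥ f i := by
  simp only [dotProduct, Finset.sum_apply, Finset.mul_sum]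
  rw [Finset.sum_comm]

lemma aux_quad (A : Fin n → Matrix (Fin m) (Fin m) ℝ) (v : Fin n → ℝ) (x : Fin m → ℝ) :
    star x ⬝ᵥ (Mmat A v) *ᵥ x = ∑ i, v i * (star x ⬝ᵥ (A i) *ᵥ x) := by
  unfold Mmat
  rw [aux_sum_mulVec, aux_dot_sum]
  exact Finset.sum_congr rfl fun i _ => by
    rw [Matrix.smul_mulVec, dotProduct_smul, smul_eq_mul]

lemma aux_Mmat_herm {A : Fin n → Matrix (Fin m) (Fin m) ℝ} (hA : ∀ i, (A i).PosSemidef)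
    (w : Fin n → ℝ) : (Mmat A w).IsHermitian := by
  show (∑ i, w i • A i)ᴴ = ∑ i, w i • A i
  rw [Matrix.conjTranspose_sum]
  exact Finset.sum_congr rfl fun i _ => by
    rw [Matrix.conjTranspose_smul, (hA i).1, star_trivial]

lemma aux_Mmat_psd {A : Fin n → Matrix (Fin m) (Fin m) ℝ} (hA : ∀ i, (A i).PosSemidef)
    {w : Fin n → ℝ} (hw : ∀ i, 0 ≤ w i) : (Mmat A w).PosSemidef := by
  refine Matrix.PosSemidef.of_dotProduct_mulVec_nonneg (aux_Mmat_herm hA w) fun x => ?_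
  rw [aux_quad]
  exact Finset.sum_nonneg fun i _ => mul_nonneg (hw i) ((hA i).dotProduct_mulVec_nonneg x)

lemma aux_Mmat_posDef {A : Fin n → Matrix (Fin m) (Fin m) ℝ} (hA : ∀ i, (A i).PosSemidef)
    {w₀ : Fin n → ℝ} (hw₀ : (Mmat A w₀).PosDef) (hw₀n : ∀ i, 0 ≤ w₀ i)
    {w : Fin n → ℝ} (hw : ∀ i, 0 < w i) : (Mmat A w).PosDef := by
  refine Matrix.PosDef.of_dotProduct_mulVec_pos (aux_Mmat_herm hA w) fun x hx => ?_
  have h0 := hw₀.dotProduct_mulVec_pos hx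
  rw [aux_quad] at h0
  have hnn : ∀ i, 0 ≤ star x ⬝ᵥ (A i) *ᵥ x := fun i => (hA i).dotProduct_mulVec_nonneg x
  obtain ⟨i₀, hi₀⟩ : ∃ i, 0 < w₀ i * (star x ⬝ᵥ (A i) *ᵥ x) := by
    by_contra h
    push_neg at h
    exact absurd (Finset.sum_nonpos fun i _ => h i) (not_le.mpr h0)
  have hq : 0 < star x ⬝ᵥ (A i₀) *ᵥ x := by
    rcases lt_or_eq_of_le (hnn i₀) with h | h
    · exact h
    · exfalso; rw [← h, mul_zero] at hi₀; exact lt_irrefl 0 hi₀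
  rw [aux_quad]
  refine Finset.sum_pos' (fun i _ => mul_nonneg (hw i).le (hnn i)) ⟨i₀, Finset.mem_univ _,
    mul_pos (hw i₀) hq⟩

lemma aux_Mmat_comb (A : Fin n → Matrix (Fin m) (Fin m) ℝ) (t : ℝ) (w w' : Fin n → ℝ) :
    Mmat A (fun i => t * w i + (1 - t) * w' i) = t • Mmat A w + (1 - t) • Mmat A w' := by
  unfold Mmat
  rw [Finset.smul_sum, Finset.smul_sum, ← Finset.sum_add_distrib]
  exact Finset.sum_congr rfl fun i _ => by rw [add_smul, ← smul_smul, ← smul_smul]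

lemma aux_rangeIncl (K : Matrix (Fin m) (Fin k) ℝ) {X : Matrix (Fin m) (Fin m) ℝ}
    (hX : X.PosDef) : RangeIncl K X := by
  intro y hy
  refine ⟨X⁻¹ *ᵥ y, ?_⟩
  rw [Matrix.toLin'_apply, Matrix.mulVec_mulVec,
    Matrix.mul_nonsing_inv _ (isUnit_iff_ne_zero.mpr hX.det_pos.ne'), Matrix.one_mulVec]

lemma aux_posSemidef_smul {A : Matrix (Fin m) (Fin m) ℝ} (hA : A.PosSemidef) {c : ℝ}
    (hc : 0 ≤ c) : (c • A).PosSemidef := by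
  rw [Matrix.posSemidef_iff_dotProduct_mulVec]
  constructor
  · show (c • A)ᴴ = c • A
    rw [Matrix.conjTranspose_smul, star_trivial, hA.1]
  · intro x
    rw [Matrix.smul_mulVec, dotProduct_smul, smul_eq_mul]
    exact mul_nonneg hc (hA.dotProduct_mulVec_nonneg x)

lemma aux_posDef_smul {A : Matrix (Fin m) (Fin m) ℝ} (hA : A.PosDef) {c : ℝ}
    (hc : 0 < c) : (c • A).PosDef := by
  rw [Matrix.posDef_iff_dotProduct_mulVec]
  constructor
  · show (c • A)ᴴ = c • A
    rw [Matrix.conjTranspose_smul, star_trivial, hA.1]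
  · intro x hx
    rw [Matrix.smul_mulVec, dotProduct_smul, smul_eq_mul]
    exact mul_pos hc (hA.dotProduct_mulVec_pos hx)

end AuxM

section AuxExt

variable {n' : ℕ}

lemma aux_extendW_pos {wt : Fin n' → ℝ} (hwt : wt ∈ Dset (n' + 1)) :
    ∀ i, 0 < extendW (n' + 1) wt i := by
  intro i
  simp only [extendW, Nat.add_sub_cancel]
  by_cases h : (i : ℕ) < n'
  · rw [dif_pos h]; exact hwt.1 _
  · rw [dif_neg h]; exact sub_pos.mpr hwt.2

lemma aux_extendW_sum (wt : Fin n' → ℝ) : ∑ i, extendW (n' + 1) wt i = 1 := by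
  rw [Fin.sum_univ_castSucc]
  have h1 : ∀ i : Fin n', extendW (n' + 1) wt (Fin.castSucc i) = wt i := by
    intro i
    simp only [extendW, Nat.add_sub_cancel]
    rw [dif_pos (by simpa using i.isLt)]
    exact congrArg wt (Fin.ext (by simp))
  have h2 : extendW (n' + 1) wt (Fin.last n') = 1 - ∑ j, wt j := by
    simp only [extendW, Nat.add_sub_cancel]
    rw [dif_neg (by simp)]
    rfl
  rw [h2, Finset.sum_congr rfl fun i _ => h1 i]
  show (∑ j : Fin n', wt j) + (1 - ∑ j : Fin n', wt j) = 1
  ring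

lemma aux_extendW_mem {wt : Fin n' → ℝ} (hwt : wt ∈ Dset (n' + 1)) :
    extendW (n' + 1) wt ∈ Omega (n' + 1) :=
  ⟨fun i => (aux_extendW_pos hwt i).le, aux_extendW_sum wt⟩

lemma aux_truncW {w : Fin (n' + 1) → ℝ} (hpos : ∀ i, 0 < w i) (hsum : ∑ i, w i = 1) :
    (fun i : Fin n' => w (Fin.castSucc i)) ∈ Dset (n' + 1) ∧
      extendW (n' + 1) (fun i : Fin n' => w (Fin.castSucc i)) = w := by
  have hs : ∑ i : Fin n', w (Fin.castSucc i) = 1 - w (Fin.last n') := by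
    rw [Fin.sum_univ_castSucc] at hsum; linarith
  constructor
  · refine ⟨fun i => hpos _, ?_⟩
    show ∑ i : Fin n', w (Fin.castSucc i) < 1
    rw [hs]; linarith [hpos (Fin.last n')]
  · funext i
    simp only [extendW, Nat.add_sub_cancel]
    by_cases h : (i : ℕ) < n'
    · rw [dif_pos h]
      exact congrArg w (Fin.ext (by simp))
    · rw [dif_neg h]
      show 1 - ∑ i : Fin n', w (Fin.castSucc i) = w i
      rw [hs]
      have hi := i.isLt
      have : i = Fin.last n' := Fin.ext (by simp only [Fin.val_last]; omega)
      rw [this]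
      ring
end AuxExt

section AuxF

variable {m k : ℕ}

lemma aux_opt_feas {K : Matrix (Fin m) (Fin k) ℝ} (hKinj : Function.Injective K.mulVecLin)
    {X : Matrix (Fin m) (Fin m) ℝ} (hX : X.PosDef) :
    (X - K * (Kᵀ * X⁻¹ * K)⁻¹ * Kᵀ).PosSemidef := by
  have hW : (Kᵀ * X⁻¹ * K).PosDef := aux_posDef_conj hX.inv hKinj
  rw [aux_schur_iff hX hW.inv K, Matrix.nonsing_inv_nonsing_inv _ (aux_isUnit_det hW), sub_self]
  exact ⟨Matrix.isHermitian_zero, fun x => by simp⟩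

lemma aux_opt_le {K : Matrix (Fin m) (Fin k) ℝ} (hKinj : Function.Injective K.mulVecLin)
    {Ψ : Matrix (Fin k) (Fin k) ℝ → ℝ} (hΨ : Assumption1 k Ψ)
    {X : Matrix (Fin m) (Fin m) ℝ} (hX : X.PosDef)
    {U : Matrix (Fin k) (Fin k) ℝ} (hU : U.PosDef)
    (hfeas : (X - K * U * Kᵀ).PosSemidef) :
    Ψ ((Kᵀ * X⁻¹ * K)⁻¹) ≤ Ψ U := by
  have hW : (Kᵀ * X⁻¹ * K).PosDef := aux_posDef_conj hX.inv hKinj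
  have h1 : (U⁻¹ - Kᵀ * X⁻¹ * K).PosSemidef := (aux_schur_iff hX hU K).mp hfeas
  have h2 := aux_inv_antitone hW hU.inv h1
  rw [Matrix.nonsing_inv_nonsing_inv U (aux_isUnit_det hU)] at h2
  exact hΨ.decreasing _ _ hW.inv.isHermitian hU h2

lemma aux_phiHat_posDef {K : Matrix (Fin m) (Fin k) ℝ} (hKinj : Function.Injective K.mulVecLin)
    {Ψ : Matrix (Fin k) (Fin k) ℝ → ℝ} (hΨ : Assumption1 k Ψ)
    {X : Matrix (Fin m) (Fin m) ℝ} (hX : X.PosDef) :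
    PhiHat K Ψ X = Ψ ((Kᵀ * X⁻¹ * K)⁻¹) := by
  have hW : (Kᵀ * X⁻¹ * K).PosDef := aux_posDef_conj hX.inv hKinj
  have hmem : Ψ ((Kᵀ * X⁻¹ * K)⁻¹) ∈
      {y | ∃ U : Matrix (Fin k) (Fin k) ℝ, U.PosDef ∧ (X - K * U * Kᵀ).PosSemidef ∧ y = Ψ U} :=
    ⟨_, hW.inv, aux_opt_feas hKinj hX, rfl⟩
  have hlb : ∀ y ∈ {y | ∃ U : Matrix (Fin k) (Fin k) ℝ, U.PosDef ∧
      (X - K * U * Kᵀ).PosSemidef ∧ y = Ψ U}, Ψ ((Kᵀ * X⁻¹ * K)⁻¹) ≤ y := by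
    rintro y ⟨U, hU, hfeas, rfl⟩
    exact aux_opt_le hKinj hΨ hX hU hfeas
  exact le_antisymm (csInf_le ⟨_, hlb⟩ hmem) (le_csInf ⟨_, hmem⟩ hlb)

lemma aux_exists_feasible {K : Matrix (Fin m) (Fin k) ℝ}
    (hKinj : Function.Injective K.mulVecLin)
    {X : Matrix (Fin m) (Fin m) ℝ} (hX : X.PosSemidef) (hR : RangeIncl K X) :
    ∃ U : Matrix (Fin k) (Fin k) ℝ, U.PosDef ∧ (X - K * U * Kᵀ).PosSemidef := by
  classical
  obtain ⟨S, hS, hSS⟩ : ∃ S : Matrix (Fin m) (Fin m) ℝ, S.PosSemidef ∧ S * S = X := by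
    open scoped MatrixOrder in
    exact ⟨CFC.sqrt X, (CFC.sqrt_nonneg X).posSemidef, CFC.sqrt_mul_sqrt_self X hX.nonneg⟩
  have hcol : ∀ j, ∃ c : Fin m → ℝ, S *ᵥ c = fun i => K i j := by
    intro j
    have h1 : (fun i => K i j) ∈ LinearMap.range (Matrix.toLin' X) := by
      apply hR
      refine ⟨Pi.single j 1, ?_⟩
      rw [Matrix.toLin'_apply, Matrix.mulVec_single]
      simp
      rfl
    obtain ⟨v, hv⟩ := h1
    rw [Matrix.toLin'_apply, ← hSS, ← Matrix.mulVec_mulVec] at hv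
    exact ⟨S *ᵥ v, hv⟩
  choose c hc using hcol
  set C : Matrix (Fin m) (Fin k) ℝ := Matrix.of (fun i j => c j i) with hCdef
  have hKC : S * C = K := by
    ext i j
    have := congrFun (hc j) i
    simpa [Matrix.mul_apply, Matrix.mulVec, dotProduct, hCdef] using this
  have hCinj : Function.Injective C.mulVecLin := by
    intro x y hxy
    have h1 : C *ᵥ x = C *ᵥ y := by simpa [Matrix.mulVecLin_apply] using hxy
    have h2 : K *ᵥ x = K *ᵥ y := by
      rw [← hKC, ← Matrix.mulVec_mulVec, ← Matrix.mulVec_mulVec, h1]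
    exact hKinj (by simpa [Matrix.mulVecLin_apply] using h2)
  have hW : (Cᵀ * C).PosDef := by
    have := aux_posDef_conj (Matrix.PosDef.one (n := Fin m) (R := ℝ)) hCinj
    simpa [Matrix.mul_one] using this
  have hdW : IsUnit (Cᵀ * C).det := aux_isUnit_det hW
  refine ⟨(Cᵀ * C)⁻¹, hW.inv, ?_⟩
  have hSt : Sᵀ = S := by
    have h := hS.isHermitian
    rwa [← Matrix.conjTranspose_eq_transpose_of_trivial]
  have hPP : (C * (Cᵀ * C)⁻¹ * Cᵀ) * (C * (Cᵀ * C)⁻¹ * Cᵀ) = C * (Cᵀ * C)⁻¹ * Cᵀ := by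
    have h1 : (Cᵀ * C)⁻¹ * (Cᵀ * C) = 1 := Matrix.nonsing_inv_mul _ hdW
    calc (C * (Cᵀ * C)⁻¹ * Cᵀ) * (C * (Cᵀ * C)⁻¹ * Cᵀ)
        = C * (((Cᵀ * C)⁻¹ * (Cᵀ * C)) * ((Cᵀ * C)⁻¹ * Cᵀ)) := by
          simp only [Matrix.mul_assoc]
      _ = C * (Cᵀ * C)⁻¹ * Cᵀ := by rw [h1, Matrix.one_mul, ← Matrix.mul_assoc]
  have hPsymm : (C * (Cᵀ * C)⁻¹ * Cᵀ)ᵀ = C * (Cᵀ * C)⁻¹ * Cᵀ := by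
    rw [Matrix.transpose_mul, Matrix.transpose_mul, Matrix.transpose_transpose,
      Matrix.transpose_nonsing_inv, Matrix.transpose_mul, Matrix.transpose_transpose,
      ← Matrix.mul_assoc]
  have h1P : ((1 : Matrix (Fin m) (Fin m) ℝ) - C * (Cᵀ * C)⁻¹ * Cᵀ).PosSemidef := by
    have h := Matrix.posSemidef_conjTranspose_mul_self
      ((1 : Matrix (Fin m) (Fin m) ℝ) - C * (Cᵀ * C)⁻¹ * Cᵀ)
    have heq : ((1 : Matrix (Fin m) (Fin m) ℝ) - C * (Cᵀ * C)⁻¹ * Cᵀ)ᴴ *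
        ((1 : Matrix (Fin m) (Fin m) ℝ) - C * (Cᵀ * C)⁻¹ * Cᵀ)
        = (1 : Matrix (Fin m) (Fin m) ℝ) - C * (Cᵀ * C)⁻¹ * Cᵀ := by
      rw [Matrix.conjTranspose_eq_transpose_of_trivial, Matrix.transpose_sub,
        Matrix.transpose_one, hPsymm, Matrix.sub_mul, Matrix.one_mul, Matrix.mul_sub,
        Matrix.mul_one, hPP]
      abel
    rwa [heq] at h
  have hEq : X - K * (Cᵀ * C)⁻¹ * Kᵀ
      = S * ((1 : Matrix (Fin m) (Fin m) ℝ) - C * (Cᵀ * C)⁻¹ * Cᵀ) * Sᴴ := by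
    rw [Matrix.conjTranspose_eq_transpose_of_trivial, hSt, Matrix.mul_sub, Matrix.sub_mul,
      Matrix.mul_one, hSS, ← hKC]
    congr 1
    rw [Matrix.transpose_mul, hSt]
    simp only [Matrix.mul_assoc]
  rw [hEq]
  exact h1P.mul_mul_conjTranspose_same S
end AuxF

section AuxRest

lemma aux_Dset_le_one {n' : ℕ} {wt : Fin n' → ℝ} (h : wt ∈ Dset (n' + 1)) :
    ∀ i, wt i ≤ 1 := by
  intro i
  calc wt i ≤ ∑ j, wt j := Finset.single_le_sum (fun j _ => (h.1 j).le) (Finset.mem_univ i)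
    _ ≤ 1 := h.2.le

lemma aux_log_nonpos_Dset {n' : ℕ} {wt : Fin n' → ℝ} (h : wt ∈ Dset (n' + 1)) :
    (∑ i, Real.log (wt i)) ≤ 0 ∧ Real.log (1 - ∑ i, wt i) ≤ 0 := by
  have hsum0 : 0 ≤ ∑ i, wt i := Finset.sum_nonneg fun i _ => (h.1 i).le
  constructor
  · exact Finset.sum_nonpos fun i _ =>
      Real.log_nonpos (h.1 i).le (aux_Dset_le_one h i)
  · have hlt : (∑ i : Fin n', wt i) < 1 := h.2
    exact Real.log_nonpos (by linarith) (by linarith)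

lemma aux_dot_bound {n' : ℕ} (v : Fin n' → ℝ) {x : Fin n' → ℝ}
    (hx0 : ∀ i, 0 ≤ x i) (hx1 : ∀ i, x i ≤ 1) :
    |∑ i, v i * x i| ≤ (n' : ℝ) * ‖v‖ := by
  calc |∑ i, v i * x i| ≤ ∑ i, |v i * x i| := Finset.abs_sum_le_sum_abs _ _
    _ ≤ ∑ _i : Fin n', ‖v‖ := Finset.sum_le_sum (fun i _ => by
        rw [abs_mul]
        have h1 : |v i| ≤ ‖v‖ := by
          have := norm_le_pi_norm v i
          simpa [Real.norm_eq_abs] using this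
        have h2 : |x i| ≤ 1 := abs_le.mpr ⟨by linarith [hx0 i], hx1 i⟩
        calc |v i| * |x i| ≤ ‖v‖ * 1 := mul_le_mul h1 h2 (abs_nonneg _) (norm_nonneg _)
          _ = ‖v‖ := mul_one _)
    _ = (n' : ℝ) * ‖v‖ := by
        simp [Finset.sum_const, Finset.card_univ, nsmul_eq_mul]

end AuxRest

/-- The objective values along the central path converge to the optimal value `f*`. -/
theorem central_path_value_convergence (n m k : ℕ) (hn : 2 ≤ n) (hm : 1 ≤ m) (hk : 1 ≤ k) (hkm : k ≤ m)
    (A : Fin n → Matrix (Fin m) (Fin m) ℝ) (hA : ∀ i, (A i).PosSemidef)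
    (hex : ∃ w ∈ Omega n, (Mmat A w).PosDef)
    (K : Matrix (Fin m) (Fin k) ℝ) (hK : K.rank = k)
    (Ψ : Matrix (Fin k) (Fin k) ℝ → ℝ)
    (hΨ : Assumption1 k Ψ)
    (wfun : ℝ → (Fin (n - 1) → ℝ) → Fin (n - 1) → ℝ)
    (hwfun : ∀ μ : ℝ, 0 < μ → ∀ v : Fin (n - 1) → ℝ, wfun μ v ∈ Dset n ∧
      ∀ wt' ∈ Dset n, fmu A K Ψ μ (wfun μ v) - ∑ i, v i * wfun μ v i ≤
        fmu A K Ψ μ wt' - ∑ i, v i * wt' i) :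
    ∀ ε : ℝ, 0 < ε → ∃ δ : ℝ, 0 < δ ∧
      ∀ (μ : ℝ) (v : Fin (n - 1) → ℝ), 0 < μ → μ < δ → ‖v‖ < δ →
        |Ψ ((Kᵀ * (Mmat A (extendW n (wfun μ v)))⁻¹ * K)⁻¹) - fstar A K Ψ| < ε := by
  intro ε hε
  obtain ⟨n', rfl⟩ : ∃ n', n = n' + 1 := ⟨n - 1, by omega⟩
  have hKinj : Function.Injective K.mulVecLin := aux_injective_of_rank hK
  obtain ⟨w₀, hw₀Ω, hw₀pd⟩ := hex
  obtain ⟨c, hc⟩ := hΨ.bddBelow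
  set FS : Set ℝ :=
    {y | ∃ w ∈ Omega (n' + 1), RangeIncl K (Mmat A w) ∧ y = PhiHat K Ψ (Mmat A w)} with hFS
  have hfseq : fstar A K Ψ = sInf FS := rfl
  have hPhiLB : ∀ X : Matrix (Fin m) (Fin m) ℝ, min c 0 ≤ PhiHat K Ψ X := by
    intro X
    rcases Set.eq_empty_or_nonempty
      {y | ∃ U : Matrix (Fin k) (Fin k) ℝ, U.PosDef ∧ (X - K * U * Kᵀ).PosSemidef ∧ y = Ψ U}
      with h | h
    · rw [PhiHat, h, Real.sInf_empty]
      exact min_le_right _ _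
    · refine le_trans (min_le_left _ _) (le_csInf h ?_)
      rintro y ⟨U, hU, -, rfl⟩
      exact hc U hU
  have hFSbdd : BddBelow FS := by
    refine ⟨min c 0, ?_⟩
    rintro y ⟨w, -, -, rfl⟩
    exact hPhiLB _
  -- the uniform design
  set u : Fin (n' + 1) → ℝ := fun _ => (1 : ℝ) / (n' + 1) with hu
  have hupos : ∀ i, 0 < u i := fun i => by rw [hu]; positivity
  have huΩ : u ∈ Omega (n' + 1) := by
    refine ⟨fun i => (hupos i).le, ?_⟩
    simp only [hu, Finset.sum_const, Finset.card_univ, Fintype.card_fin, nsmul_eq_mul]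
    have hne : ((n' : ℝ) + 1) ≠ 0 := by positivity
    push_cast
    field_simp
  have hMu : (Mmat A u).PosDef := aux_Mmat_posDef hA hw₀pd hw₀Ω.1 hupos
  have hFSne : FS.Nonempty := ⟨_, ⟨u, huΩ, aux_rangeIncl K hMu, rfl⟩⟩
  -- a near-optimal design
  obtain ⟨y, ⟨wh, hwhΩ, hwhR, hyeq⟩, hylt⟩ :=
    exists_lt_of_csInf_lt hFSne (lt_add_of_pos_right (sInf FS) (by linarith : (0:ℝ) < ε/8))
  have hSwhne : {y | ∃ U : Matrix (Fin k) (Fin k) ℝ, U.PosDef ∧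
      (Mmat A wh - K * U * Kᵀ).PosSemidef ∧ y = Ψ U}.Nonempty := by
    obtain ⟨U, hU, hfe⟩ := aux_exists_feasible hKinj (aux_Mmat_psd hA hwhΩ.1) hwhR
    exact ⟨Ψ U, U, hU, hfe, rfl⟩
  obtain ⟨y0, ⟨U₀, hU₀, hU₀f, rfl⟩, hy0⟩ :=
    exists_lt_of_csInf_lt hSwhne
      (lt_add_of_pos_right (PhiHat K Ψ (Mmat A wh)) (by linarith : (0:ℝ) < ε/8))
  have hU₀lt : Ψ U₀ < sInf FS + ε/4 := by
    have h1 : PhiHat K Ψ (Mmat A wh) < sInf FS + ε/8 := by rw [← hyeq]; exact hylt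
    have h2 : Ψ U₀ < PhiHat K Ψ (Mmat A wh) + ε/8 := hy0
    linarith
  -- the optimal U at the uniform design
  set U₁ : Matrix (Fin k) (Fin k) ℝ := (Kᵀ * (Mmat A u)⁻¹ * K)⁻¹ with hU₁def
  have hU₁ : U₁.PosDef := (aux_posDef_conj hMu.inv hKinj).inv
  -- mixing parameter t
  set t : ℝ := min 1 (ε/8 / (|Ψ U₀| + |Ψ U₁| + 1)) with ht
  have ht0 : 0 < t := lt_min one_pos (by positivity)
  have ht1 : t ≤ 1 := min_le_left _ _
  have htb : t * (|Ψ U₀| + |Ψ U₁|) ≤ ε/8 := by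
    have h1 : t ≤ ε/8 / (|Ψ U₀| + |Ψ U₁| + 1) := min_le_right _ _
    have h2 : (0:ℝ) < |Ψ U₀| + |Ψ U₁| + 1 := by positivity
    calc t * (|Ψ U₀| + |Ψ U₁|)
        ≤ (ε/8 / (|Ψ U₀| + |Ψ U₁| + 1)) * (|Ψ U₀| + |Ψ U₁| + 1) := by
          apply mul_le_mul h1 (by linarith) (by positivity) (by positivity)
      _ = ε/8 := by field_simp
  -- the mixed interior design
  set w' : Fin (n' + 1) → ℝ := fun i => t * u i + (1 - t) * wh i with hw'def
  have hw'pos : ∀ i, 0 < w' i := fun i =>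
    add_pos_of_pos_of_nonneg (mul_pos ht0 (hupos i)) (mul_nonneg (by linarith) (hwhΩ.1 i))
  have hw'sum : ∑ i, w' i = 1 := by
    simp only [hw'def]
    rw [Finset.sum_add_distrib, ← Finset.mul_sum, ← Finset.mul_sum, huΩ.2, hwhΩ.2]
    ring
  obtain ⟨hwt'D, hwt'ext⟩ := aux_truncW hw'pos hw'sum
  set wt' : Fin n' → ℝ := fun i => w' (Fin.castSucc i) with hwt'def
  have hMw' : (Mmat A w').PosDef := aux_Mmat_posDef hA hw₀pd hw₀Ω.1 hw'pos
  set Ut : Matrix (Fin k) (Fin k) ℝ := t • U₁ + (1 - t) • U₀ with hUtdef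
  have hUtpd : Ut.PosDef :=
    (aux_posDef_smul hU₁ ht0).add_posSemidef (aux_posSemidef_smul hU₀.posSemidef (by linarith))
  have hUtf : (Mmat A w' - K * Ut * Kᵀ).PosSemidef := by
    have h1 : Mmat A w' - K * Ut * Kᵀ
        = t • (Mmat A u - K * U₁ * Kᵀ) + (1 - t) • (Mmat A wh - K * U₀ * Kᵀ) := by
      rw [aux_Mmat_comb A t u wh, hUtdef]
      rw [Matrix.mul_add, Matrix.add_mul]
      rw [Matrix.mul_smul, Matrix.smul_mul, Matrix.mul_smul, Matrix.smul_mul]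
      rw [smul_sub, smul_sub]
      abel
    rw [h1]
    exact (aux_posSemidef_smul (aux_opt_feas hKinj hMu) ht0.le).add
      (aux_posSemidef_smul hU₀f (by linarith))
  have hg'le : Ψ ((Kᵀ * (Mmat A w')⁻¹ * K)⁻¹) ≤ Ψ Ut := aux_opt_le hKinj hΨ hMw' hUtpd hUtf
  have hconv : Ψ Ut ≤ t * Ψ U₁ + (1 - t) * Ψ U₀ := hΨ.convex U₁ U₀ hU₁ hU₀ t ht0.le ht1
  have hg'lt : Ψ ((Kᵀ * (Mmat A w')⁻¹ * K)⁻¹) < sInf FS + ε/2 := by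
    have h3 : t * Ψ U₁ + (1 - t) * Ψ U₀ = Ψ U₀ + t * (Ψ U₁ - Ψ U₀) := by ring
    have h4 : t * (Ψ U₁ - Ψ U₀) ≤ t * (|Ψ U₀| + |Ψ U₁|) := by
      apply mul_le_mul_of_nonneg_left _ ht0.le
      have := le_abs_self (Ψ U₁)
      have := neg_abs_le (Ψ U₀)
      linarith
    linarith
  -- the barrier constant at wt'
  set B : ℝ := -(∑ i, Real.log (wt' i)) - Real.log (1 - ∑ i, wt' i) with hBdef
  clear_value B
  have hBnn : 0 ≤ B := by
    obtain ⟨hl1, hl2⟩ := aux_log_nonpos_Dset hwt'D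
    rw [hBdef]
    linarith only [hl1, hl2]
  -- choose δ
  set δ : ℝ := ε/8 / (B + 2 * ((n' : ℝ) + 1) + 1) with hδdef
  clear_value δ
  have hδ0 : 0 < δ := by
    rw [hδdef]
    have h0 : (0:ℝ) < B + 2 * ((n' : ℝ) + 1) + 1 := by positivity
    positivity
  refine ⟨δ, hδ0, ?_⟩
  intro μ v hμ0 hμδ hvδ
  obtain ⟨hwtD, hmin⟩ := hwfun μ hμ0 v
  have hwcpos := aux_extendW_pos hwtD
  have hwcΩ := aux_extendW_mem hwtD
  have hMwc : (Mmat A (extendW (n' + 1) (wfun μ v))).PosDef :=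
    aux_Mmat_posDef hA hw₀pd hw₀Ω.1 hwcpos
  set g : ℝ := Ψ ((Kᵀ * (Mmat A (extendW (n' + 1) (wfun μ v)))⁻¹ * K)⁻¹) with hgdef
  clear_value g
  -- lower bound
  have hlow : sInf FS ≤ g := by
    rw [hgdef, ← aux_phiHat_posDef hKinj hΨ hMwc]
    exact csInf_le hFSbdd ⟨_, hwcΩ, aux_rangeIncl K hMwc, rfl⟩
  -- upper bound from the minimality of the central point
  have hmin' := hmin wt' hwt'D
  unfold fmu at hmin'
  rw [hwt'ext, ← hgdef] at hmin'
  obtain ⟨hlc1, hlc2⟩ := aux_log_nonpos_Dset hwtD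
  have hlc1' : (∑ i, Real.log (wfun μ v i)) ≤ 0 := hlc1
  have hlc2' : Real.log (1 - ∑ i, wfun μ v i) ≤ 0 := hlc2
  have hBeq : B = -(∑ i : Fin (n' + 1 - 1), Real.log (wt' i))
      - Real.log (1 - ∑ i : Fin (n' + 1 - 1), wt' i) := hBdef
  have hVc : |∑ i, v i * wfun μ v i| ≤ (n' : ℝ) * ‖v‖ :=
    aux_dot_bound v (fun i => (hwtD.1 i).le) (aux_Dset_le_one hwtD)
  have hV' : |∑ i, v i * wt' i| ≤ (n' : ℝ) * ‖v‖ :=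
    aux_dot_bound v (fun i => (hwt'D.1 i).le) (aux_Dset_le_one hwt'D)
  have hnv : (0:ℝ) ≤ (n' : ℝ) := Nat.cast_nonneg n'
  have hvnn : (0:ℝ) ≤ ‖v‖ := norm_nonneg v
  have hδval : δ * (B + 2 * ((n' : ℝ) + 1) + 1) = ε/8 := by
    rw [hδdef]
    field_simp
  have hgup : g < sInf FS + ε := by
    have e1 : g ≤ g - μ * ∑ i, Real.log (wfun μ v i)
        - μ * Real.log (1 - ∑ i, wfun μ v i) := by
      have t1 : 0 ≤ μ * -(∑ i, Real.log (wfun μ v i)) :=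
        mul_nonneg hμ0.le (by linarith only [hlc1'])
      have t2 : 0 ≤ μ * -(Real.log (1 - ∑ i, wfun μ v i)) :=
        mul_nonneg hμ0.le (by linarith only [hlc2'])
      linarith only [t1, t2]
    have e2 : g - μ * ∑ i, Real.log (wfun μ v i) - μ * Real.log (1 - ∑ i, wfun μ v i)
        ≤ Ψ ((Kᵀ * (Mmat A w')⁻¹ * K)⁻¹) + μ * B
          + (∑ i, v i * wfun μ v i - ∑ i, v i * wt' i) := by
      rw [hBeq]
      linarith only [hmin']
    have e3 : μ * B ≤ δ * B := mul_le_mul_of_nonneg_right hμδ.le hBnn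
    have e4 : (∑ i, v i * wfun μ v i - ∑ i, v i * wt' i) ≤ 2 * ((n' : ℝ)) * ‖v‖ := by
      have h1 := abs_le.mp hVc
      have h2 := abs_le.mp hV'
      linarith only [h1.2, h2.1]
    have e5 : 2 * ((n' : ℝ)) * ‖v‖ ≤ 2 * ((n' : ℝ) + 1) * δ := by
      have h5 : 2 * (n' : ℝ) * ‖v‖ ≤ 2 * (n' : ℝ) * δ :=
        mul_le_mul_of_nonneg_left hvδ.le (by positivity)
      linarith only [h5, hδ0.le]
    have e6 : δ * B + 2 * ((n' : ℝ) + 1) * δ ≤ ε/8 := by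
      linarith only [hδval, hδ0.le]
    linarith only [e1, e2, e3, e4, e5, e6, hg'lt, hε]
  rw [hfseq]
  rw [abs_lt]
  constructor <;> linarith only [hlow, hgup, hε]
end
end

section
/- Suppose Ψ satisfies Assumption 1. Let (μ_j) be a sequence of positive reals with μ_j → 0 and (v_j) a sequence in ℝ^{n−1} with v_j → 0, and suppose the points w(μ_j, v_j) converge to some w* ∈ ℝ^n. Then w* is an optimal solution of the design problem: w* ∈ Ω, Range(K) ⊆ Range(M(w*)), and Φ̂(M(w*)) = f*. -/
set_option maxHeartbeats 1600000


open Matrix Filter Topology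

noncomputable section

attribute [local instance] Matrix.normedAddCommGroup Matrix.normedSpace

namespace CPL
variable {p q : ℕ}

lemma herm_dot_comm {M : Matrix (Fin p) (Fin p) ℝ} (hM : M.IsHermitian)
    (x y : Fin p → ℝ) : x ⬝ᵥ M *ᵥ y = y ⬝ᵥ M *ᵥ x := by
  rw [dotProduct_mulVec, ← mulVec_transpose, show Mᵀ = M from hM, dotProduct_comm]

lemma dot_shift (K : Matrix (Fin p) (Fin q) ℝ) (x : Fin p → ℝ) (z : Fin q → ℝ) :
    x ⬝ᵥ K *ᵥ z = (Kᵀ *ᵥ x) ⬝ᵥ z := by rw [dotProduct_mulVec, ← mulVec_transpose]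

lemma dot_self_nonneg (x : Fin p → ℝ) : 0 ≤ x ⬝ᵥ x :=
  Finset.sum_nonneg fun i _ => mul_self_nonneg _

lemma psd_def {M : Matrix (Fin p) (Fin p) ℝ} (h1 : M.IsHermitian)
    (h2 : ∀ x : Fin p → ℝ, 0 ≤ x ⬝ᵥ M *ᵥ x) : M.PosSemidef :=
  .of_dotProduct_mulVec_nonneg h1 fun x => by simpa using h2 x

lemma pd_def {M : Matrix (Fin p) (Fin p) ℝ} (h1 : M.IsHermitian)
    (h2 : ∀ x : Fin p → ℝ, x ≠ 0 → 0 < x ⬝ᵥ M *ᵥ x) : M.PosDef :=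
  .of_dotProduct_mulVec_pos h1 fun x hx => by simpa using h2 x hx

lemma det_isUnit {M : Matrix (Fin p) (Fin p) ℝ} (hM : M.PosDef) : IsUnit M.det :=
  isUnit_iff_ne_zero.2 hM.det_pos.ne'

lemma mul_inv_pd {M : Matrix (Fin p) (Fin p) ℝ} (hM : M.PosDef) : M * M⁻¹ = 1 :=
  mul_nonsing_inv M (det_isUnit hM)

lemma inv_mul_pd {M : Matrix (Fin p) (Fin p) ℝ} (hM : M.PosDef) : M⁻¹ * M = 1 :=
  nonsing_inv_mul M (det_isUnit hM)

lemma inv_antitone {A B : Matrix (Fin p) (Fin p) ℝ} (hA : A.PosDef) (hB : B.PosDef)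
    (hAB : (B - A).PosSemidef) : (A⁻¹ - B⁻¹).PosSemidef := by
  refine psd_def (hA.inv.isHermitian.sub hB.inv.isHermitian) fun x => ?_
  set y := B⁻¹ *ᵥ x with hy
  set z := A⁻¹ *ᵥ x with hz
  have hBy : B *ᵥ y = x := by
    rw [hy, mulVec_mulVec, mul_inv_pd hB, one_mulVec]
  have hAz : A *ᵥ z = x := by
    rw [hz, mulVec_mulVec, mul_inv_pd hA, one_mulVec]
  have e2 : y ⬝ᵥ A *ᵥ y ≤ y ⬝ᵥ B *ᵥ y := by
    have h := hAB.dotProduct_mulVec_nonneg y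
    have : y ⬝ᵥ (B - A) *ᵥ y = y ⬝ᵥ B *ᵥ y - y ⬝ᵥ A *ᵥ y := by
      rw [sub_mulVec, dotProduct_sub]
    rw [show (star y : Fin p → ℝ) = y from rfl] at h
    linarith [this ▸ h]
  have hyx : y ⬝ᵥ B *ᵥ y = x ⬝ᵥ y := by rw [hBy, dotProduct_comm]
  have hzy : z ⬝ᵥ A *ᵥ y = x ⬝ᵥ y := by
    rw [herm_dot_comm hA.isHermitian z y, hAz, dotProduct_comm]
  have hyz : y ⬝ᵥ A *ᵥ z = x ⬝ᵥ y := by rw [hAz, dotProduct_comm]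
  have hzz : z ⬝ᵥ A *ᵥ z = x ⬝ᵥ z := by
    rw [herm_dot_comm hA.isHermitian z z, hAz, dotProduct_comm]
  have h0 : 0 ≤ (y - z) ⬝ᵥ A *ᵥ (y - z) := hA.posSemidef.dotProduct_mulVec_nonneg (y - z)
  have hexp : (y - z) ⬝ᵥ A *ᵥ (y - z)
      = y ⬝ᵥ A *ᵥ y - 2 * (x ⬝ᵥ y) + x ⬝ᵥ z := by
    rw [mulVec_sub, dotProduct_sub, sub_dotProduct, sub_dotProduct, hzy, hyz, hzz]
    ring
  have final : x ⬝ᵥ (A⁻¹ - B⁻¹) *ᵥ x = x ⬝ᵥ z - x ⬝ᵥ y := by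
    rw [sub_mulVec, dotProduct_sub, ← hy, ← hz]
  rw [final]
  linarith [hexp ▸ h0, e2, hyx]

variable {p q : ℕ}

/-- entry sum bound for quadratic forms -/
lemma quad_le_entSum (M : Matrix (Fin p) (Fin p) ℝ) (x : Fin p → ℝ) :
    x ⬝ᵥ M *ᵥ x ≤ (∑ i, ∑ j, |M i j|) * (x ⬝ᵥ x) := by
  have hxx : ∀ i j, |x i * x j| ≤ x ⬝ᵥ x := by
    intro i j
    have h1 : |x i * x j| ≤ (x i ^ 2 + x j ^ 2) / 2 := by
      rw [abs_mul]
      nlinarith [sq_abs (x i), sq_abs (x j), sq_nonneg (|x i| - |x j|)]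
    have h2 : x i ^ 2 ≤ x ⬝ᵥ x := by
      have := Finset.single_le_sum (f := fun l => x l * x l)
        (fun l _ => mul_self_nonneg _) (Finset.mem_univ i)
      simpa [dotProduct, sq] using this
    have h3 : x j ^ 2 ≤ x ⬝ᵥ x := by
      have := Finset.single_le_sum (f := fun l => x l * x l)
        (fun l _ => mul_self_nonneg _) (Finset.mem_univ j)
      simpa [dotProduct, sq] using this
    linarith
  calc x ⬝ᵥ M *ᵥ x = ∑ i, ∑ j, x i * (M i j * x j) := by
        simp [dotProduct, mulVec, Finset.mul_sum]
    _ ≤ ∑ i, ∑ j, |M i j| * (x ⬝ᵥ x) := by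
        refine Finset.sum_le_sum fun i _ => Finset.sum_le_sum fun j _ => ?_
        calc x i * (M i j * x j) = M i j * (x i * x j) := by ring
          _ ≤ |M i j * (x i * x j)| := le_abs_self _
          _ = |M i j| * |x i * x j| := abs_mul _ _
          _ ≤ |M i j| * (x ⬝ᵥ x) := by
              exact mul_le_mul_of_nonneg_left (hxx i j) (abs_nonneg _)
    _ = (∑ i, ∑ j, |M i j|) * (x ⬝ᵥ x) := by
        simp [Finset.sum_mul]

lemma herm_smul_one (c : ℝ) : ((c • (1 : Matrix (Fin p) (Fin p) ℝ))).IsHermitian := by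
  unfold Matrix.IsHermitian
  rw [conjTranspose_smul, conjTranspose_one]
  norm_num

lemma ent_smul_one_sub_psd {M : Matrix (Fin p) (Fin p) ℝ} (hM : M.IsHermitian) :
    ((∑ i, ∑ j, |M i j|) • (1 : Matrix (Fin p) (Fin p) ℝ) - M).PosSemidef := by
  refine psd_def ((herm_smul_one _).sub hM) fun x => ?_
  have h := quad_le_entSum M x
  have : x ⬝ᵥ ((∑ i, ∑ j, |M i j|) • (1 : Matrix (Fin p) (Fin p) ℝ) - M) *ᵥ x
      = (∑ i, ∑ j, |M i j|) * (x ⬝ᵥ x) - x ⬝ᵥ M *ᵥ x := by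
    rw [sub_mulVec, dotProduct_sub, smul_mulVec, one_mulVec, dotProduct_smul,
      smul_eq_mul]
  linarith [this]

lemma psd_smul {M : Matrix (Fin p) (Fin p) ℝ} (hM : M.PosSemidef) {c : ℝ} (hc : 0 ≤ c) :
    (c • M).PosSemidef := by
  refine psd_def ?_ fun x => ?_
  · unfold Matrix.IsHermitian
    rw [conjTranspose_smul, hM.1]
    norm_num
  · rw [smul_mulVec, dotProduct_smul, smul_eq_mul]
    exact mul_nonneg hc (hM.dotProduct_mulVec_nonneg x)

lemma pd_smul {M : Matrix (Fin p) (Fin p) ℝ} (hM : M.PosDef) {c : ℝ} (hc : 0 < c) :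
    (c • M).PosDef := by
  refine pd_def ?_ fun x hx => ?_
  · unfold Matrix.IsHermitian
    rw [conjTranspose_smul, hM.1]
    norm_num
  · rw [smul_mulVec, dotProduct_smul, smul_eq_mul]
    exact mul_pos hc (hM.dotProduct_mulVec_pos hx)

lemma psd_sum {ι : Type*} (s : Finset ι) (f : ι → Matrix (Fin p) (Fin p) ℝ)
    (h : ∀ i ∈ s, (f i).PosSemidef) : (∑ i ∈ s, f i).PosSemidef :=
  Finset.sum_induction f _ (fun _ _ ha hb => ha.add hb) Matrix.PosSemidef.zero h

lemma conj_psd {M : Matrix (Fin p) (Fin p) ℝ} (hM : M.PosSemidef)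
    (K : Matrix (Fin p) (Fin q) ℝ) : (Kᵀ * M * K).PosSemidef :=
  hM.conjTranspose_mul_mul_same K

lemma conj_pd {M : Matrix (Fin p) (Fin p) ℝ} (hM : M.PosDef)
    {K : Matrix (Fin p) (Fin q) ℝ} (hK : ∀ x, K *ᵥ x = 0 → x = 0) :
    (Kᵀ * M * K).PosDef := by
  refine pd_def (conj_psd hM.posSemidef K).isHermitian fun x hx => ?_
  have hKx : K *ᵥ x ≠ 0 := fun h => hx (hK x h)
  have : x ⬝ᵥ (Kᵀ * M * K) *ᵥ x = (K *ᵥ x) ⬝ᵥ M *ᵥ (K *ᵥ x) := by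
    rw [← mulVec_mulVec, ← mulVec_mulVec, dot_shift Kᵀ, transpose_transpose]
  rw [this]
  exact hM.dotProduct_mulVec_pos hKx

lemma single_quad (M : Matrix (Fin p) (Fin p) ℝ) (i j : Fin p) :
    (Pi.single i 1 : Fin p → ℝ) ⬝ᵥ M *ᵥ (Pi.single j 1 : Fin p → ℝ) = M i j := by
  simp [dotProduct, mulVec, Pi.single_apply]

lemma entry_bound {V R : Matrix (Fin p) (Fin p) ℝ} (hV : V.PosSemidef)
    (hR : (R - V).PosSemidef) (i l : Fin p) : |V i l| ≤ ∑ a, ∑ b, |R a b| := by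
  have hdiag : ∀ a, V a a ≤ R a a := by
    intro a
    have h := hR.dotProduct_mulVec_nonneg (Pi.single a 1)
    have : (Pi.single a 1 : Fin p → ℝ) ⬝ᵥ (R - V) *ᵥ (Pi.single a 1) = R a a - V a a := by
      rw [sub_mulVec, dotProduct_sub, single_quad, single_quad]
    rw [show (star (Pi.single a 1 : Fin p → ℝ)) = Pi.single a 1 from rfl, this] at h
    linarith
  have hRs : ∀ a, R a a ≤ ∑ a, ∑ b, |R a b| := by
    intro a
    calc R a a ≤ |R a a| := le_abs_self _
      _ ≤ ∑ b, |R a b| := Finset.single_le_sum (f := fun b => |R a b|) (fun b _ => abs_nonneg _) (Finset.mem_univ a)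
      _ ≤ ∑ a, ∑ b, |R a b| := Finset.single_le_sum
          (f := fun a => ∑ b, |R a b|)
          (fun a _ => Finset.sum_nonneg fun b _ => abs_nonneg _) (Finset.mem_univ a)
  have hVnn : ∀ a, 0 ≤ V a a := by
    intro a
    have h := hV.dotProduct_mulVec_nonneg (Pi.single a 1)
    rwa [show (star (Pi.single a 1 : Fin p → ℝ)) = Pi.single a 1 from rfl,
      single_quad] at h
  rcases eq_or_ne i l with rfl | hil
  · rw [abs_of_nonneg (hVnn i)]
    exact (hdiag i).trans (hRs i)
  · -- |V i l| ≤ (V i i + V l l)/2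
    have hsym : V l i = V i l := by
      have := hV.isHermitian
      calc V l i = Vᵀ i l := rfl
        _ = V i l := by rw [show Vᵀ = V from this]
    have hplus := hV.dotProduct_mulVec_nonneg (Pi.single i 1 + Pi.single l 1)
    have hminus := hV.dotProduct_mulVec_nonneg (Pi.single i 1 - Pi.single l 1)
    have eplus : (Pi.single i 1 + Pi.single l 1 : Fin p → ℝ) ⬝ᵥ
        V *ᵥ (Pi.single i 1 + Pi.single l 1) = V i i + V l l + 2 * V i l := by
      rw [mulVec_add, dotProduct_add, add_dotProduct, add_dotProduct,
        single_quad, single_quad, single_quad, single_quad, hsym]; ring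
    have eminus : (Pi.single i 1 - Pi.single l 1 : Fin p → ℝ) ⬝ᵥ
        V *ᵥ (Pi.single i 1 - Pi.single l 1) = V i i + V l l - 2 * V i l := by
      rw [mulVec_sub, dotProduct_sub, sub_dotProduct, sub_dotProduct,
        single_quad, single_quad, single_quad, single_quad, hsym]; ring
    rw [show (star (Pi.single i 1 + Pi.single l 1 : Fin p → ℝ))
      = Pi.single i 1 + Pi.single l 1 from rfl, eplus] at hplus
    rw [show (star (Pi.single i 1 - Pi.single l 1 : Fin p → ℝ))
      = Pi.single i 1 - Pi.single l 1 from rfl, eminus] at hminus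
    have habs : |V i l| ≤ (V i i + V l l) / 2 := by
      rw [abs_le]; constructor <;> linarith
    calc |V i l| ≤ (V i i + V l l) / 2 := habs
      _ ≤ (R i i + R l l) / 2 := by linarith [hdiag i, hdiag l]
      _ ≤ ∑ a, ∑ b, |R a b| := by linarith [hRs i, hRs l]

lemma smul_one_inv {c : ℝ} (hc : c ≠ 0) :
    (c • (1 : Matrix (Fin p) (Fin p) ℝ))⁻¹ = c⁻¹ • (1 : Matrix (Fin p) (Fin p) ℝ) := by
  apply Matrix.inv_eq_right_inv
  rw [Matrix.smul_mul, Matrix.mul_smul, one_mul, smul_smul, mul_inv_cancel₀ hc, one_smul]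

lemma smul_pd_inv {G : Matrix (Fin p) (Fin p) ℝ} (hG : G.PosDef) {c : ℝ} (hc : c ≠ 0) :
    (c • G)⁻¹ = c⁻¹ • G⁻¹ := by
  apply Matrix.inv_eq_right_inv
  rw [Matrix.smul_mul, Matrix.mul_smul, smul_smul, mul_inv_cancel₀ hc, one_smul,
    mul_inv_pd hG]

lemma one_pd : (1 : Matrix (Fin p) (Fin p) ℝ).PosDef := Matrix.PosDef.one

lemma smul_one_pd {c : ℝ} (hc : 0 < c) : (c • (1 : Matrix (Fin p) (Fin p) ℝ)).PosDef :=
  pd_smul one_pd hc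

/-- generalized Schur complement comparison -/
lemma schur_iff {X : Matrix (Fin p) (Fin p) ℝ} {U : Matrix (Fin q) (Fin q) ℝ}
    (K : Matrix (Fin p) (Fin q) ℝ) (hX : X.PosDef) (hU : U.PosDef)
    (hS : (Kᵀ * X⁻¹ * K).PosDef) :
    (X - K * U * Kᵀ).PosSemidef ↔ ((Kᵀ * X⁻¹ * K)⁻¹ - U).PosSemidef := by
  haveI : Invertible X := X.invertibleOfIsUnitDet (det_isUnit hX)
  haveI : Invertible (U⁻¹) := (U⁻¹).invertibleOfIsUnitDet (det_isUnit hU.inv)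
  have h1 : (fromBlocks X K Kᵀ U⁻¹).PosSemidef ↔ (U⁻¹ - Kᵀ * X⁻¹ * K).PosSemidef :=
    Matrix.PosDef.fromBlocks₁₁ (A := X) K U⁻¹ hX
  have h2 : (fromBlocks X K Kᵀ U⁻¹).PosSemidef ↔ (X - K * (U⁻¹)⁻¹ * Kᵀ).PosSemidef :=
    Matrix.PosDef.fromBlocks₂₂ (D := U⁻¹) X K hU.inv
  rw [Matrix.nonsing_inv_nonsing_inv U (det_isUnit hU)] at h2
  constructor
  · intro h
    have hd : (U⁻¹ - Kᵀ * X⁻¹ * K).PosSemidef := h1.mp (h2.mpr h)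
    have := inv_antitone hS hU.inv hd
    rwa [Matrix.nonsing_inv_nonsing_inv U (det_isUnit hU)] at this
  · intro h
    have h' := inv_antitone hU hS.inv h
    rw [Matrix.nonsing_inv_nonsing_inv _ (det_isUnit hS)] at h'
    exact h2.mp (h1.mpr h')

lemma mulVec_inj_of_rank {m k : ℕ} (K : Matrix (Fin m) (Fin k) ℝ) (hK : K.rank = k) :
    ∀ x : Fin k → ℝ, K *ᵥ x = 0 → x = 0 := by
  have h1 : Module.finrank ℝ (LinearMap.range K.mulVecLin)
      + Module.finrank ℝ (LinearMap.ker K.mulVecLin) = k := by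
    rw [LinearMap.finrank_range_add_finrank_ker]; simp
  have h2 : Module.finrank ℝ (LinearMap.range K.mulVecLin) = k := hK
  have h3 : Module.finrank ℝ (LinearMap.ker K.mulVecLin) = 0 := by omega
  have h4 : LinearMap.ker K.mulVecLin = ⊥ := Submodule.finrank_eq_zero.1 h3
  intro x hx
  have : x ∈ LinearMap.ker K.mulVecLin := by
    simp [LinearMap.mem_ker, Matrix.mulVecLin_apply, hx]
  rw [h4] at this
  simpa using this

lemma exists_admissible {m k : ℕ} {K : Matrix (Fin m) (Fin k) ℝ}
    {X : Matrix (Fin m) (Fin m) ℝ} (hX : X.PosSemidef)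
    (hR : LinearMap.range (Matrix.toLin' K) ≤ LinearMap.range (Matrix.toLin' X)) :
    ∃ U : Matrix (Fin k) (Fin k) ℝ, U.PosDef ∧ (X - K * U * Kᵀ).PosSemidef := by
  have hXt : Xᵀ = X := hX.1
  -- columns of K in range of X
  have hcol : ∀ j : Fin k, ∃ b : Fin m → ℝ, X *ᵥ b = fun i => K i j := by
    intro j
    have hmem : (fun i => K i j) ∈ LinearMap.range (Matrix.toLin' K) := by
      refine ⟨Pi.single j 1, ?_⟩
      rw [Matrix.toLin'_apply]
      simp [Matrix.mulVec_single_one]; rfl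
    obtain ⟨b, hb⟩ := hR hmem
    exact ⟨b, by rw [← Matrix.toLin'_apply]; exact hb⟩
  choose b hb using hcol
  set B : Matrix (Fin m) (Fin k) ℝ := Matrix.of fun i j => b j i with hBdef
  have hXB : X * B = K := by
    ext i j
    have := congrFun (hb j) i
    simpa [Matrix.mul_apply, Matrix.mulVec, dotProduct, hBdef] using this
  set C : Matrix (Fin m) (Fin m) ℝ := B * Bᵀ with hCdef
  set c1 : ℝ := ∑ i, ∑ j, |X i j| with hc1
  set c2 : ℝ := ∑ i, ∑ j, |C i j| with hc2
  have hc1nn : 0 ≤ c1 :=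
    Finset.sum_nonneg fun _ _ => Finset.sum_nonneg fun _ _ => abs_nonneg _
  have hc2nn : 0 ≤ c2 :=
    Finset.sum_nonneg fun _ _ => Finset.sum_nonneg fun _ _ => abs_nonneg _
  set ε : ℝ := (c1 * c2 + 1)⁻¹ with hε
  have hεpos : 0 < ε := by positivity
  have hKKt : K * Kᵀ = X * C * X := by
    rw [← hXB, Matrix.transpose_mul, hXt, hCdef]
    simp only [Matrix.mul_assoc]
  refine ⟨ε • (1 : Matrix (Fin k) (Fin k) ℝ), smul_one_pd hεpos, ?_⟩
  have hform : K * (ε • (1 : Matrix (Fin k) (Fin k) ℝ)) * Kᵀ = ε • (X * C * X) := by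
    rw [Matrix.mul_smul, Matrix.mul_one, Matrix.smul_mul, hKKt]
  have hconj : (K * (ε • (1 : Matrix (Fin k) (Fin k) ℝ)) * Kᵀ).PosSemidef := by
    have := conj_psd (psd_smul (Matrix.PosSemidef.one) hεpos.le) (Kᵀ)
    rwa [transpose_transpose] at this
  refine psd_def (hX.1.sub hconj.isHermitian) fun x => ?_
  obtain ⟨s, hsherm, hss⟩ : ∃ s : Matrix (Fin m) (Fin m) ℝ, sᵀ = s ∧ s * s = X := by
    open scoped MatrixOrder in
    exact ⟨CFC.sqrt X, (CFC.sqrt_nonneg X).posSemidef.1, CFC.sqrt_mul_sqrt_self X hX.nonneg⟩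
  have key : x ⬝ᵥ (K * (ε • (1 : Matrix (Fin k) (Fin k) ℝ)) * Kᵀ) *ᵥ x ≤ x ⬝ᵥ X *ᵥ x := by
    rw [hform]
    set y := X *ᵥ x with hy
    have e1 : x ⬝ᵥ (ε • (X * C * X)) *ᵥ x = ε * (y ⬝ᵥ C *ᵥ y) := by
      rw [smul_mulVec, dotProduct_smul, smul_eq_mul]
      congr 1
      rw [← mulVec_mulVec, ← mulVec_mulVec, dot_shift X x, hXt, hy]
    have e2 : y ⬝ᵥ C *ᵥ y ≤ c2 * (y ⬝ᵥ y) := quad_le_entSum C y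
    have e3 : y ⬝ᵥ y = x ⬝ᵥ (X * X) *ᵥ x := by
      rw [hy, ← mulVec_mulVec, dot_shift X x, hXt]
    set z := s *ᵥ x with hz
    have e4 : x ⬝ᵥ (X * X) *ᵥ x = z ⬝ᵥ X *ᵥ z := by
      have hXX : X * X = s * (X * s) := by rw [← hss]; noncomm_ring
      rw [hXX, ← mulVec_mulVec, dot_shift s x, hsherm, ← hz, mulVec_mulVec]
    have e5 : z ⬝ᵥ X *ᵥ z ≤ c1 * (z ⬝ᵥ z) := quad_le_entSum X z
    have e6 : z ⬝ᵥ z = x ⬝ᵥ X *ᵥ x := by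
      rw [hz, ← hss, ← mulVec_mulVec, dot_shift s x, hsherm]
    have hQ : 0 ≤ x ⬝ᵥ X *ᵥ x := hX.dotProduct_mulVec_nonneg x
    have hyC : 0 ≤ y ⬝ᵥ C *ᵥ y := by
      have : C.PosSemidef := by
        have := Matrix.posSemidef_self_mul_conjTranspose B
        simpa [hCdef] using this
      exact this.dotProduct_mulVec_nonneg y
    have hεle : ε * (c1 * c2) ≤ 1 := by
      rw [hε]
      rw [inv_mul_le_iff₀ (by positivity)]
      linarith
    calc x ⬝ᵥ (ε • (X * C * X)) *ᵥ x = ε * (y ⬝ᵥ C *ᵥ y) := e1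
      _ ≤ ε * (c2 * (c1 * (x ⬝ᵥ X *ᵥ x))) := by
          have h5 : z ⬝ᵥ X *ᵥ z ≤ c1 * (x ⬝ᵥ X *ᵥ x) := by rw [← e6]; exact e5
          have h4 : y ⬝ᵥ y ≤ c1 * (x ⬝ᵥ X *ᵥ x) := by rw [e3, e4]; exact h5
          have h2 : y ⬝ᵥ C *ᵥ y ≤ c2 * (c1 * (x ⬝ᵥ X *ᵥ x)) := by
            calc y ⬝ᵥ C *ᵥ y ≤ c2 * (y ⬝ᵥ y) := e2
              _ ≤ c2 * (c1 * (x ⬝ᵥ X *ᵥ x)) := by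
                  exact mul_le_mul_of_nonneg_left h4 hc2nn
          exact mul_le_mul_of_nonneg_left h2 hεpos.le
      _ ≤ x ⬝ᵥ X *ᵥ x := by nlinarith
  have : x ⬝ᵥ (X - K * (ε • (1 : Matrix (Fin k) (Fin k) ℝ)) * Kᵀ) *ᵥ x
      = x ⬝ᵥ X *ᵥ x - x ⬝ᵥ (K * (ε • (1 : Matrix (Fin k) (Fin k) ℝ)) * Kᵀ) *ᵥ x := by
    rw [sub_mulVec, dotProduct_sub]
  rw [this]
  linarith

lemma rangeIncl_of_dom {m k : ℕ} {K : Matrix (Fin m) (Fin k) ℝ}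
    {X : Matrix (Fin m) (Fin m) ℝ} {U : Matrix (Fin k) (Fin k) ℝ}
    (hX : X.PosSemidef) (hU : U.PosDef) (hdom : (X - K * U * Kᵀ).PosSemidef) :
    LinearMap.range (Matrix.toLin' K) ≤ LinearMap.range (Matrix.toLin' X) := by
  set Rf := LinearMap.range (Matrix.toLin' X) with hRf
  set Kf := LinearMap.ker (Matrix.toLin' X) with hKf
  have hinf : Rf ⊓ Kf = ⊥ := by
    rw [eq_bot_iff]
    rintro v ⟨⟨z, hz⟩, hv0⟩
    have hv0' : X *ᵥ v = 0 := by rw [← Matrix.toLin'_apply]; exact hv0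
    have hvXz : v = X *ᵥ z := by rw [← Matrix.toLin'_apply]; exact hz.symm
    have : v ⬝ᵥ v = 0 := by
      rw [hvXz, ← herm_dot_comm hX.1 z (X *ᵥ z), ← hvXz]
      rw [show X *ᵥ v = 0 from hv0', dotProduct_zero]
    simpa using dotProduct_self_eq_zero.1 this
  have htop : Rf ⊔ Kf = ⊤ := by
    apply Submodule.eq_top_of_finrank_eq
    have h1 := Submodule.finrank_sup_add_finrank_inf_eq Rf Kf
    rw [hinf] at h1
    have h2 : Module.finrank ℝ Rf + Module.finrank ℝ Kf = m := by
      rw [hRf, hKf, LinearMap.finrank_range_add_finrank_ker]; simp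
    have h3 : Module.finrank ℝ (⊥ : Submodule ℝ (Fin m → ℝ)) = 0 := by simp
    have : Module.finrank ℝ (Fin m → ℝ) = m := by simp
    omega
  rintro u ⟨y, rfl⟩
  have hu : Matrix.toLin' K y = K *ᵥ y := Matrix.toLin'_apply K y
  have humem : Matrix.toLin' K y ∈ Rf ⊔ Kf := htop ▸ Submodule.mem_top
  obtain ⟨r, hr, q, hq, hrq⟩ := Submodule.mem_sup.1 humem
  obtain ⟨z, hz⟩ := hr
  have hqker : X *ᵥ q = 0 := by rw [← Matrix.toLin'_apply]; exact hq
  -- Kᵀ *ᵥ q = 0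
  have hKq : Kᵀ *ᵥ q = 0 := by
    by_contra hne
    have hq1 : q ⬝ᵥ X *ᵥ q = 0 := by rw [hqker, dotProduct_zero]
    have hq2 : q ⬝ᵥ (X - K * U * Kᵀ) *ᵥ q = q ⬝ᵥ X *ᵥ q - q ⬝ᵥ (K * U * Kᵀ) *ᵥ q := by
      rw [sub_mulVec, dotProduct_sub]
    have hq3 : q ⬝ᵥ (K * U * Kᵀ) *ᵥ q = (Kᵀ *ᵥ q) ⬝ᵥ U *ᵥ (Kᵀ *ᵥ q) := by
      rw [← mulVec_mulVec, ← mulVec_mulVec, dot_shift K q]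
    have hpos : 0 < (Kᵀ *ᵥ q) ⬝ᵥ U *ᵥ (Kᵀ *ᵥ q) := hU.dotProduct_mulVec_pos hne
    have hnn := hdom.dotProduct_mulVec_nonneg q
    rw [show (star q : Fin m → ℝ) = q from rfl] at hnn
    rw [hq2, hq1, hq3] at hnn
    linarith
  have hqzero : q = 0 := by
    have h1 : q ⬝ᵥ Matrix.toLin' K y = 0 := by
      rw [hu, dot_shift K q, hKq, zero_dotProduct]
    have h2 : q ⬝ᵥ r = 0 := by
      rw [← hz, Matrix.toLin'_apply, herm_dot_comm hX.1 q z,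
        show X *ᵥ q = 0 from hqker, dotProduct_zero]
    have h3 : q ⬝ᵥ q = 0 := by
      have : q ⬝ᵥ (r + q) = q ⬝ᵥ r + q ⬝ᵥ q := dotProduct_add q r q
      rw [hrq] at this
      rw [← sub_eq_zero]
      rw [h1, h2] at this
      linarith [this]
    exact dotProduct_self_eq_zero.1 h3
  have : Matrix.toLin' K y = r := by rw [← hrq, hqzero, add_zero]
  rw [this]
  exact ⟨z, hz⟩


lemma tendsto_entries {a b : ℕ} {U : ℕ → Matrix (Fin a) (Fin b) ℝ}
    {L : Matrix (Fin a) (Fin b) ℝ} (h : Tendsto U atTop (𝓝 L)) (i : Fin a) (l : Fin b) :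
    Tendsto (fun j => U j i l) atTop (𝓝 (L i l)) := by
  have := tendsto_pi_nhds.1 h i
  exact tendsto_pi_nhds.1 this l

lemma tendsto_of_entries {a b : ℕ} {U : ℕ → Matrix (Fin a) (Fin b) ℝ}
    {L : Matrix (Fin a) (Fin b) ℝ}
    (h : ∀ i l, Tendsto (fun j => U j i l) atTop (𝓝 (L i l))) :
    Tendsto U atTop (𝓝 L) := by
  refine tendsto_pi_nhds.2 ?_
  intro i
  rw [tendsto_pi_nhds]
  exact h i

lemma psd_limit {a : ℕ} {U : ℕ → Matrix (Fin a) (Fin a) ℝ} {L : Matrix (Fin a) (Fin a) ℝ}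
    (hU : ∀ j, (U j).PosSemidef) (h : Tendsto U atTop (𝓝 L)) : L.PosSemidef := by
  refine psd_def ?_ fun x => ?_
  · unfold Matrix.IsHermitian
    ext i l
    have h1 := tendsto_entries h i l
    have h2 := tendsto_entries h l i
    have heq : ∀ j, U j i l = U j l i := by
      intro j
      have h' := (hU j).1
      calc U j i l = (U j)ᴴ i l := by rw [h']
        _ = U j l i := rfl
    have : Tendsto (fun j => U j i l) atTop (𝓝 (L l i)) := by
      simpa [heq] using h2
    have := tendsto_nhds_unique h1 this
    simpa [Matrix.conjTranspose_apply] using this.symm ▸ rfl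
  · have hq : Tendsto (fun j => x ⬝ᵥ (U j) *ᵥ x) atTop (𝓝 (x ⬝ᵥ L *ᵥ x)) := by
      have hc : Continuous fun M : Matrix (Fin a) (Fin a) ℝ => x ⬝ᵥ M *ᵥ x := by
        exact (continuous_const.dotProduct
          ((continuous_id.matrix_mulVec continuous_const)))
      exact (hc.tendsto L).comp h
    exact le_of_tendsto_of_tendsto tendsto_const_nhds hq
      (Filter.Eventually.of_forall fun j => (hU j).dotProduct_mulVec_nonneg x)

lemma psd_invertible_pd {a : ℕ} {V : Matrix (Fin a) (Fin a) ℝ} (hV : V.PosSemidef)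
    (hdet : V.det ≠ 0) : V.PosDef := by
  refine pd_def hV.1 fun x hx => ?_
  rcases lt_or_eq_of_le (hV.dotProduct_mulVec_nonneg x) with h | h
  · exact h
  · exfalso
    have h0 : V *ᵥ x = 0 := (hV.dotProduct_mulVec_zero_iff x).1 h.symm
    have : x = 0 := by
      have := congrArg (fun v => V⁻¹ *ᵥ v) h0
      simpa [mulVec_mulVec, Matrix.nonsing_inv_mul V (isUnit_iff_ne_zero.2 hdet),
        one_mulVec] using this
    exact hx this

lemma det_tendsto {a : ℕ} {U : ℕ → Matrix (Fin a) (Fin a) ℝ} {L : Matrix (Fin a) (Fin a) ℝ}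
    (h : Tendsto U atTop (𝓝 L)) : Tendsto (fun j => (U j).det) atTop (𝓝 L.det) :=
  ((Continuous.matrix_det continuous_id).tendsto L).comp h

lemma iInf_fin_le {a : ℕ} [NeZero a] (f : Fin a → ℝ) (i : Fin a) : (⨅ l, f l) ≤ f i :=
  ciInf_le (Set.Finite.bddBelow (Set.finite_range f)) i

lemma iInf_fin_pos {a : ℕ} [NeZero a] {f : Fin a → ℝ} (h : ∀ i, 0 < f i) :
    0 < ⨅ l, f l := by
  obtain ⟨i, hi⟩ := Finite.exists_min f
  have : (⨅ l, f l) = f i := le_antisymm (iInf_fin_le f i) (le_ciInf hi)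
  rw [this]; exact h i

lemma le_of_forall_small {d a c : ℝ} (h : ∀ t : ℝ, 0 < t → t < 1 → a ≤ c + t * d) :
    a ≤ c := by
  by_contra hlt
  push_neg at hlt
  rcases le_or_gt d 0 with hd | hd
  · have := h (1/2) (by norm_num) (by norm_num)
    nlinarith
  · set t := min (1/2) ((a - c) / (2 * d)) with hts
    have ht0 : 0 < t := lt_min (by norm_num) (div_pos (by linarith) (by linarith))
    have ht1 : t < 1 := lt_of_le_of_lt (min_le_left _ _) (by norm_num)
    have h2 := h t ht0 ht1
    have h3 : t * d ≤ ((a - c) / (2 * d)) * d :=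
      mul_le_mul_of_nonneg_right (min_le_right _ _) hd.le
    have h4 : ((a - c) / (2 * d)) * d = (a - c) / 2 := by
      field_simp
    nlinarith
variable {n : ℕ}

lemma sum_split (hn : 2 ≤ n) (w : Fin n → ℝ) :
    ∑ i, w i = (∑ i : Fin (n-1), w (Fin.castLE (Nat.sub_le n 1) i)) + w ⟨n-1, by omega⟩ := by
  have hd : n - 1 + 1 = n := by omega
  calc ∑ i, w i = ∑ i : Fin (n-1+1), w (finCongr hd i) :=
        (Fintype.sum_equiv (finCongr hd) _ _ fun i => rfl).symm
    _ = (∑ i : Fin (n-1), w (finCongr hd i.castSucc)) + w (finCongr hd (Fin.last (n-1))) :=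
        Fin.sum_univ_castSucc _
    _ = (∑ i : Fin (n-1), w (Fin.castLE (Nat.sub_le n 1) i)) + w ⟨n-1, by omega⟩ := by
        congr 1

lemma extendW_castLE (wt : Fin (n-1) → ℝ) (i : Fin (n-1)) :
    extendW n wt (Fin.castLE (Nat.sub_le n 1) i) = wt i := by
  unfold extendW
  have h : (↑(Fin.castLE (Nat.sub_le n 1) i) : ℕ) < n - 1 := i.isLt
  rw [dif_pos h]
  exact congrArg wt (Fin.ext rfl)

lemma extendW_last (hn : 2 ≤ n) (wt : Fin (n-1) → ℝ) :
    extendW n wt ⟨n-1, by omega⟩ = 1 - ∑ j, wt j := by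
  unfold extendW
  rw [dif_neg (lt_irrefl _)]

lemma sum_extendW (hn : 2 ≤ n) (wt : Fin (n-1) → ℝ) :
    ∑ i, extendW n wt i = 1 := by
  rw [sum_split hn (extendW n wt)]
  rw [extendW_last hn]
  have : ∀ i : Fin (n-1), extendW n wt (Fin.castLE (Nat.sub_le n 1) i) = wt i :=
    extendW_castLE wt
  rw [Finset.sum_congr rfl fun i _ => this i]
  ring

lemma extendW_pos (hn : 2 ≤ n) {wt : Fin (n-1) → ℝ} (hwt : wt ∈ Dset n) (i : Fin n) :
    0 < extendW n wt i := by
  unfold extendW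
  split
  · exact hwt.1 _
  · linarith [hwt.2]

lemma ext_coords (hn : 2 ≤ n) {w : Fin n → ℝ} (hsum : ∑ i, w i = 1) :
    extendW n (fun i : Fin (n-1) => w (Fin.castLE (Nat.sub_le n 1) i)) = w := by
  funext i
  unfold extendW
  split
  · next h => rfl
  · next h =>
      have hi : (i : ℕ) = n - 1 := by omega
      have hieq : i = ⟨n-1, by omega⟩ := Fin.ext hi
      rw [hieq]
      rw [sum_split hn w] at hsum
      linarith

lemma coords_mem_Dset (hn : 2 ≤ n) {w : Fin n → ℝ} (hpos : ∀ i, 0 < w i)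
    (hsum : ∑ i, w i = 1) :
    (fun i : Fin (n-1) => w (Fin.castLE (Nat.sub_le n 1) i)) ∈ Dset n := by
  constructor
  · intro i; exact hpos _
  · rw [sum_split hn w] at hsum
    have := hpos ⟨n-1, by omega⟩
    simp only
    linarith

variable {n : ℕ}

variable {m : ℕ}

lemma psd_def' {p : ℕ} {M : Matrix (Fin p) (Fin p) ℝ} (h1 : M.IsHermitian)
    (h2 : ∀ x : Fin p → ℝ, 0 ≤ x ⬝ᵥ M *ᵥ x) : M.PosSemidef :=
  .of_dotProduct_mulVec_nonneg h1 fun x => by simpa using h2 x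

lemma psd_smul' {p : ℕ} {M : Matrix (Fin p) (Fin p) ℝ} (hM : M.PosSemidef) {c : ℝ}
    (hc : 0 ≤ c) : (c • M).PosSemidef := by
  refine psd_def' ?_ fun x => ?_
  · unfold Matrix.IsHermitian
    rw [conjTranspose_smul, hM.1]; norm_num
  · rw [smul_mulVec, dotProduct_smul, smul_eq_mul]
    exact mul_nonneg hc (hM.dotProduct_mulVec_nonneg x)

lemma psd_sum' {p : ℕ} {ι : Type*} (s : Finset ι) (f : ι → Matrix (Fin p) (Fin p) ℝ)
    (h : ∀ i ∈ s, (f i).PosSemidef) : (∑ i ∈ s, f i).PosSemidef :=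
  Finset.sum_induction f _ (fun _ _ ha hb => ha.add hb) Matrix.PosSemidef.zero h

lemma Mmat_psd {A : Fin n → Matrix (Fin m) (Fin m) ℝ} (hA : ∀ i, (A i).PosSemidef)
    {w : Fin n → ℝ} (hw : ∀ i, 0 ≤ w i) : (Mmat A w).PosSemidef :=
  psd_sum' _ _ fun i _ => psd_smul' (hA i) (hw i)

lemma omega_coord_le_one {w : Fin n → ℝ} (hw : w ∈ Omega n) (i : Fin n) : w i ≤ 1 := by
  rw [← hw.2]
  exact Finset.single_le_sum (fun l _ => hw.1 l) (Finset.mem_univ i)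

/-- difference of moment matrices with dominating coefficients is psd -/
lemma Mmat_sub_psd {A : Fin n → Matrix (Fin m) (Fin m) ℝ} (hA : ∀ i, (A i).PosSemidef)
    {u v : Fin n → ℝ} (huv : ∀ i, v i ≤ u i) : (Mmat A u - Mmat A v).PosSemidef := by
  have : Mmat A u - Mmat A v = ∑ i, (u i - v i) • A i := by
    unfold Mmat
    rw [← Finset.sum_sub_distrib]
    exact Finset.sum_congr rfl fun i _ => (sub_smul _ _ _).symm
  rw [this]
  exact psd_sum' _ _ fun i _ => psd_smul' (hA i) (by linarith [huv i])

lemma Mmat_pd {A : Fin n → Matrix (Fin m) (Fin m) ℝ} (hA : ∀ i, (A i).PosSemidef)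
    {w0 : Fin n → ℝ} (hw0 : w0 ∈ Omega n) (h0 : (Mmat A w0).PosDef)
    {w : Fin n → ℝ} (hw : ∀ i, 0 < w i) : (Mmat A w).PosDef := by
  have hne : Nonempty (Fin n) := by
    by_contra hemp
    have : ∑ i, w0 i = 0 := by
      rw [Finset.sum_eq_zero]
      intro i _
      exact absurd ⟨i⟩ hemp
    rw [hw0.2] at this
    norm_num at this
  obtain ⟨i0⟩ := hne
  set δ : ℝ := Finset.univ.inf' ⟨i0, Finset.mem_univ i0⟩ w with hδ
  have hδpos : 0 < δ := by
    rw [hδ]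
    exact (Finset.lt_inf'_iff _).2 fun i _ => hw i
  have hδle : ∀ i, δ ≤ w i := fun i => Finset.inf'_le _ (Finset.mem_univ i)
  have hdom : ∀ i, δ * w0 i ≤ w i := by
    intro i
    calc δ * w0 i ≤ δ * 1 := by
          exact mul_le_mul_of_nonneg_left (omega_coord_le_one hw0 i) hδpos.le
      _ = δ := mul_one δ
      _ ≤ w i := hδle i
  have hsub : (Mmat A w - Mmat A (fun i => δ * w0 i)).PosSemidef :=
    Mmat_sub_psd hA hdom
  have hsm : Mmat A (fun i => δ * w0 i) = δ • Mmat A w0 := by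
    unfold Mmat
    rw [Finset.smul_sum]
    exact Finset.sum_congr rfl fun i _ => (smul_smul δ (w0 i) (A i)).symm
  have hδM : (Mmat A (fun i => δ * w0 i)).PosDef := by
    rw [hsm]
    refine pd_def ?_ fun x hx => ?_
    · unfold Matrix.IsHermitian
      rw [conjTranspose_smul, h0.1]; norm_num
    · rw [smul_mulVec, dotProduct_smul, smul_eq_mul]
      exact mul_pos hδpos (h0.dotProduct_mulVec_pos hx)
  have : Mmat A w = Mmat A (fun i => δ * w0 i) + (Mmat A w - Mmat A (fun i => δ * w0 i)) := by
    abel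
  rw [this]
  exact hδM.add_posSemidef hsub

lemma Mmat_affine (A : Fin n → Matrix (Fin m) (Fin m) ℝ) (a b : ℝ) (u v : Fin n → ℝ) :
    Mmat A (fun i => a * u i + b * v i) = a • Mmat A u + b • Mmat A v := by
  unfold Mmat
  rw [Finset.smul_sum, Finset.smul_sum, ← Finset.sum_add_distrib]
  refine Finset.sum_congr rfl fun i _ => ?_
  rw [add_smul, smul_smul, smul_smul]

lemma Mmat_continuous (A : Fin n → Matrix (Fin m) (Fin m) ℝ) :
    Continuous fun w : Fin n → ℝ => Mmat A w := by
  unfold Mmat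
  exact continuous_finset_sum _ fun i _ => (continuous_apply i).smul continuous_const

lemma rangeIncl_of_pd {k : ℕ} (K : Matrix (Fin m) (Fin k) ℝ)
    {X : Matrix (Fin m) (Fin m) ℝ} (hX : X.PosDef) : RangeIncl K X := by
  intro u _
  refine ⟨X⁻¹ *ᵥ u, ?_⟩
  rw [Matrix.toLin'_apply, mulVec_mulVec,
    Matrix.mul_nonsing_inv X (isUnit_iff_ne_zero.2 hX.det_pos.ne'), one_mulVec]


/-- canonical maximal admissible matrix -/
def Uof {n m k : ℕ} (A : Fin n → Matrix (Fin m) (Fin m) ℝ) (K : Matrix (Fin m) (Fin k) ℝ)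
    (w : Fin n → ℝ) : Matrix (Fin k) (Fin k) ℝ := (Kᵀ * (Mmat A w)⁻¹ * K)⁻¹

variable {k : ℕ}

lemma Sof_pd {A : Fin n → Matrix (Fin m) (Fin m) ℝ} {K : Matrix (Fin m) (Fin k) ℝ}
    (hKinj : ∀ x : Fin k → ℝ, K *ᵥ x = 0 → x = 0) {w : Fin n → ℝ}
    (hM : (Mmat A w).PosDef) : (Kᵀ * (Mmat A w)⁻¹ * K).PosDef :=
  conj_pd hM.inv hKinj

lemma Uof_pd {A : Fin n → Matrix (Fin m) (Fin m) ℝ} {K : Matrix (Fin m) (Fin k) ℝ}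
    (hKinj : ∀ x : Fin k → ℝ, K *ᵥ x = 0 → x = 0) {w : Fin n → ℝ}
    (hM : (Mmat A w).PosDef) : (Uof A K w).PosDef :=
  (Sof_pd hKinj hM).inv

lemma Uof_adm {A : Fin n → Matrix (Fin m) (Fin m) ℝ} {K : Matrix (Fin m) (Fin k) ℝ}
    (hKinj : ∀ x : Fin k → ℝ, K *ᵥ x = 0 → x = 0) {w : Fin n → ℝ}
    (hM : (Mmat A w).PosDef) : (Mmat A w - K * Uof A K w * Kᵀ).PosSemidef := by
  refine (schur_iff K hM (Uof_pd hKinj hM) (Sof_pd hKinj hM)).mpr ?_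
  rw [show (Kᵀ * (Mmat A w)⁻¹ * K)⁻¹ - Uof A K w = 0 from sub_self _]
  exact Matrix.PosSemidef.zero

lemma Uof_opt {Ψ : Matrix (Fin k) (Fin k) ℝ → ℝ} (hΨ : Assumption1 k Ψ)
    {A : Fin n → Matrix (Fin m) (Fin m) ℝ} {K : Matrix (Fin m) (Fin k) ℝ}
    (hKinj : ∀ x : Fin k → ℝ, K *ᵥ x = 0 → x = 0) {w : Fin n → ℝ}
    (hM : (Mmat A w).PosDef) {V : Matrix (Fin k) (Fin k) ℝ} (hV : V.PosDef)
    (hadm : (Mmat A w - K * V * Kᵀ).PosSemidef) : Ψ (Uof A K w) ≤ Ψ V := by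
  have h := (schur_iff K hM hV (Sof_pd hKinj hM)).mp hadm
  exact hΨ.decreasing _ _ (Uof_pd hKinj hM).isHermitian hV h

lemma fmu_eq {A : Fin n → Matrix (Fin m) (Fin m) ℝ} {K : Matrix (Fin m) (Fin k) ℝ}
    {Ψ : Matrix (Fin k) (Fin k) ℝ → ℝ} (μ : ℝ) (wt : Fin (n-1) → ℝ) :
    fmu A K Ψ μ wt = Ψ (Uof A K (extendW n wt)) - μ * (∑ i, Real.log (wt i))
      - μ * Real.log (1 - ∑ i, wt i) := rfl

lemma fmu_lower {A : Fin n → Matrix (Fin m) (Fin m) ℝ} {K : Matrix (Fin m) (Fin k) ℝ}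
    {Ψ : Matrix (Fin k) (Fin k) ℝ → ℝ} {μ : ℝ} (hμ : 0 < μ) {wt : Fin (n-1) → ℝ}
    (hwt : wt ∈ Dset n) : Ψ (Uof A K (extendW n wt)) ≤ fmu A K Ψ μ wt := by
  rw [fmu_eq]
  have h1 : ∀ i, Real.log (wt i) ≤ 0 := by
    intro i
    apply Real.log_nonpos (hwt.1 i).le
    calc wt i ≤ ∑ l, wt l :=
          Finset.single_le_sum (fun l _ => (hwt.1 l).le) (Finset.mem_univ i)
      _ ≤ 1 := hwt.2.le
  have h2 : Real.log (1 - ∑ i, wt i) ≤ 0 := by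
    apply Real.log_nonpos (by linarith [hwt.2])
    have : 0 ≤ ∑ i, wt i := Finset.sum_nonneg fun i _ => (hwt.1 i).le
    linarith
  have h3 : μ * (∑ i, Real.log (wt i)) ≤ 0 := by
    have hs : (∑ i, Real.log (wt i)) ≤ 0 := Finset.sum_nonpos fun i _ => h1 i
    nlinarith
  have h4 : μ * Real.log (1 - ∑ i, wt i) ≤ 0 := by nlinarith
  linarith

end CPL

open CPL

/-- Any limit of central-path points `w(μ_j, v_j)` with `μ_j → 0`, `v_j → 0` is an optimal
solution of the design problem. -/
theorem central_path_limit_optimal (n m k : ℕ) (hn : 2 ≤ n) (hm : 1 ≤ m) (hk : 1 ≤ k) (hkm : k ≤ m)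
    (A : Fin n → Matrix (Fin m) (Fin m) ℝ) (hA : ∀ i, (A i).PosSemidef)
    (hex : ∃ w ∈ Omega n, (Mmat A w).PosDef)
    (K : Matrix (Fin m) (Fin k) ℝ) (hK : K.rank = k)
    (Ψ : Matrix (Fin k) (Fin k) ℝ → ℝ)
    (hΨ : Assumption1 k Ψ)
    (wfun : ℝ → (Fin (n - 1) → ℝ) → Fin (n - 1) → ℝ)
    (hwfun : ∀ μ : ℝ, 0 < μ → ∀ v : Fin (n - 1) → ℝ, wfun μ v ∈ Dset n ∧
      ∀ wt' ∈ Dset n, fmu A K Ψ μ (wfun μ v) - ∑ i, v i * wfun μ v i ≤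
        fmu A K Ψ μ wt' - ∑ i, v i * wt' i)
    (μs : ℕ → ℝ) (hμpos : ∀ j, 0 < μs j) (hμ0 : Tendsto μs atTop (𝓝 0))
    (vs : ℕ → Fin (n - 1) → ℝ) (hv0 : Tendsto vs atTop (𝓝 0))
    (wstar : Fin n → ℝ)
    (hconv : Tendsto (fun j => extendW n (wfun (μs j) (vs j))) atTop (𝓝 wstar)) :
    wstar ∈ Omega n ∧ RangeIncl K (Mmat A wstar) ∧
      PhiHat K Ψ (Mmat A wstar) = fstar A K Ψ := by
  classical
  obtain ⟨w0, hw0Ω, hw0PD⟩ := hex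
  obtain ⟨cΨ, hcΨ⟩ := hΨ.bddBelow
  have hKinj : ∀ x : Fin k → ℝ, K *ᵥ x = 0 → x = 0 := CPL.mulVec_inj_of_rank K hK
  haveI : NeZero k := ⟨by omega⟩
  -- the uniform design
  have hnR : (0:ℝ) < (n:ℝ) := by
    have : 0 < n := by omega
    exact_mod_cast this
  set wc : Fin n → ℝ := fun _ => (n : ℝ)⁻¹ with hwc
  have hwc_pos : ∀ i, 0 < wc i := fun i => by rw [hwc]; positivity
  have hwc_sum : ∑ i, wc i = 1 := by
    rw [hwc]
    rw [Finset.sum_const, Finset.card_univ, Fintype.card_fin]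
    rw [nsmul_eq_mul]; exact mul_inv_cancel₀ hnR.ne'
  have hwcΩ : wc ∈ Omega n := ⟨fun i => (hwc_pos i).le, hwc_sum⟩
  have hMc_pd : (Mmat A wc).PosDef := CPL.Mmat_pd hA hw0Ω hw0PD hwc_pos
  -- sequences
  set wtj : ℕ → Fin (n-1) → ℝ := fun j => wfun (μs j) (vs j) with hwtj
  have hDj : ∀ j, wtj j ∈ Dset n := fun j => (hwfun _ (hμpos j) _).1
  have hconv' : Tendsto (fun j => extendW n (wtj j)) atTop (𝓝 wstar) := hconv
  have hwj_pos : ∀ j i, 0 < extendW n (wtj j) i := fun j i => CPL.extendW_pos hn (hDj j) i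
  have hwj_sum : ∀ j, ∑ i, extendW n (wtj j) i = 1 := fun j => CPL.sum_extendW hn _
  have hMj_pd : ∀ j, (Mmat A (extendW n (wtj j))).PosDef :=
    fun j => CPL.Mmat_pd hA hw0Ω hw0PD (hwj_pos j)
  have hUj_pd : ∀ j, (Uof A K (extendW n (wtj j))).PosDef :=
    fun j => CPL.Uof_pd hKinj (hMj_pd j)
  -- Step A : minimizer inequality
  have stepA : ∀ wt' ∈ Dset n, ∀ j, Ψ (Uof A K (extendW n (wtj j))) ≤
      fmu A K Ψ (μs j) wt' + ∑ i, vs j i * (wtj j i - wt' i) := by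
    intro wt' hwt' j
    have hmin : fmu A K Ψ (μs j) (wtj j) - ∑ i, vs j i * wtj j i
        ≤ fmu A K Ψ (μs j) wt' - ∑ i, vs j i * wt' i :=
      (hwfun (μs j) (hμpos j) (vs j)).2 wt' hwt'
    have hbar := CPL.fmu_lower (A := A) (K := K) (Ψ := Ψ) (hμpos j) (hDj j)
    have hsplit : ∑ i, vs j i * (wtj j i - wt' i)
        = (∑ i, vs j i * wtj j i) - ∑ i, vs j i * wt' i := by
      rw [← Finset.sum_sub_distrib]
      exact Finset.sum_congr rfl fun i _ => mul_sub _ _ _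
    rw [hsplit]
    linarith [hmin, hbar]
  -- limit of the right hand side of Step A
  have limitA : ∀ wt' ∈ Dset n,
      Tendsto (fun j => fmu A K Ψ (μs j) wt' + ∑ i, vs j i * (wtj j i - wt' i)) atTop
        (𝓝 (Ψ (Uof A K (extendW n wt')))) := by
    intro wt' hwt'
    have h1 : Tendsto (fun j => fmu A K Ψ (μs j) wt') atTop
        (𝓝 (Ψ (Uof A K (extendW n wt')))) := by
      have := (((tendsto_const_nhds :
          Tendsto (fun _ : ℕ => Ψ (Uof A K (extendW n wt'))) atTop (𝓝 _))).sub
        (hμ0.mul_const (∑ i, Real.log (wt' i)))).sub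
        (hμ0.mul_const (Real.log (1 - ∑ i, wt' i)))
      simp only [zero_mul, sub_zero] at this
      simpa only [CPL.fmu_eq] using this
    have h2 : Tendsto (fun j => ∑ i, vs j i * (wtj j i - wt' i)) atTop (𝓝 0) := by
      have hterm : ∀ i : Fin (n-1), Tendsto (fun j => vs j i * (wtj j i - wt' i)) atTop
          (𝓝 (0 * (wstar (Fin.castLE (Nat.sub_le n 1) i) - wt' i))) := by
        intro i
        have hvi : Tendsto (fun j => vs j i) atTop (𝓝 0) := by
          have := tendsto_pi_nhds.1 hv0 i
          simpa using this
        have hwi : Tendsto (fun j => wtj j i) atTop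
            (𝓝 (wstar (Fin.castLE (Nat.sub_le n 1) i))) := by
          have h := tendsto_pi_nhds.1 hconv' (Fin.castLE (Nat.sub_le n 1) i)
          have heq : (fun j => extendW n (wtj j) (Fin.castLE (Nat.sub_le n 1) i))
              = fun j => wtj j i := funext fun j => CPL.extendW_castLE (wtj j) i
          rwa [heq] at h
        exact hvi.mul (hwi.sub tendsto_const_nhds)
      have := tendsto_finset_sum (Finset.univ : Finset (Fin (n-1))) fun i _ => hterm i
      simpa using this
    simpa using h1.add h2
  -- Step B : uniform entrywise bound on U j
  have hTpsd : (Mmat A (fun _ => (1:ℝ))).PosSemidef := CPL.Mmat_psd hA fun i => one_pos.le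
  set T : Matrix (Fin m) (Fin m) ℝ := Mmat A (fun _ => (1:ℝ)) with hT
  set c0 : ℝ := (∑ i, ∑ l, |T i l|) + 1 with hc0
  have hentnn : (0:ℝ) ≤ ∑ i, ∑ l, |T i l| :=
    Finset.sum_nonneg fun _ _ => Finset.sum_nonneg fun _ _ => abs_nonneg _
  have hc0pos : 0 < c0 := by rw [hc0]; linarith
  set G : Matrix (Fin k) (Fin k) ℝ := Kᵀ * K with hG
  have hG_pd : G.PosDef := by
    have := CPL.conj_pd (Matrix.PosDef.one) hKinj
    rwa [Matrix.mul_one, ← hG] at this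
  have hUbnd : ∀ j, ((c0 • G⁻¹) - Uof A K (extendW n (wtj j))).PosSemidef := by
    intro j
    have hMle : ((c0 • (1 : Matrix (Fin m) (Fin m) ℝ)) - Mmat A (extendW n (wtj j))).PosSemidef := by
      have hA1 : ((∑ i, ∑ l, |T i l|) • (1 : Matrix (Fin m) (Fin m) ℝ) - T).PosSemidef :=
        CPL.ent_smul_one_sub_psd hTpsd.1
      have hA2 : (T - Mmat A (extendW n (wtj j))).PosSemidef := by
        rw [hT]
        refine CPL.Mmat_sub_psd hA fun i => ?_
        have : extendW n (wtj j) i ≤ 1 :=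
          CPL.omega_coord_le_one ⟨fun l => (hwj_pos j l).le, hwj_sum j⟩ i
        exact this
      have hsum := (hA1.add hA2).add Matrix.PosSemidef.one
      have heq : ((∑ i, ∑ l, |T i l|) • (1 : Matrix (Fin m) (Fin m) ℝ) - T)
          + (T - Mmat A (extendW n (wtj j))) + 1
          = (c0 • (1 : Matrix (Fin m) (Fin m) ℝ)) - Mmat A (extendW n (wtj j)) := by
        rw [hc0, add_smul, one_smul]
        abel
      rwa [heq] at hsum
    have h1 := CPL.inv_antitone (hMj_pd j) (CPL.smul_one_pd hc0pos) hMle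
    rw [CPL.smul_one_inv hc0pos.ne'] at h1
    have h2 := CPL.conj_psd h1 K
    have h3 : Kᵀ * ((Mmat A (extendW n (wtj j)))⁻¹ - c0⁻¹ • (1 : Matrix (Fin m) (Fin m) ℝ)) * K
        = (Kᵀ * (Mmat A (extendW n (wtj j)))⁻¹ * K) - c0⁻¹ • G := by
      rw [Matrix.mul_sub, Matrix.sub_mul]
      congr 1
      rw [Matrix.mul_smul, Matrix.mul_one, Matrix.smul_mul, hG]
    rw [h3] at h2
    have h5 := CPL.inv_antitone (CPL.pd_smul hG_pd (inv_pos.2 hc0pos))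
      (CPL.Sof_pd hKinj (hMj_pd j)) h2
    rwa [CPL.smul_pd_inv hG_pd (inv_ne_zero hc0pos.ne'), inv_inv] at h5
  set CU : ℝ := ∑ a, ∑ b, |(c0 • G⁻¹) a b| with hCU
  have hCUnn : 0 ≤ CU := Finset.sum_nonneg fun _ _ => Finset.sum_nonneg fun _ _ => abs_nonneg _
  have hUb : ∀ j i l, |Uof A K (extendW n (wtj j)) i l| ≤ CU :=
    fun j i l => CPL.entry_bound (hUj_pd j).posSemidef (hUbnd j) i l
  -- Step C : subsequence extraction
  have hball : ∀ j, Uof A K (extendW n (wtj j)) ∈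
      Metric.closedBall (0 : Matrix (Fin k) (Fin k) ℝ) CU := by
    intro j
    rw [Metric.mem_closedBall, dist_zero_right, Matrix.norm_le_iff hCUnn]
    intro i l
    rw [Real.norm_eq_abs]
    exact hUb j i l
  obtain ⟨Ustar, -, φ, hφ, hUconv⟩ :=
    tendsto_subseq_of_bounded Metric.isBounded_closedBall hball
  have hφat : Tendsto φ atTop atTop := hφ.tendsto_atTop
  have hUstar_psd : Ustar.PosSemidef :=
    CPL.psd_limit (fun j => (hUj_pd (φ j)).posSemidef) hUconv
  have hMφ : Tendsto (fun j => Mmat A (extendW n (wtj (φ j)))) atTop (𝓝 (Mmat A wstar)) :=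
    ((CPL.Mmat_continuous A).tendsto wstar).comp (hconv'.comp hφat)
  have hdom_star : (Mmat A wstar - K * Ustar * Kᵀ).PosSemidef := by
    refine CPL.psd_limit (fun j => CPL.Uof_adm hKinj (hMj_pd (φ j))) ?_
    refine hMφ.sub ?_
    exact (((continuous_const.matrix_mul continuous_id).matrix_mul
      continuous_const).tendsto Ustar).comp hUconv
  -- uniform design coordinates
  set wtc : Fin (n-1) → ℝ := fun i => wc (Fin.castLE (Nat.sub_le n 1) i) with hwtc
  have hwtcD : wtc ∈ Dset n := CPL.coords_mem_Dset hn hwc_pos hwc_sum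
  have hext_wc : extendW n wtc = wc := CPL.ext_coords hn hwc_sum
  have hUc_pd : (Uof A K wc).PosDef := CPL.Uof_pd hKinj hMc_pd
  have hUc_adm : (Mmat A wc - K * Uof A K wc * Kᵀ).PosSemidef := CPL.Uof_adm hKinj hMc_pd
  have limc : Tendsto (fun j => fmu A K Ψ (μs j) wtc + ∑ i, vs j i * (wtj j i - wtc i))
      atTop (𝓝 (Ψ (Uof A K wc))) := by
    have := limitA wtc hwtcD
    rwa [hext_wc] at this
  -- Ustar is positive definite
  have hUstar_pd : Ustar.PosDef := by
    by_contra hnpd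
    have hdet0 : Ustar.det = 0 := by
      by_contra hd
      exact hnpd (CPL.psd_invertible_pd hUstar_psd hd)
    have hdetconv : Tendsto (fun j => (Uof A K (extendW n (wtj (φ j)))).det) atTop (𝓝 0) := by
      have := CPL.det_tendsto hUconv
      rwa [hdet0] at this
    have hlam_pos : ∀ j, 0 < ⨅ i, (hUj_pd (φ j)).isHermitian.eigenvalues i :=
      fun j => CPL.iInf_fin_pos fun i => (hUj_pd (φ j)).eigenvalues_pos i
    have hlam_pow : ∀ j, (⨅ i, (hUj_pd (φ j)).isHermitian.eigenvalues i) ^ k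
        ≤ (Uof A K (extendW n (wtj (φ j)))).det := by
      intro j
      have hdet : (Uof A K (extendW n (wtj (φ j)))).det
          = ∏ i, (hUj_pd (φ j)).isHermitian.eigenvalues i := by
        have := (hUj_pd (φ j)).isHermitian.det_eq_prod_eigenvalues
        simpa using this
      rw [hdet]
      calc (⨅ i, (hUj_pd (φ j)).isHermitian.eigenvalues i) ^ k
          = ∏ _i : Fin k, (⨅ i, (hUj_pd (φ j)).isHermitian.eigenvalues i) := by
            rw [Finset.prod_const, Finset.card_univ, Fintype.card_fin]
        _ ≤ ∏ i, (hUj_pd (φ j)).isHermitian.eigenvalues i :=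
            Finset.prod_le_prod (fun i _ => (hlam_pos j).le)
              (fun i _ => CPL.iInf_fin_le _ i)
    have hlam0 : Tendsto (fun j => ⨅ i, (hUj_pd (φ j)).isHermitian.eigenvalues i)
        atTop (𝓝 0) := by
      rw [Metric.tendsto_atTop]
      intro ε hε
      have hε' : 0 < min ε 1 := lt_min hε one_pos
      obtain ⟨N, hN⟩ := (Metric.tendsto_atTop.1 hdetconv) ((min ε 1) ^ k) (pow_pos hε' k)
      refine ⟨N, fun j hj => ?_⟩
      have h1 := hN j hj
      rw [Real.dist_eq, sub_zero] at h1 ⊢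
      have h2 : (Uof A K (extendW n (wtj (φ j)))).det < (min ε 1) ^ k :=
        lt_of_le_of_lt (le_abs_self _) h1
      have h3 : (⨅ i, (hUj_pd (φ j)).isHermitian.eigenvalues i) ^ k < (min ε 1) ^ k :=
        lt_of_le_of_lt (hlam_pow j) h2
      have h4 := lt_of_pow_lt_pow_left₀ k hε'.le h3
      rw [abs_of_pos (hlam_pos j)]
      exact h4.trans_le (min_le_left _ _)
    have hblow := hΨ.blowup (fun j => Uof A K (extendW n (wtj (φ j))))
      (fun j => hUj_pd (φ j)) ⟨CU, fun j i l => hUb (φ j) i l⟩ hlam0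
    have hub2 : ∀ᶠ j in atTop, fmu A K Ψ (μs (φ j)) wtc
        + ∑ i, vs (φ j) i * (wtj (φ j) i - wtc i) < Ψ (Uof A K wc) + 1 :=
      (limc.comp hφat).eventually_lt_const (by linarith)
    have hblow2 : ∀ᶠ j in atTop,
        Ψ (Uof A K wc) + 1 ≤ Ψ (Uof A K (extendW n (wtj (φ j)))) :=
      hblow.eventually_ge_atTop _
    obtain ⟨j, hj1, hj2⟩ := (hub2.and hblow2).exists
    have := stepA wtc hwtcD (φ j)
    linarith
  -- continuity of Ψ along the subsequence
  have hΨconv : Tendsto (fun j => Ψ (Uof A K (extendW n (wtj (φ j))))) atTop (𝓝 (Ψ Ustar)) := by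
    have hcw : ContinuousWithinAt Ψ {U : Matrix (Fin k) (Fin k) ℝ | U.PosDef} Ustar :=
      hΨ.smooth.continuousOn Ustar hUstar_pd
    refine hcw.tendsto.comp ?_
    rw [tendsto_nhdsWithin_iff]
    exact ⟨hUconv, Filter.Eventually.of_forall fun j => hUj_pd (φ j)⟩
  -- key inequality
  have hkey : ∀ wt' ∈ Dset n, Ψ Ustar ≤ Ψ (Uof A K (extendW n wt')) := by
    intro wt' hwt'
    exact le_of_tendsto_of_tendsto' hΨconv ((limitA wt' hwt').comp hφat)
      fun j => stepA wt' hwt' (φ j)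
  -- wstar is in the simplex
  have hwstarΩ : wstar ∈ Omega n := by
    constructor
    · intro i
      have hcoord := tendsto_pi_nhds.1 hconv' i
      exact ge_of_tendsto hcoord (Filter.Eventually.of_forall fun j => (hwj_pos j i).le)
    · have hsum : Tendsto (fun j => ∑ i, extendW n (wtj j) i) atTop (𝓝 (∑ i, wstar i)) :=
        tendsto_finset_sum _ fun i _ => tendsto_pi_nhds.1 hconv' i
      have hone : Tendsto (fun _ : ℕ => (1:ℝ)) atTop (𝓝 (∑ i, wstar i)) := by
        have heq : (fun j => ∑ i, extendW n (wtj j) i) = fun _ : ℕ => (1:ℝ) :=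
          funext fun j => hwj_sum j
        rwa [heq] at hsum
      exact (tendsto_nhds_unique hone tendsto_const_nhds)
  have hMstar_psd : (Mmat A wstar).PosSemidef := CPL.Mmat_psd hA hwstarΩ.1
  have hRI : RangeIncl K (Mmat A wstar) :=
    CPL.rangeIncl_of_dom hMstar_psd hUstar_pd hdom_star
  -- Step D
  have stepD : PhiHat K Ψ (Mmat A wstar) ≤ Ψ Ustar := by
    unfold PhiHat
    apply csInf_le
    · refine ⟨cΨ, ?_⟩
      rintro y ⟨U, hU, -, rfl⟩
      exact hcΨ U hU
    · exact ⟨Ustar, hUstar_pd, hdom_star, rfl⟩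
  -- Step E
  have stepE : Ψ Ustar ≤ fstar A K Ψ := by
    unfold fstar
    refine le_csInf ⟨_, wc, hwcΩ, CPL.rangeIncl_of_pd K hMc_pd, rfl⟩ ?_
    rintro y ⟨w', hw'Ω, hw'R, rfl⟩
    have hM'psd : (Mmat A w').PosSemidef := CPL.Mmat_psd hA hw'Ω.1
    obtain ⟨U0, hU0pd, hU0adm⟩ := CPL.exists_admissible hM'psd hw'R
    unfold PhiHat
    refine le_csInf ⟨Ψ U0, U0, hU0pd, hU0adm, rfl⟩ ?_
    rintro y ⟨U', hU'pd, hU'adm, rfl⟩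
    refine CPL.le_of_forall_small (d := Ψ (Uof A K wc) - Ψ U') fun t ht0 ht1 => ?_
    set wt : Fin n → ℝ := fun i => (1 - t) * w' i + t * wc i with hwtdef
    have hwt_pos : ∀ i, 0 < wt i := fun i =>
      add_pos_of_nonneg_of_pos (mul_nonneg (by linarith) (hw'Ω.1 i))
        (mul_pos ht0 (hwc_pos i))
    have hwt_sum : ∑ i, wt i = 1 := by
      rw [hwtdef]
      rw [Finset.sum_add_distrib, ← Finset.mul_sum, ← Finset.mul_sum, hw'Ω.2, hwc_sum]
      ring
    have hMt_pd : (Mmat A wt).PosDef := CPL.Mmat_pd hA hw0Ω hw0PD hwt_pos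
    have hcoords := CPL.coords_mem_Dset hn hwt_pos hwt_sum
    have hextwt : extendW n (fun i => wt (Fin.castLE (Nat.sub_le n 1) i)) = wt :=
      CPL.ext_coords hn hwt_sum
    have h1 : Ψ Ustar ≤ Ψ (Uof A K wt) := by
      have := hkey _ hcoords
      rwa [hextwt] at this
    set V : Matrix (Fin k) (Fin k) ℝ := (1 - t) • U' + t • Uof A K wc with hVdef
    have hVpd : V.PosDef :=
      (CPL.pd_smul hU'pd (by linarith)).add (CPL.pd_smul hUc_pd ht0)
    have hVadm : (Mmat A wt - K * V * Kᵀ).PosSemidef := by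
      have hMt : Mmat A wt = (1-t) • Mmat A w' + t • Mmat A wc :=
        CPL.Mmat_affine A (1-t) t w' wc
      have hKV : K * V * Kᵀ = (1-t) • (K * U' * Kᵀ) + t • (K * Uof A K wc * Kᵀ) := by
        rw [hVdef, Matrix.mul_add, Matrix.add_mul, Matrix.mul_smul, Matrix.mul_smul,
          Matrix.smul_mul, Matrix.smul_mul]
      have heq : Mmat A wt - K * V * Kᵀ
          = (1-t) • (Mmat A w' - K * U' * Kᵀ) + t • (Mmat A wc - K * Uof A K wc * Kᵀ) := by
        rw [hMt, hKV, smul_sub, smul_sub]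
        abel
      rw [heq]
      exact (CPL.psd_smul hU'adm (by linarith)).add (CPL.psd_smul hUc_adm ht0.le)
    have h2 : Ψ (Uof A K wt) ≤ Ψ V := CPL.Uof_opt hΨ hKinj hMt_pd hVpd hVadm
    have h3 : Ψ V ≤ (1-t) * Ψ U' + t * Ψ (Uof A K wc) := by
      have hc := hΨ.convex U' (Uof A K wc) hU'pd hUc_pd (1-t) (by linarith) (by linarith)
      have harg : (1-t) • U' + (1 - (1-t)) • Uof A K wc = V := by
        rw [hVdef, show (1 - (1-t)) = t by ring]
      rw [harg] at hc
      calc Ψ V ≤ (1-t) * Ψ U' + (1 - (1-t)) * Ψ (Uof A K wc) := hc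
        _ = (1-t) * Ψ U' + t * Ψ (Uof A K wc) := by ring
    calc Ψ Ustar ≤ (1-t) * Ψ U' + t * Ψ (Uof A K wc) := by linarith
      _ = Ψ U' + t * (Ψ (Uof A K wc) - Ψ U') := by ring
  -- Step F
  have stepF : fstar A K Ψ ≤ PhiHat K Ψ (Mmat A wstar) := by
    unfold fstar
    apply csInf_le
    · refine ⟨cΨ, ?_⟩
      rintro y ⟨w'', hw''Ω, hw''R, rfl⟩
      obtain ⟨U0, hU0pd, hU0adm⟩ :=
        CPL.exists_admissible (CPL.Mmat_psd hA hw''Ω.1) hw''R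
      unfold PhiHat
      refine le_csInf ⟨Ψ U0, U0, hU0pd, hU0adm, rfl⟩ ?_
      rintro y ⟨U, hU, -, rfl⟩
      exact hcΨ U hU
    · exact ⟨wstar, hwstarΩ, hRI, rfl⟩
  exact ⟨hwstarΩ, hRI, le_antisymm (stepD.trans stepE) stepF⟩
end
end
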